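/- arXiv:0906.2795 — 4 statements merged into one kernel-verified Lean document; each statement's English description precedes it below -/
import Mathlib

section
/- There exists a bijection φ between the set of cyclic permutations of {1,...,n+1} (permutations consisting of a single (n+1)-cycle) and the set of all permutations of {1,...,n} such that for every cyclic permutation π of {1,...,n+1}, the descent set of the word π(1)π(2)...π(n) equals the descent set of φ(π). -/
def descSeq {n : ℕ} (f : Fin n → ℕ) : Finset ℕ :=
  (Finset.range (n - 1)).filter
    (fun i => ∃ h : i + 1 < n, f ⟨i + 1, h⟩ < f ⟨i, Nat.lt_of_succ_lt h⟩)

def descSet {n : ℕ} (σ : Equiv.Perm (Fin n)) : Finset ℕ :=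
  descSeq (fun i => (σ i : ℕ))

def IsCyclic' {n : ℕ} (π : Equiv.Perm (Fin n)) : Prop :=
  ∀ x y : Fin n, ∃ k : ℕ, (π ^ k) x = y

def compParts (n : ℕ) (I : Finset ℕ) : Multiset ℕ :=
  ↑(List.zipWith (· - ·) ((I.sort (· ≤ ·)).map (· + 1) ++ [n])
      (0 :: (I.sort (· ≤ ·)).map (· + 1)))

def fullCycleType {n : ℕ} (π : Equiv.Perm (Fin n)) : Multiset ℕ :=
  π.cycleType + Multiset.replicate (n - π.support.card) 1

def InT0 (n : ℕ) (τ : Fin n → ℕ) : Prop :=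
  ∃ (π : Equiv.Perm (Fin n)) (k : Fin n), IsCyclic' π ∧
    τ = Function.update (fun i => ((π i : ℕ) + 1)) k 0

def InU (n : ℕ) (τ : Fin n → ℕ) : Prop :=
  ∃ (π : Equiv.Perm (Fin n)) (k : Fin n), IsCyclic' π ∧
    τ = Function.update (fun i => ((π i : ℕ) + 1)) k (n + 1)

def extPerm {n : ℕ} (π : Equiv.Perm (Fin n)) : Equiv.Perm (Fin (n + 1)) :=
  (finSuccEquivLast (n := n)).symm.permCongr π.optionCongr

def extCycle {n : ℕ} (π : Equiv.Perm (Fin n)) (k : Fin n) : Equiv.Perm (Fin (n + 1)) :=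
  extPerm π * Equiv.swap (Fin.castSucc k) (Fin.last n)

namespace Stmt0Proof
open Finset Equiv Function

theorem Equiv.Perm.apply_inv_self {α : Type*} (f : Equiv.Perm α) (x : α) : f (f⁻¹ x) = x :=
  f.apply_symm_apply x

theorem Equiv.Perm.inv_apply_self {α : Type*} (f : Equiv.Perm α) (x : α) : f⁻¹ (f x) = x :=
  f.symm_apply_apply x


noncomputable instance myLex {N : ℕ} : LinearOrder (Lex (Fin N → ℕ)) :=
  letI : WellFoundedLT (Fin N) := inferInstance
  Pi.Lex.linearOrder

lemma toLex_lt_iff {N : ℕ} {f g : Fin N → ℕ} :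
    toLex f < toLex g ↔ ∃ i, (∀ j, j < i → f j = g j) ∧ f i < g i := Iff.rfl

lemma mem_descSet {m : ℕ} (σ : Equiv.Perm (Fin m)) (i : ℕ) :
    i ∈ descSet σ ↔ ∃ h : i + 1 < m, (σ ⟨i+1, h⟩ : ℕ) < σ ⟨i, Nat.lt_of_succ_lt h⟩ := by
  simp only [descSet, descSeq, Finset.mem_filter, Finset.mem_range]
  constructor
  · rintro ⟨-, h⟩; exact h
  · rintro ⟨h, hlt⟩; exact ⟨by omega, h, hlt⟩

/-! ### block function -/

def blk (S : Finset ℕ) (i : ℕ) : ℕ := (S ∩ Finset.range i).card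

lemma blk_mono (S : Finset ℕ) : Monotone (blk S) := fun a b h =>
  Finset.card_le_card (Finset.inter_subset_inter (Finset.Subset.refl S) (Finset.range_subset_range.2 h))

lemma blk_le (S : Finset ℕ) (i : ℕ) : blk S i ≤ i :=
  le_trans (Finset.card_le_card Finset.inter_subset_right) (le_of_eq (Finset.card_range i))

lemma blk_succ (S : Finset ℕ) (i : ℕ) :
    blk S (i+1) = blk S i + if i ∈ S then 1 else 0 := by
  unfold blk
  by_cases hi : i ∈ S
  · have : S ∩ Finset.range (i+1) = insert i (S ∩ Finset.range i) := by
      ext j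
      simp only [Finset.mem_inter, Finset.mem_range, Finset.mem_insert]
      constructor
      · rintro ⟨hj, hlt⟩
        rcases Nat.lt_succ_iff_lt_or_eq.1 hlt with h | rfl
        · exact Or.inr ⟨hj, h⟩
        · exact Or.inl rfl
      · rintro (rfl | ⟨hj, hlt⟩)
        · exact ⟨hi, Nat.lt_succ_self _⟩
        · exact ⟨hj, Nat.lt_succ_of_lt hlt⟩
    rw [this, Finset.card_insert_of_notMem (by simp), if_pos hi]
  · have : S ∩ Finset.range (i+1) = S ∩ Finset.range i := by
      ext j
      simp only [Finset.mem_inter, Finset.mem_range]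
      constructor
      · rintro ⟨hj, hlt⟩
        refine ⟨hj, ?_⟩
        rcases Nat.lt_succ_iff_lt_or_eq.1 hlt with h | rfl
        · exact h
        · exact absurd hj hi
      · rintro ⟨hj, hlt⟩; exact ⟨hj, Nat.lt_succ_of_lt hlt⟩
    rw [this, if_neg hi, Nat.add_zero]

lemma blk_succ_of_not_mem {S : Finset ℕ} {j : ℕ} (h : j ∉ S) : blk S (j+1) = blk S j := by
  simp [blk_succ, h]

lemma not_mem_of_blk_eq {S : Finset ℕ} {a b : ℕ} (h : blk S a = blk S b) {j : ℕ}
    (haj : a ≤ j) (hjb : j < b) : j ∉ S := by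
  intro hj
  have h1 : blk S a ≤ blk S j := blk_mono S haj
  have h2 : blk S j + 1 ≤ blk S (j+1) := by rw [blk_succ, if_pos hj]
  have h3 : blk S (j+1) ≤ blk S b := blk_mono S hjb
  omega

/-! ### block-increasing predicates -/

def BlkInc {n : ℕ} (S : Finset ℕ) (σ : Equiv.Perm (Fin n)) : Prop :=
  ∀ i i' : Fin n, i < i' → blk S i.val = blk S i'.val → σ i < σ i'

def Lv {n : ℕ} (S : Finset ℕ) : Fin (n+1) → ℕ :=
  fun v => if v.val < n then blk S v.val else n

def BlkIncC {n : ℕ} (S : Finset ℕ) (ρ : Equiv.Perm (Fin (n+1))) : Prop :=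
  ∀ v v' : Fin (n+1), v < v' → Lv S v = Lv S v' → ρ v < ρ v'

lemma asc_chain {m : ℕ} (π : Equiv.Perm (Fin m)) (good : ℕ → Prop)
    (adj : ∀ j, (h : j + 1 < m) → good j → π ⟨j, Nat.lt_of_succ_lt h⟩ < π ⟨j+1, h⟩) :
    ∀ (d : ℕ) (a b : Fin m), (b : ℕ) = (a : ℕ) + d + 1 →
      (∀ j, (a:ℕ) ≤ j → j < (b:ℕ) → good j) → π a < π b := by
  intro d
  induction d with
  | zero =>
    intro a b hb hg
    have h1 : (a:ℕ) + 1 < m := by omega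
    have ha : a = ⟨(a:ℕ), Nat.lt_of_succ_lt h1⟩ := by apply Fin.ext; rfl
    have hb' : b = ⟨(a:ℕ)+1, h1⟩ := by apply Fin.ext; simpa using hb
    rw [ha, hb']
    exact adj (a:ℕ) h1 (hg (a:ℕ) le_rfl (by omega))
  | succ d ih =>
    intro a b hb hg
    have hmid : (a:ℕ) + d + 1 < m := by have := b.isLt; omega
    have hm1 : ((a:ℕ) + d + 1) + 1 < m := by have := b.isLt; omega
    have h1 : π a < π ⟨(a:ℕ) + d + 1, hmid⟩ :=
      ih a ⟨(a:ℕ) + d + 1, hmid⟩ rfl (fun j hj hj2 => hg j hj (by simp at hj2 ⊢; omega))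
    have hb' : b = ⟨((a:ℕ)+d+1)+1, hm1⟩ := by apply Fin.ext; simp; omega
    have h2 : π ⟨(a:ℕ) + d + 1, hmid⟩ < π b := by
      rw [hb']
      exact adj ((a:ℕ)+d+1) hm1 (hg ((a:ℕ)+d+1) (by omega) (by omega))
    exact h1.trans h2

lemma descSet_subset_iff {n : ℕ} (S : Finset ℕ) (σ : Equiv.Perm (Fin n)) :
    descSet σ ⊆ S ↔ BlkInc S σ := by
  constructor
  · intro h i i' hii' hblk
    refine asc_chain σ (fun j => j ∉ S) ?_ ((i':ℕ) - (i:ℕ) - 1) i i' (by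
      have := Fin.lt_iff_val_lt_val.1 hii'; omega) ?_
    · intro j hj hjS
      by_contra hc
      have hne : σ ⟨j, Nat.lt_of_succ_lt hj⟩ ≠ σ ⟨j+1, hj⟩ := by
        intro he
        have := σ.injective he
        simp at this
      have hlt : σ ⟨j+1, hj⟩ < σ ⟨j, Nat.lt_of_succ_lt hj⟩ :=
        lt_of_le_of_ne (not_lt.1 hc) (Ne.symm hne)
      exact hjS (h ((mem_descSet σ j).2 ⟨hj, Fin.lt_iff_val_lt_val.1 hlt⟩))
    · intro j hj hj2
      exact not_mem_of_blk_eq hblk hj hj2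
  · intro h
    intro i hi
    rcases (mem_descSet σ i).1 hi with ⟨h1, hlt⟩
    by_contra hiS
    have hblk : blk S i = blk S (i+1) := (blk_succ_of_not_mem hiS).symm
    have := h ⟨i, Nat.lt_of_succ_lt h1⟩ ⟨i+1, h1⟩ (by simp [Fin.lt_iff_val_lt_val]) hblk
    rw [Fin.lt_iff_val_lt_val] at this
    omega

lemma Lv_last {n : ℕ} (S : Finset ℕ) : Lv S (Fin.last n) = n := by simp [Lv]

lemma Lv_lt_of_lt {n : ℕ} (S : Finset ℕ) {v : Fin (n+1)} (h : v.val < n) :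
    Lv S v = blk S v.val := by simp [Lv, h]

lemma Lv_le {n : ℕ} (S : Finset ℕ) (v : Fin (n+1)) : Lv S v ≤ n := by
  unfold Lv
  split
  · exact le_of_lt (lt_of_le_of_lt (blk_le S _) (by assumption))
  · exact le_rfl

lemma Lv_eq_n_iff {n : ℕ} (S : Finset ℕ) {v : Fin (n+1)} : Lv S v = n ↔ v = Fin.last n := by
  constructor
  · intro h
    unfold Lv at h
    split at h
    · exact absurd h (by have := blk_le S v.val; omega)
    · exact Fin.ext (by simp only [Fin.val_last]; have := v.isLt; omega)
  · rintro rfl; exact Lv_last S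

lemma Lv_mono {n : ℕ} (S : Finset ℕ) : Monotone (Lv (n := n) S) := by
  intro a b hab
  by_cases hb : b.val < n
  · have ha : a.val < n := lt_of_le_of_lt hab hb
    rw [Lv_lt_of_lt S ha, Lv_lt_of_lt S hb]
    exact blk_mono S hab
  · have : Lv S b = n := by unfold Lv; rw [if_neg hb]
    rw [this]; exact Lv_le S a

lemma descSetC_subset_iff {n : ℕ} (S : Finset ℕ) (ρ : Equiv.Perm (Fin (n+1))) :
    descSet ρ ∩ Finset.range (n-1) ⊆ S ↔ BlkIncC S ρ := by
  constructor
  · intro h v v' hvv' hL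
    have hv' : v'.val < n := by
      by_contra hc
      have hv'l : v' = Fin.last n := Fin.ext (by simp only [Fin.val_last]; have := v'.isLt; omega)
      rw [hv'l, Lv_last] at hL
      have hvl := (Lv_eq_n_iff S).1 hL
      rw [hvl, hv'l] at hvv'
      exact lt_irrefl _ hvv'
    have hv : v.val < n := lt_trans (Fin.lt_iff_val_lt_val.1 hvv') hv'
    rw [Lv_lt_of_lt S hv, Lv_lt_of_lt S hv'] at hL
    refine asc_chain ρ (fun j => j ∉ S ∧ j + 1 < n) ?_ (v'.val - v.val - 1) v v'
      (by have := Fin.lt_iff_val_lt_val.1 hvv'; omega) ?_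
    · intro j hj hgood
      by_contra hc
      have hne : ρ ⟨j, Nat.lt_of_succ_lt hj⟩ ≠ ρ ⟨j+1, hj⟩ := by
        intro he; have := ρ.injective he; simp at this
      have hlt : ρ ⟨j+1, hj⟩ < ρ ⟨j, Nat.lt_of_succ_lt hj⟩ :=
        lt_of_le_of_ne (not_lt.1 hc) (Ne.symm hne)
      have hmem : j ∈ descSet ρ ∩ Finset.range (n-1) := by
        rw [Finset.mem_inter, mem_descSet, Finset.mem_range]
        exact ⟨⟨hj, Fin.lt_iff_val_lt_val.1 hlt⟩, by omega⟩
      exact hgood.1 (h hmem)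
    · intro j hj hj2
      exact ⟨not_mem_of_blk_eq hL hj hj2, by omega⟩
  · intro h i hi
    rw [Finset.mem_inter, mem_descSet, Finset.mem_range] at hi
    rcases hi with ⟨⟨h1, hlt⟩, h2⟩
    by_contra hiS
    have hv : i < n := by omega
    have hv1 : i + 1 < n := by omega
    have hL : Lv S ⟨i, Nat.lt_of_succ_lt h1⟩ = Lv S ⟨i+1, h1⟩ := by
      rw [Lv_lt_of_lt S (v := ⟨i, Nat.lt_of_succ_lt h1⟩) hv,
        Lv_lt_of_lt S (v := ⟨i+1, h1⟩) hv1]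
      exact (blk_succ_of_not_mem hiS).symm
    have := h ⟨i, Nat.lt_of_succ_lt h1⟩ ⟨i+1, h1⟩ (by simp [Fin.lt_iff_val_lt_val]) hL
    rw [Fin.lt_iff_val_lt_val] at this
    omega

/-! ### monotone functions with equal content are equal -/

lemma mono_content_aux {m : ℕ} (f g : Fin m → ℕ) (hg : Monotone g)
    (h : ∀ j, (Finset.univ.filter fun i => f i = j).card =
      (Finset.univ.filter fun i => g i = j).card)
    (i₀ : Fin m) (hmin : ∀ x, x < i₀ → f x = g x) (hlt : f i₀ < g i₀) : False := by
  classical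
  set c := f i₀ with hc
  have hsub : (Finset.univ.filter fun i => g i = c) ⊂ (Finset.univ.filter fun i => f i = c) := by
    constructor
    · intro x hx
      rw [Finset.mem_filter] at hx ⊢
      refine ⟨Finset.mem_univ _, ?_⟩
      have hxlt : x < i₀ := by
        by_contra hge
        have := hg (not_lt.1 hge)
        omega
      rw [hmin x hxlt]; exact hx.2
    · intro hsub'
      have hi₀ : i₀ ∈ Finset.univ.filter fun i => f i = c := by
        rw [Finset.mem_filter]; exact ⟨Finset.mem_univ _, rfl⟩
      have := hsub' hi₀
      rw [Finset.mem_filter] at this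
      omega
  have := Finset.card_lt_card hsub
  have hcc := h c
  omega

lemma mono_content_eq {m : ℕ} (f g : Fin m → ℕ) (hf : Monotone f) (hg : Monotone g)
    (h : ∀ j, (Finset.univ.filter fun i => f i = j).card =
      (Finset.univ.filter fun i => g i = j).card) : f = g := by
  classical
  by_contra hne
  have hD : (Finset.univ.filter fun i => f i ≠ g i).Nonempty := by
    rw [Finset.filter_nonempty_iff]
    rcases Function.ne_iff.1 hne with ⟨i, hi⟩
    exact ⟨i, Finset.mem_univ _, hi⟩
  set i₀ := (Finset.univ.filter fun i => f i ≠ g i).min' hD with hi₀def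
  have hi₀mem := (Finset.univ.filter fun i => f i ≠ g i).min'_mem hD
  rw [Finset.mem_filter] at hi₀mem
  have hmin : ∀ x, x < i₀ → f x = g x := by
    intro x hx
    by_contra hc
    have hxm : x ∈ Finset.univ.filter (fun i => f i ≠ g i) :=
      Finset.mem_filter.2 ⟨Finset.mem_univ x, hc⟩
    exact absurd hx (not_lt.2 (Finset.min'_le _ x hxm))
  rcases lt_or_gt_of_ne hi₀mem.2 with hlt | hlt
  · exact mono_content_aux f g hg h i₀ hmin hlt
  · exact mono_content_aux g f hf (fun j => (h j).symm) i₀ (fun x hx => (hmin x hx).symm) hlt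

/-! ### orbit lemmas for cyclic permutations -/

section Orbit
variable {n : ℕ} {ρ : Equiv.Perm (Fin (n+1))}

lemma pow_mul_self {x : Fin (n+1)} {d : ℕ} (hd : (ρ^d) x = x) (q : ℕ) : (ρ^(d*q)) x = x := by
  induction q with
  | zero => simp
  | succ q ih =>
    have : d*(q+1) = d*q + d := by ring
    rw [this, pow_add, Equiv.Perm.mul_apply, hd, ih]

lemma pow_mod_self {x : Fin (n+1)} {d : ℕ} (hd : (ρ^d) x = x) (k : ℕ) :
    (ρ^(k % d)) x = (ρ^k) x := by
  conv_rhs => rw [← Nat.mod_add_div k d, pow_add, Equiv.Perm.mul_apply, pow_mul_self hd]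

lemma no_small_period (hρ : IsCyclic' ρ) (x : Fin (n+1)) {d : ℕ} (h0 : 0 < d) (hn : d ≤ n)
    (hd : (ρ^d) x = x) : False := by
  have hsurj : Function.Surjective (fun s : Fin d => (ρ^s.val) x) := by
    intro y
    rcases hρ x y with ⟨k, hk⟩
    exact ⟨⟨k % d, Nat.mod_lt _ h0⟩, by simpa using (pow_mod_self hd k).trans hk⟩
  have := Fintype.card_le_of_surjective _ hsurj
  simp at this
  omega

lemma orbit_inj (hρ : IsCyclic' ρ) (x : Fin (n+1)) :
    Function.Injective (fun t : Fin (n+1) => (ρ^t.val) x) := by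
  have key : ∀ t t' : Fin (n+1), t < t' → (ρ^t.val) x = (ρ^t'.val) x → False := by
    intro t t' hlt he
    have hd : (ρ^(t'.val - t.val)) x = x := by
      have h1 : t'.val = t.val + (t'.val - t.val) := by
        have := Fin.lt_iff_val_lt_val.1 hlt; omega
      rw [h1, pow_add, Equiv.Perm.mul_apply] at he
      exact (Equiv.injective _ he.symm)
    exact no_small_period hρ x (by have := Fin.lt_iff_val_lt_val.1 hlt; omega)
      (by have := t'.isLt; omega) hd
  intro t t' he
  rcases lt_trichotomy t t' with h | h | h
  · exact absurd (key t t' h he) id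
  · exact h
  · exact absurd (key t' t h he.symm) id

lemma pow_card_self (hρ : IsCyclic' ρ) (x : Fin (n+1)) : (ρ^(n+1)) x = x := by
  classical
  obtain ⟨t, t', hne, he⟩ := Fintype.exists_ne_map_eq_of_card_lt
    (fun s : Fin (n+2) => (ρ^s.val) x) (by simp)
  have key : ∀ t t' : Fin (n+2), t < t' → (ρ^t.val) x = (ρ^t'.val) x → (ρ^(n+1)) x = x := by
    intro t t' hlt he
    have hd : (ρ^(t'.val - t.val)) x = x := by
      have h1 : t'.val = t.val + (t'.val - t.val) := by
        have := Fin.lt_iff_val_lt_val.1 hlt; omega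
      rw [h1, pow_add, Equiv.Perm.mul_apply] at he
      exact (Equiv.injective _ he.symm)
    set d := t'.val - t.val with hddef
    have hd0 : 0 < d := by have := Fin.lt_iff_val_lt_val.1 hlt; omega
    have hdn : d ≤ n + 1 := by have := t'.isLt; omega
    rcases Nat.lt_or_ge d (n+1) with h | h
    · exact absurd (no_small_period hρ x hd0 (by omega) hd) id
    · have : d = n + 1 := by omega
      rwa [this] at hd
  rcases lt_trichotomy t t' with h | h | h
  · exact key t t' h he
  · exact absurd h hne
  · exact key t' t h he.symm

lemma orbit_surj (hρ : IsCyclic' ρ) (x y : Fin (n+1)) :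
    ∃ t : Fin (n+1), (ρ^t.val) x = y := by
  rcases hρ x y with ⟨k, hk⟩
  refine ⟨⟨k % (n+1), Nat.mod_lt _ (Nat.succ_pos n)⟩, ?_⟩
  simpa using (pow_mod_self (pow_card_self hρ x) k).trans hk

end Orbit

/-! ### the word/necklace construction -/

section Main
variable {n : ℕ} (S : Finset ℕ)

def Content (w : Fin n → ℕ) : Prop :=
  ∀ j, (Finset.univ.filter fun t => w t = j).card =
    (Finset.univ.filter fun i : Fin n => blk S i.val = j).card

def Lp (w : Fin n → ℕ) : Fin (n+1) → ℕ :=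
  fun q => if _ : q.val = 0 then n else w ⟨q.val - 1, by have := q.isLt; omega⟩

def Gw (w : Fin n → ℕ) : Fin (n+1) → Lex (Fin (n+1) → ℕ) :=
  fun p => toLex fun j => Lp w (p + j)

noncomputable def tauP (w : Fin n → ℕ) : Equiv.Perm (Fin (n+1)) := Tuple.sort (Gw w)

noncomputable def PhiP (w : Fin n → ℕ) : Equiv.Perm (Fin (n+1)) :=
  (tauP w)⁻¹ * (finRotate (n+1)) * (tauP w)

def PsiW (ρ : Equiv.Perm (Fin (n+1))) : Fin n → ℕ :=
  fun t => Lv S ((ρ^(t.val+1)) (Fin.last n))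

lemma Lp_zero (w : Fin n → ℕ) : Lp w 0 = n := by simp [Lp]

lemma Lp_succ (w : Fin n → ℕ) (t : Fin n) : Lp w t.succ = w t := by
  unfold Lp
  rw [dif_neg (by simp [Fin.val_succ])]
  exact congrArg w (Fin.ext rfl)

lemma content_w_lt {w : Fin n → ℕ} (hw : Content S w) (t : Fin n) : w t < n := by
  have h1 : 0 < (Finset.univ.filter fun t' => w t' = w t).card :=
    Finset.card_pos.2 ⟨t, Finset.mem_filter.2 ⟨Finset.mem_univ t, rfl⟩⟩
  rw [hw (w t)] at h1
  obtain ⟨i, hi⟩ := Finset.card_pos.1 h1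
  rw [Finset.mem_filter] at hi
  have h2 := blk_le S i.val
  have h3 := i.isLt
  omega

lemma Lp_lt_n {w : Fin n → ℕ} (hw : Content S w) {q : Fin (n+1)} (hq : q.val ≠ 0) :
    Lp w q < n := by
  unfold Lp
  rw [dif_neg hq]
  exact content_w_lt S hw _

lemma Lp_eq_n_iff {w : Fin n → ℕ} (hw : Content S w) {q : Fin (n+1)} :
    Lp w q = n ↔ q = 0 := by
  constructor
  · intro h
    by_contra hq
    have := Lp_lt_n S hw (q := q) (fun hh => hq (Fin.ext hh))
    omega
  · rintro rfl; exact Lp_zero w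

lemma Gw_lt_iff {w : Fin n → ℕ} {p p' : Fin (n+1)} :
    Gw w p < Gw w p' ↔ ∃ i, (∀ j, j < i → Lp w (p + j) = Lp w (p' + j)) ∧
      Lp w (p + i) < Lp w (p' + i) := Iff.rfl

lemma Gw_inj {w : Fin n → ℕ} (hw : Content S w) : Function.Injective (Gw w) := by
  intro p p' h
  have h0 : ∀ j, Lp w (p + j) = Lp w (p' + j) := fun j => congrFun (congrArg ofLex h) j
  have h1 := h0 (-p)
  rw [add_neg_cancel] at h1
  have h3 : p' + -p = 0 := (Lp_eq_n_iff S hw).1 (by rw [← h1]; exact Lp_zero w)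
  rw [← sub_eq_add_neg] at h3
  exact (sub_eq_zero.1 h3).symm

lemma lex_first_le {f g : Fin (n+1) → ℕ} (h : toLex f ≤ toLex g) : f 0 ≤ g 0 := by
  rcases eq_or_lt_of_le h with he | hlt
  · exact le_of_eq (congrFun (congrArg ofLex he) 0)
  · obtain ⟨i, hbef, hlt'⟩ := hlt
    rcases eq_or_ne i 0 with rfl | hne
    · exact le_of_lt hlt'
    · exact le_of_eq (hbef 0 (Fin.pos_of_ne_zero hne))

lemma Gw_shift {w : Fin n → ℕ} {p p' : Fin (n+1)}
    (h : Gw w p < Gw w p') (h0 : Lp w p = Lp w p') : Gw w (p+1) < Gw w (p'+1) := by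
  obtain ⟨i, hbef, hlt⟩ := Gw_lt_iff.1 h
  have hi0 : i.val ≠ 0 := by
    intro hh
    have hi : i = 0 := Fin.ext hh
    rw [hi, add_zero, add_zero, h0] at hlt
    exact lt_irrefl _ hlt
  have hilt := i.isLt
  refine Gw_lt_iff.2 ⟨⟨i.val - 1, by omega⟩, ?_, ?_⟩
  · intro j hj
    have hjv : j.val < i.val - 1 := Fin.lt_iff_val_lt_val.1 hj
    have hj1 : (j + 1 : Fin (n+1)).val = j.val + 1 := by
      rw [Fin.val_add_one_of_lt]
      rw [Fin.lt_iff_val_lt_val, Fin.val_last]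
      omega
    have harr : (p + 1) + j = p + (j + 1) := by
      rw [add_assoc, add_comm 1 j]
    have harr' : (p' + 1) + j = p' + (j + 1) := by
      rw [add_assoc, add_comm 1 j]
    rw [harr, harr']
    exact hbef (j+1) (by rw [Fin.lt_iff_val_lt_val, hj1]; omega)
  · have hpred1 : (⟨i.val - 1, by omega⟩ : Fin (n+1)) + 1 = i := by
      apply Fin.ext
      rw [Fin.val_add_one_of_lt
        (by rw [Fin.lt_iff_val_lt_val, Fin.val_last]; show i.val - 1 < n; omega)]
      show i.val - 1 + 1 = i.val
      omega
    have harr : (p + 1) + ⟨i.val - 1, by omega⟩ = p + i := by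
      rw [add_assoc, add_comm 1 _, hpred1]
    have harr' : (p' + 1) + ⟨i.val - 1, by omega⟩ = p' + i := by
      rw [add_assoc, add_comm 1 _, hpred1]
    rw [harr, harr']
    exact hlt

lemma Gw_star_max {w : Fin n → ℕ} (hw : Content S w) {q : Fin (n+1)} (hq : q ≠ 0) :
    Gw w q < Gw w 0 := by
  refine Gw_lt_iff.2 ⟨0, ?_, ?_⟩
  · intro j hj; exact absurd hj (Fin.not_lt_zero j)
  · rw [add_zero, add_zero, Lp_zero]
    exact Lp_lt_n S hw (fun h => hq (Fin.ext h))

lemma tau_mono (w : Fin n → ℕ) : Monotone (Gw w ∘ (tauP w)) :=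
  (Tuple.eq_sort_iff.mp (rfl : tauP w = Tuple.sort (Gw w))).1

lemma tau_strictMono {w : Fin n → ℕ} (hw : Content S w) : StrictMono (Gw w ∘ tauP w) :=
  (tau_mono w).strictMono_of_injective ((Gw_inj S hw).comp (tauP w).injective)

lemma tau_reflect {w : Fin n → ℕ} (hw : Content S w) {a b : Fin (n+1)}
    (h : Gw w a < Gw w b) : (tauP w)⁻¹ a < (tauP w)⁻¹ b := by
  rcases lt_trichotomy ((tauP w)⁻¹ a) ((tauP w)⁻¹ b) with hh | hh | hh
  · exact hh
  · exfalso
    have : a = b := by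
      have := congrArg (tauP w) hh
      simpa using this
    rw [this] at h
    exact lt_irrefl _ h
  · exfalso
    have h2 := tau_strictMono S hw hh
    simp only [Function.comp_apply, Equiv.Perm.apply_inv_self] at h2
    exact absurd h (asymm h2)

lemma tau_last {w : Fin n → ℕ} (hw : Content S w) : tauP w (Fin.last n) = 0 := by
  by_contra hne
  have h1 : Gw w (tauP w (Fin.last n)) < Gw w 0 := Gw_star_max S hw hne
  have h2 : Gw w 0 ≤ Gw w (tauP w (Fin.last n)) := by
    have h3 := tau_mono w (Fin.le_last ((tauP w)⁻¹ 0))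
    simpa using h3
  exact absurd h1 (not_lt.2 h2)

lemma phiP_apply (w : Fin n → ℕ) (v : Fin (n+1)) :
    PhiP w v = (tauP w)⁻¹ (tauP w v + 1) := by
  simp [PhiP, Equiv.Perm.mul_apply]

open Fin.NatCast in
lemma phiP_pow (w : Fin n → ℕ) (k : ℕ) (v : Fin (n+1)) :
    ((PhiP w)^k) v = (tauP w)⁻¹ (tauP w v + (k : Fin (n+1))) := by
  induction k with
  | zero => simp
  | succ k ih =>
    rw [pow_succ', Equiv.Perm.mul_apply, ih, phiP_apply, Equiv.Perm.apply_inv_self]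
    congr 1
    rw [Nat.cast_add, Nat.cast_one, add_assoc]

open Fin.NatCast in
lemma phiP_cyclic (w : Fin n → ℕ) : IsCyclic' (PhiP w) := by
  intro x y
  refine ⟨(tauP w y - tauP w x).val, ?_⟩
  rw [phiP_pow, Fin.cast_val_eq_self]
  have h : tauP w x + (tauP w y - tauP w x) = tauP w y := by abel
  rw [h, Equiv.Perm.inv_apply_self]

/-- cardinality bridge castSucc: -/
lemma card_Lv (j : ℕ) :
    (Finset.univ.filter fun v : Fin (n+1) => v ≠ Fin.last n ∧ Lv S v = j).card
      = (Finset.univ.filter fun i : Fin n => blk S i.val = j).card := by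
  refine Finset.card_bij (fun v hv => ⟨v.val, Fin.val_lt_last (Finset.mem_filter.1 hv).2.1⟩)
    ?_ ?_ ?_
  · intro v hv
    rw [Finset.mem_filter] at hv ⊢
    refine ⟨Finset.mem_univ _, ?_⟩
    have h2 := hv.2.2
    rwa [Lv_lt_of_lt S (Fin.val_lt_last hv.2.1)] at h2
  · intro a ha b hb h
    have := congrArg Fin.val h
    simp only at this
    exact Fin.ext this
  · intro i hi
    rw [Finset.mem_filter] at hi
    refine ⟨i.castSucc, Finset.mem_filter.2 ⟨Finset.mem_univ _, ?_, ?_⟩, ?_⟩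
    · exact (Fin.castSucc_lt_last i).ne
    · rw [Lv_lt_of_lt S (by simpa using i.isLt)]
      simpa using hi.2
    · apply Fin.ext; simp

lemma card_Lp {w : Fin n → ℕ} (hw : Content S w) (j : ℕ) :
    (Finset.univ.filter fun q : Fin (n+1) => Lp w q = j).card =
      (Finset.univ.filter fun v : Fin (n+1) => Lv S v = j).card := by
  by_cases hj : j = n
  · rw [hj]
    have h1 : (Finset.univ.filter fun q : Fin (n+1) => Lp w q = n) = {0} := by
      ext q
      simp only [Finset.mem_filter, Finset.mem_univ, true_and, Finset.mem_singleton]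
      exact Lp_eq_n_iff S hw
    have h2 : (Finset.univ.filter fun v : Fin (n+1) => Lv S v = n) = {Fin.last n} := by
      ext v
      simp only [Finset.mem_filter, Finset.mem_univ, true_and, Finset.mem_singleton]
      exact Lv_eq_n_iff S
    rw [h1, h2, Finset.card_singleton, Finset.card_singleton]
  · have h1 : (Finset.univ.filter fun q : Fin (n+1) => Lp w q = j).card =
        (Finset.univ.filter fun t : Fin n => w t = j).card := by
      refine Finset.card_bij (fun q hq => ⟨q.val - 1, by
        have hq2 := (Finset.mem_filter.1 hq).2
        have hq0 : q.val ≠ 0 := by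
          intro hh
          rw [show q = 0 from Fin.ext hh, Lp_zero] at hq2
          exact hj hq2.symm
        have := q.isLt
        omega⟩) ?_ ?_ ?_
      · intro q hq
        rw [Finset.mem_filter] at hq ⊢
        refine ⟨Finset.mem_univ _, ?_⟩
        have hq2 := hq.2
        have hq0 : q.val ≠ 0 := by
          intro hh
          rw [show q = 0 from Fin.ext hh, Lp_zero] at hq2
          exact hj hq2.symm
        unfold Lp at hq2
        rwa [dif_neg hq0] at hq2
      · intro a ha b hb h
        have ha0 : a.val ≠ 0 := by
          have ha2 := (Finset.mem_filter.1 ha).2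
          intro hh
          rw [show a = 0 from Fin.ext hh, Lp_zero] at ha2
          exact hj ha2.symm
        have hb0 : b.val ≠ 0 := by
          have hb2 := (Finset.mem_filter.1 hb).2
          intro hh
          rw [show b = 0 from Fin.ext hh, Lp_zero] at hb2
          exact hj hb2.symm
        have := congrArg Fin.val h
        simp only at this
        apply Fin.ext
        omega
      · intro t ht
        rw [Finset.mem_filter] at ht
        refine ⟨t.succ, Finset.mem_filter.2 ⟨Finset.mem_univ _, ?_⟩, ?_⟩
        · rw [Lp_succ]; exact ht.2
        · apply Fin.ext; simp [Fin.val_succ]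
    have h2 : (Finset.univ.filter fun v : Fin (n+1) => Lv S v = j) =
        (Finset.univ.filter fun v : Fin (n+1) => v ≠ Fin.last n ∧ Lv S v = j) := by
      ext v
      simp only [Finset.mem_filter, Finset.mem_univ, true_and]
      constructor
      · intro h
        refine ⟨?_, h⟩
        intro hv
        rw [hv, Lv_last] at h
        exact hj h.symm
      · exact fun h => h.2
    rw [h1, h2, card_Lv, ← hw j]

lemma Lv_eq_Lp_tau {w : Fin n → ℕ} (hw : Content S w) (v : Fin (n+1)) :
    Lv S v = Lp w (tauP w v) := by
  have key : Lv (n := n) S = fun v => Lp w (tauP w v) := by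
    apply mono_content_eq _ _ (Lv_mono S)
    · intro a b hab
      have h := lex_first_le (tau_mono w hab)
      simpa [Gw, add_zero] using h
    · intro j
      have h1 : (Finset.univ.filter fun v : Fin (n+1) => Lp w (tauP w v) = j).card =
          (Finset.univ.filter fun q : Fin (n+1) => Lp w q = j).card := by
        refine Finset.card_bij (fun v _ => tauP w v) ?_ ?_ ?_
        · intro v hv
          rw [Finset.mem_filter] at hv ⊢
          exact ⟨Finset.mem_univ _, hv.2⟩
        · intro a _ b _ h; exact (tauP w).injective h
        · intro q hq
          refine ⟨(tauP w)⁻¹ q, ?_, by simp⟩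
          rw [Finset.mem_filter] at hq ⊢
          refine ⟨Finset.mem_univ _, ?_⟩
          rw [Equiv.Perm.apply_inv_self]
          exact hq.2
      rw [h1, card_Lp S hw]
  exact congrFun key v

lemma phiP_blkinc {w : Fin n → ℕ} (hw : Content S w) : BlkIncC S (PhiP w) := by
  intro v v' hvv' hL
  have hLp : Lp w (tauP w v) = Lp w (tauP w v') := by
    rw [← Lv_eq_Lp_tau S hw, ← Lv_eq_Lp_tau S hw]
    exact hL
  have hG : Gw w (tauP w v) < Gw w (tauP w v') := tau_strictMono S hw hvv'
  have hsh := Gw_shift hG hLp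
  rw [phiP_apply, phiP_apply]
  exact tau_reflect S hw hsh

open Fin.NatCast in
lemma psiW_phiP {w : Fin n → ℕ} (hw : Content S w) : PsiW S (PhiP w) = w := by
  funext t
  unfold PsiW
  rw [phiP_pow, tau_last S hw]
  have hc : ((t.val + 1 : ℕ) : Fin (n+1)) = t.succ := by
    apply Fin.ext
    rw [Fin.val_cast_of_lt (by have := t.isLt; omega)]
    simp [Fin.val_succ]
  rw [hc, zero_add, Lv_eq_Lp_tau S hw, Equiv.Perm.apply_inv_self, Lp_succ]

lemma psiW_content {ρ : Equiv.Perm (Fin (n+1))} (hρ : IsCyclic' ρ) :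
    Content S (PsiW S ρ) := by
  intro j
  have h1 : (Finset.univ.filter fun t : Fin n => PsiW S ρ t = j).card =
      (Finset.univ.filter fun v : Fin (n+1) => v ≠ Fin.last n ∧ Lv S v = j).card := by
    refine Finset.card_bij (fun t _ => (ρ^(t.val+1)) (Fin.last n)) ?_ ?_ ?_
    · intro t ht
      rw [Finset.mem_filter] at ht ⊢
      refine ⟨Finset.mem_univ _, ?_, ht.2⟩
      intro he
      have h2 : (fun s : Fin (n+1) => (ρ^s.val) (Fin.last n)) ⟨t.val+1, by have := t.isLt; omega⟩
          = (fun s : Fin (n+1) => (ρ^s.val) (Fin.last n)) 0 := by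
        simpa using he
      have h3 := orbit_inj hρ (Fin.last n) h2
      have := congrArg Fin.val h3
      simp at this
    · intro a _ b _ h
      have h2 : (fun s : Fin (n+1) => (ρ^s.val) (Fin.last n)) ⟨a.val+1, by have := a.isLt; omega⟩
          = (fun s : Fin (n+1) => (ρ^s.val) (Fin.last n)) ⟨b.val+1, by have := b.isLt; omega⟩ := by
        simpa using h
      have h3 := orbit_inj hρ (Fin.last n) h2
      have := congrArg Fin.val h3
      simp only at this
      apply Fin.ext
      omega
    · intro v hv
      rw [Finset.mem_filter] at hv
      obtain ⟨s, hs⟩ := orbit_surj hρ (Fin.last n) v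
      have hs0 : s.val ≠ 0 := by
        intro hh
        rw [show s = 0 from Fin.ext hh] at hs
        simp at hs
        exact hv.2.1 hs.symm
      have hsv := s.isLt
      refine ⟨⟨s.val - 1, by omega⟩, Finset.mem_filter.2 ⟨Finset.mem_univ _, ?_⟩, ?_⟩
      · unfold PsiW
        have he : s.val - 1 + 1 = s.val := by omega
        simp only [he]
        rw [hs]
        exact hv.2.2
      · have he : s.val - 1 + 1 = s.val := by omega
        simp only [he]
        exact hs
  rw [h1, card_Lv]

lemma F_strict {ρ : Equiv.Perm (Fin (n+1))} (hρ : IsCyclic' ρ) (hbi : BlkIncC S ρ) :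
    StrictMono (fun v : Fin (n+1) => toLex (fun j : Fin (n+1) => Lv S ((ρ^j.val) v))) := by
  intro v v' hvv'
  obtain ⟨j₀, hj₀⟩ := orbit_surj hρ v (Fin.last n)
  have hPex : Lv S ((ρ^j₀.val) v) ≠ Lv S ((ρ^j₀.val) v') := by
    rw [hj₀, Lv_last]
    intro hc
    have h2 := (Lv_eq_n_iff S).1 hc.symm
    rw [← hj₀] at h2
    exact absurd (Equiv.injective _ h2) (ne_of_gt hvv')
  classical
  have hPex' : ∃ m, Lv S ((ρ^m) v) ≠ Lv S ((ρ^m) v') := ⟨j₀.val, hPex⟩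
  set d := Nat.find hPex' with hd
  have hdspec := Nat.find_spec hPex'
  have hdmin : ∀ m, m < d → Lv S ((ρ^m) v) = Lv S ((ρ^m) v') :=
    fun m hm => not_ne_iff.1 (Nat.find_min hPex' hm)
  have hdle : d ≤ j₀.val := Nat.find_min' hPex' hPex
  have hdlt : d < n + 1 := lt_of_le_of_lt hdle j₀.isLt
  have key : ∀ m, m ≤ d → (ρ^m) v < (ρ^m) v' := by
    intro m
    induction m with
    | zero => intro _; simpa using hvv'
    | succ m ih =>
      intro hm
      have h1 := ih (by omega)
      have h2 := hdmin m (by omega)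
      rw [pow_succ', Equiv.Perm.mul_apply, Equiv.Perm.mul_apply]
      exact hbi _ _ h1 h2
  refine ⟨⟨d, hdlt⟩, ?_, ?_⟩
  · intro j hj
    exact hdmin j.val (Fin.lt_iff_val_lt_val.1 hj)
  · exact lt_of_le_of_ne (Lv_mono S (key d le_rfl).le) hdspec

noncomputable def cEq {ρ : Equiv.Perm (Fin (n+1))} (hρ : IsCyclic' ρ) :
    Fin (n+1) ≃ Fin (n+1) :=
  Equiv.ofBijective (fun p => (ρ^p.val) (Fin.last n))
    ((Finite.injective_iff_bijective).1 (orbit_inj hρ (Fin.last n)))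

lemma cEq_apply {ρ : Equiv.Perm (Fin (n+1))} (hρ : IsCyclic' ρ) (p : Fin (n+1)) :
    cEq hρ p = (ρ^p.val) (Fin.last n) := rfl

lemma Lp_psiW {ρ : Equiv.Perm (Fin (n+1))} (hρ : IsCyclic' ρ) (q : Fin (n+1)) :
    Lp (PsiW S ρ) q = Lv S ((ρ^q.val) (Fin.last n)) := by
  rcases eq_or_ne q 0 with rfl | hq
  · rw [Lp_zero]
    simp [Lv_last]
  · have hqv : q.val ≠ 0 := fun h => hq (Fin.ext h)
    unfold Lp
    rw [dif_neg hqv]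
    unfold PsiW
    have he : q.val - 1 + 1 = q.val := by omega
    simp only [he]

lemma Gw_psiW {ρ : Equiv.Perm (Fin (n+1))} (hρ : IsCyclic' ρ) (p : Fin (n+1)) :
    Gw (PsiW S ρ) p = toLex (fun j : Fin (n+1) => Lv S ((ρ^j.val) ((cEq hρ) p))) := by
  unfold Gw
  congr 1
  funext j
  rw [Lp_psiW S hρ, cEq_apply]
  have h1 : (ρ^(j.val + p.val)) (Fin.last n) = (ρ^j.val) ((ρ^p.val) (Fin.last n)) := by
    rw [pow_add, Equiv.Perm.mul_apply]
  have h2 : (p + j).val = (p.val + j.val) % (n+1) := Fin.val_add p j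
  have h3 : (ρ^((p + j).val)) (Fin.last n) = (ρ^(p.val + j.val)) (Fin.last n) := by
    rw [h2]
    exact pow_mod_self (pow_card_self hρ (Fin.last n)) _
  rw [Nat.add_comm p.val j.val] at h3
  rw [h3, h1]

lemma tau_psiW {ρ : Equiv.Perm (Fin (n+1))} (hρ : IsCyclic' ρ) (hbi : BlkIncC S ρ) :
    tauP (PsiW S ρ) = ((cEq hρ).symm : Equiv.Perm (Fin (n+1))) := by
  symm
  unfold tauP
  rw [Tuple.eq_sort_iff]
  constructor
  · intro a b hab
    simp only [Function.comp_apply]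
    rw [Gw_psiW S hρ, Gw_psiW S hρ, Equiv.apply_symm_apply, Equiv.apply_symm_apply]
    exact (F_strict S hρ hbi).monotone hab
  · intro i j hij he
    exfalso
    rw [Gw_psiW S hρ, Gw_psiW S hρ, Equiv.apply_symm_apply, Equiv.apply_symm_apply] at he
    exact absurd ((F_strict S hρ hbi).injective he) (ne_of_lt hij)

lemma phiP_psiW {ρ : Equiv.Perm (Fin (n+1))} (hρ : IsCyclic' ρ) (hbi : BlkIncC S ρ) :
    PhiP (PsiW S ρ) = ρ := by
  apply Equiv.ext
  intro v
  rw [phiP_apply, tau_psiW S hρ hbi]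
  show (cEq hρ) ((cEq hρ).symm v + 1) = ρ v
  set q := (cEq hρ).symm v with hqdef
  have h2 : (q + 1 : Fin (n+1)).val = (q.val + 1) % (n+1) := by
    rw [Fin.val_add, Fin.val_one']
    conv_rhs => rw [Nat.add_mod q.val 1 (n+1)]
    rw [Nat.mod_eq_of_lt q.isLt]
  rw [cEq_apply, h2, pow_mod_self (pow_card_self hρ (Fin.last n)), pow_succ',
    Equiv.Perm.mul_apply, ← cEq_apply hρ, Equiv.apply_symm_apply]

end Main

/-! ### the permutation side -/

section ASide
variable {n : ℕ} (S : Finset ℕ)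

lemma card_filter_comp {α : Type*} [Fintype α] [DecidableEq α] (e : Equiv.Perm α)
    (p : α → Prop) [DecidablePred p] :
    (Finset.univ.filter fun a => p (e a)).card = (Finset.univ.filter p).card := by
  refine Finset.card_bij (fun a _ => e a) ?_ ?_ ?_
  · intro a ha
    rw [Finset.mem_filter] at ha ⊢
    exact ⟨Finset.mem_univ _, ha.2⟩
  · intro a _ b _ h; exact e.injective h
  · intro b hb
    refine ⟨e⁻¹ b, ?_, by simp⟩
    rw [Finset.mem_filter] at hb ⊢
    refine ⟨Finset.mem_univ _, ?_⟩
    rw [Equiv.Perm.apply_inv_self]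
    exact hb.2

def toW (σ : Equiv.Perm (Fin n)) : Fin n → ℕ := fun v => blk S ((σ⁻¹ v).val)

lemma toW_content (σ : Equiv.Perm (Fin n)) : Content S (toW S σ) := fun j =>
  card_filter_comp σ⁻¹ (fun i : Fin n => blk S i.val = j)

lemma sort_toW {σ : Equiv.Perm (Fin n)} (hσ : BlkInc S σ) : Tuple.sort (toW S σ) = σ := by
  symm
  rw [Tuple.eq_sort_iff]
  constructor
  · intro a b hab
    show toW S σ (σ a) ≤ toW S σ (σ b)
    unfold toW
    simp only [Equiv.Perm.inv_apply_self]
    exact blk_mono S hab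
  · intro i j hij he
    unfold toW at he
    simp only [Equiv.Perm.inv_apply_self] at he
    exact hσ i j hij he

lemma w_sort_eq_blk {w : Fin n → ℕ} (hw : Content S w) (i : Fin n) :
    w (Tuple.sort w i) = blk S i.val := by
  have hmono : Monotone (w ∘ Tuple.sort w) :=
    (Tuple.eq_sort_iff.mp (rfl : Tuple.sort w = Tuple.sort w)).1
  have key : (fun i : Fin n => w (Tuple.sort w i)) = fun i : Fin n => blk S i.val := by
    apply mono_content_eq _ _ hmono
    · intro a b hab
      exact blk_mono S hab
    · intro j
      show (Finset.univ.filter fun i => w (Tuple.sort w i) = j).card =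
        (Finset.univ.filter fun i : Fin n => blk S i.val = j).card
      exact (card_filter_comp (Tuple.sort w) (fun t => w t = j)).trans (hw j)
  exact congrFun key i

lemma toW_sort {w : Fin n → ℕ} (hw : Content S w) : toW S (Tuple.sort w) = w := by
  funext v
  unfold toW
  rw [← w_sort_eq_blk S hw ((Tuple.sort w)⁻¹ v), Equiv.Perm.apply_inv_self]

lemma sort_blkinc {w : Fin n → ℕ} (hw : Content S w) : BlkInc S (Tuple.sort w) := by
  intro i i' hii' hblk
  have hties := (Tuple.eq_sort_iff.mp (rfl : Tuple.sort w = Tuple.sort w)).2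
  apply hties i i' hii'
  rw [w_sort_eq_blk S hw, w_sort_eq_blk S hw, hblk]

noncomputable def mainEquiv :
    {σ : Equiv.Perm (Fin n) // BlkInc S σ} ≃
      {ρ : Equiv.Perm (Fin (n+1)) // IsCyclic' ρ ∧ BlkIncC S ρ} where
  toFun σp := ⟨PhiP (toW S σp.1), phiP_cyclic _, phiP_blkinc S (toW_content S σp.1)⟩
  invFun ρp := ⟨Tuple.sort (PsiW S ρp.1), sort_blkinc S (psiW_content S ρp.2.1)⟩
  left_inv := by
    rintro ⟨σ, hσ⟩
    apply Subtype.ext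
    show Tuple.sort (PsiW S (PhiP (toW S σ))) = σ
    rw [psiW_phiP S (toW_content S σ), sort_toW S hσ]
  right_inv := by
    rintro ⟨ρ, hρ, hbi⟩
    apply Subtype.ext
    show PhiP (toW S (Tuple.sort (PsiW S ρ))) = ρ
    rw [toW_sort S (psiW_content S hρ), phiP_psiW S hρ hbi]

end ASide

/-! ### counting -/

section Count
variable {n : ℕ}

lemma NA_eq_NB (S : Finset ℕ) :
    Nat.card {σ : Equiv.Perm (Fin n) // descSet σ ⊆ S} =
      Nat.card {ρ : Equiv.Perm (Fin (n+1)) //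
        IsCyclic' ρ ∧ descSet ρ ∩ Finset.range (n-1) ⊆ S} := by
  apply Nat.card_congr
  refine (Equiv.subtypeEquivRight ?_).trans ((mainEquiv S).trans (Equiv.subtypeEquivRight ?_))
  · intro σ; exact descSet_subset_iff S σ
  · intro ρ; exact and_congr_right fun _ => (descSetC_subset_iff S ρ).symm

lemma partitionA (S : Finset ℕ) :
    Nat.card {σ : Equiv.Perm (Fin n) // descSet σ ⊆ S} =
      ∑ c ∈ S.powerset, Nat.card {σ : Equiv.Perm (Fin n) // descSet σ = c} := by
  classical
  rw [Nat.card_eq_fintype_card, Fintype.card_subtype]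
  have hc : ∀ c : Finset ℕ, Nat.card {σ : Equiv.Perm (Fin n) // descSet σ = c} =
      (Finset.univ.filter fun σ : Equiv.Perm (Fin n) => descSet σ = c).card := fun c => by
    rw [Nat.card_eq_fintype_card, Fintype.card_subtype]
  simp_rw [hc]
  rw [← Finset.card_biUnion]
  · congr 1
    ext σ
    simp only [Finset.mem_filter, Finset.mem_biUnion, Finset.mem_powerset, Finset.mem_univ,
      true_and]
    constructor
    · intro h
      exact ⟨descSet σ, h, rfl⟩
    · rintro ⟨c, hc', rfl⟩
      exact hc'
  · intro c _ c' _ hne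
    refine Finset.disjoint_left.2 ?_
    intro σ h1 h2
    rw [Finset.mem_filter] at h1 h2
    exact hne (by rw [← h1.2, h2.2])

lemma partitionB (S : Finset ℕ) :
    Nat.card {ρ : Equiv.Perm (Fin (n+1)) //
        IsCyclic' ρ ∧ descSet ρ ∩ Finset.range (n-1) ⊆ S} =
      ∑ c ∈ S.powerset, Nat.card {ρ : Equiv.Perm (Fin (n+1)) //
        IsCyclic' ρ ∧ descSet ρ ∩ Finset.range (n-1) = c} := by
  classical
  rw [Nat.card_eq_fintype_card, Fintype.card_subtype]
  have hc : ∀ c : Finset ℕ, Nat.card {ρ : Equiv.Perm (Fin (n+1)) //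
        IsCyclic' ρ ∧ descSet ρ ∩ Finset.range (n-1) = c} =
      (Finset.univ.filter fun ρ : Equiv.Perm (Fin (n+1)) =>
        IsCyclic' ρ ∧ descSet ρ ∩ Finset.range (n-1) = c).card := fun c => by
    rw [Nat.card_eq_fintype_card, Fintype.card_subtype]
  simp_rw [hc]
  rw [← Finset.card_biUnion]
  · congr 1
    ext ρ
    simp only [Finset.mem_filter, Finset.mem_biUnion, Finset.mem_powerset, Finset.mem_univ,
      true_and]
    constructor
    · rintro ⟨h1, h2⟩
      exact ⟨descSet ρ ∩ Finset.range (n-1), h2, h1, rfl⟩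
    · rintro ⟨c, hc', h1, rfl⟩
      exact ⟨h1, hc'⟩
  · intro c _ c' _ hne
    refine Finset.disjoint_left.2 ?_
    intro ρ h1 h2
    rw [Finset.mem_filter] at h1 h2
    exact hne (by rw [← h1.2.2, h2.2.2])

lemma fiber_eq (c : Finset ℕ) :
    Nat.card {σ : Equiv.Perm (Fin n) // descSet σ = c} =
      Nat.card {ρ : Equiv.Perm (Fin (n+1)) //
        IsCyclic' ρ ∧ descSet ρ ∩ Finset.range (n-1) = c} := by
  induction c using Finset.strongInduction with
  | _ c ih =>
    have hA := partitionA (n := n) c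
    have hB := partitionB (n := n) c
    rw [NA_eq_NB c] at hA
    rw [hA] at hB
    have hmem : c ∈ c.powerset := Finset.mem_powerset_self c
    rw [← Finset.sum_erase_add _ _ hmem, ← Finset.sum_erase_add _ _ hmem] at hB
    have hsum : ∑ t ∈ c.powerset.erase c,
        Nat.card {σ : Equiv.Perm (Fin n) // descSet σ = t} =
        ∑ t ∈ c.powerset.erase c, Nat.card {ρ : Equiv.Perm (Fin (n+1)) //
          IsCyclic' ρ ∧ descSet ρ ∩ Finset.range (n-1) = t} := by
      apply Finset.sum_congr rfl
      intro t ht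
      rw [Finset.mem_erase, Finset.mem_powerset] at ht
      exact ih t (HasSubset.Subset.ssubset_of_ne ht.2 ht.1)
    omega

end Count

end Stmt0Proof


set_option maxHeartbeats 2000000 in
theorem stmt0 (n : ℕ) :
    ∃ φ : {π : Equiv.Perm (Fin (n + 1)) // IsCyclic' π} ≃ Equiv.Perm (Fin n),
      ∀ π : {π : Equiv.Perm (Fin (n + 1)) // IsCyclic' π},
        descSet π.1 ∩ Finset.range (n - 1) = descSet (φ π) := by
  classical
  have hfib : ∀ c : Finset ℕ,
      Fintype.card {a : {π : Equiv.Perm (Fin (n+1)) // IsCyclic' π} //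
          descSet a.1 ∩ Finset.range (n-1) = c} =
        Fintype.card {σ : Equiv.Perm (Fin n) // descSet σ = c} := by
    intro c
    have h1 : Nat.card {a : {π : Equiv.Perm (Fin (n+1)) // IsCyclic' π} //
          descSet a.1 ∩ Finset.range (n-1) = c} =
        Nat.card {ρ : Equiv.Perm (Fin (n+1)) //
          IsCyclic' ρ ∧ descSet ρ ∩ Finset.range (n-1) = c} :=
      Nat.card_congr (Equiv.subtypeSubtypeEquivSubtypeInter
        (fun π : Equiv.Perm (Fin (n+1)) => IsCyclic' π)
        (fun ρ : Equiv.Perm (Fin (n+1)) => descSet ρ ∩ Finset.range (n-1) = c))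
    have h2 := Stmt0Proof.fiber_eq (n := n) c
    rw [← h2] at h1
    rwa [Nat.card_eq_fintype_card, Nat.card_eq_fintype_card] at h1
  refine ⟨Equiv.ofFiberEquiv (f := fun π : {π : Equiv.Perm (Fin (n+1)) // IsCyclic' π} =>
      descSet π.1 ∩ Finset.range (n-1)) (g := fun σ : Equiv.Perm (Fin n) => descSet σ)
      (fun c => Fintype.equivOfCardEq (hfib c)), ?_⟩
  intro π
  exact (Equiv.ofFiberEquiv_map
    (f := fun π : {π : Equiv.Perm (Fin (n+1)) // IsCyclic' π} =>
      descSet π.1 ∩ Finset.range (n-1))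
    (g := fun σ : Equiv.Perm (Fin n) => descSet σ) _ π).symm
end

section
/- For every n ≥ 1 and every subset I ⊆ {1,...,n−1}, the number of cyclic permutations π of {1,...,n+1} with D(π) ∩ {1,...,n−1} = I equals the number of permutations σ of {1,...,n} with D(σ) = I. -/
open Finset Function
open Fin.NatCast Fin.CommRing

section Rank
variable {m : ℕ} (key : Fin m → ℕ)

def rnk (v : Fin m) : ℕ := (univ.filter (fun u => key u < key v)).card

lemma rnk_lt [NeZero m] (v : Fin m) : rnk key v < m := by
  have h : (univ.filter (fun u => key u < key v)) ⊂ univ := by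
    refine Finset.ssubset_univ_iff.2 ?_
    intro h
    have := h ▸ Finset.mem_univ v
    simp at this
  simpa [rnk] using Finset.card_lt_card h

variable (hinj : Injective key)

lemma rnk_mono {u v : Fin m} (h : key u < key v) : rnk key u < rnk key v := by
  apply Finset.card_lt_card
  constructor
  · intro a ha; simp only [mem_filter, mem_univ, true_and] at ha ⊢; exact ha.trans h
  · intro hs
    have := hs (Finset.mem_filter.2 ⟨mem_univ u, h⟩)
    simp at this

include hinj in
lemma rnk_iff {u v : Fin m} : key u < key v ↔ rnk key u < rnk key v := by
  constructor
  · exact rnk_mono key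
  · intro h
    rcases lt_trichotomy (key u) (key v) with h1 | h1 | h1
    · exact h1
    · exact absurd (hinj h1 ▸ h) (lt_irrefl _)
    · exact absurd (rnk_mono key h1) (Nat.not_lt.2 h.le)

include hinj in
lemma rnk_inj : Injective (rnk key) := by
  intro u v h
  rcases lt_trichotomy (key u) (key v) with h1 | h1 | h1
  · exact absurd (rnk_mono key h1) (by omega)
  · exact hinj h1
  · exact absurd (rnk_mono key h1) (by omega)

variable [NeZero m]

noncomputable def rnkEquiv : Fin m ≃ Fin m :=
  Equiv.ofBijective (fun v => ⟨rnk key v, rnk_lt key v⟩)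
    (Finite.injective_iff_bijective.1 (fun u v h => rnk_inj key hinj (by
      simpa using congrArg Fin.val h)))

lemma rnkEquiv_apply (v : Fin m) : ((rnkEquiv key hinj v : Fin m) : ℕ) = rnk key v := rfl

-- if a bijection u is an order iso wrt key, rank is given by it
omit [NeZero m] in
lemma rnk_eq_of_orderiso (u : Fin m ≃ Fin m) (h : ∀ a b : Fin m, u a < u b ↔ key a < key b)
    (j : Fin m) : rnk key j = (u j : ℕ) := by
  have : (univ.filter (fun a => key a < key j)) = (univ.filter (fun a => u a < u j)) := by
    apply Finset.filter_congr; intro a _; simp [h]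
  rw [rnk, this]
  have himg : (univ.filter (fun a => u a < u j)) = (univ.filter (fun a => a < u j)).image u.symm := by
    ext a
    simp only [mem_filter, mem_univ, true_and, Finset.mem_image]
    constructor
    · intro ha; exact ⟨u a, by simpa using ha, by simp⟩
    · rintro ⟨b, hb, rfl⟩; simpa using hb
  rw [himg, Finset.card_image_of_injective _ u.symm.injective]
  have : (univ.filter (fun a : Fin m => a < u j)) = Finset.Iio (u j) := by
    ext a; simp
  rw [this, Fin.card_Iio]

end Rank

section Heads
variable {m : ℕ} (key : Fin m → ℕ) (Lm : Fin m → ℕ) (head : Fin m → ℕ)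

lemma mono_eval (hmono : Monotone Lm) (t : ℕ) (r : Fin m)
    (hA : (univ.filter (fun p => Lm p < t)).card ≤ (r : ℕ))
    (hB : (r : ℕ) < (univ.filter (fun p => Lm p ≤ t)).card) : Lm r = t := by
  rcases lt_trichotomy (Lm r) t with h | h | h
  · exfalso
    have hsub : Finset.Iic r ⊆ univ.filter (fun p => Lm p < t) := by
      intro p hp
      simp only [Finset.mem_Iic] at hp
      exact Finset.mem_filter.2 ⟨mem_univ _, lt_of_le_of_lt (hmono hp) h⟩
    have := Finset.card_le_card hsub
    rw [Fin.card_Iic] at this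
    omega
  · exact h
  · exfalso
    have hsub : univ.filter (fun p => Lm p ≤ t) ⊆ Finset.Iio r := by
      intro p hp
      simp only [mem_filter, mem_univ, true_and] at hp
      simp only [Finset.mem_Iio]
      by_contra hc
      exact absurd (hmono (not_lt.1 hc)) (by omega)
    have := Finset.card_le_card hsub
    rw [Fin.card_Iio] at this
    omega

lemma heads_eq (hmono : Monotone Lm)
    (h1 : ∀ u v, head u < head v → key u < key v)
    (h2 : univ.val.map head = univ.val.map Lm)
    (v : Fin m) (r : Fin m) (hr : (r : ℕ) = rnk key v) : Lm r = head v := by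
  set t := head v with ht
  have cnt : ∀ (p : ℕ → Prop) [DecidablePred p],
      (univ.filter (fun x => p (head x))).card = (univ.filter (fun x => p (Lm x))).card := by
    intro p _
    have e1 : (univ.filter (fun x => p (head x))).card = Multiset.countP p (univ.val.map head) := by
      rw [Multiset.countP_map]; rfl
    have e2 : (univ.filter (fun x => p (Lm x))).card = Multiset.countP p (univ.val.map Lm) := by
      rw [Multiset.countP_map]; rfl
    rw [e1, e2, h2]
  apply mono_eval Lm hmono t r
  · rw [← cnt (fun y => y < t)]
    refine le_trans (Finset.card_le_card ?_) (le_of_eq hr.symm)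
    intro u hu
    simp only [mem_filter, mem_univ, true_and] at hu ⊢
    exact h1 _ _ hu
  · rw [← cnt (fun y => y ≤ t)]
    rw [hr]
    apply Finset.card_lt_card
    constructor
    · intro u hu
      simp only [mem_filter, mem_univ, true_and] at hu ⊢
      by_contra hc
      exact absurd (h1 _ _ (not_le.1 hc)) (by omega)
    · intro hs
      have := hs (Finset.mem_filter.2 ⟨mem_univ v, le_refl _⟩)
      simp at this
end Heads
-- letters
def Lf (J : Finset ℕ) (p : ℕ) : ℕ := (J ∩ Finset.range p).card

lemma Lf_mono (J : Finset ℕ) : Monotone (Lf J) := by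
  intro p q hpq
  exact Finset.card_le_card (Finset.inter_subset_inter_left (Finset.range_subset_range.2 hpq))

lemma Lf_le (J : Finset ℕ) (p : ℕ) : Lf J p ≤ J.card :=
  Finset.card_le_card Finset.inter_subset_left

lemma Lf_succ_mem {J : Finset ℕ} {p : ℕ} (hp : p ∈ J) : Lf J (p + 1) = Lf J p + 1 := by
  unfold Lf
  rw [Finset.range_add_one, Finset.inter_insert_of_mem hp]
  rw [Finset.card_insert_of_notMem (by simp)]

lemma Lf_succ_not_mem {J : Finset ℕ} {p : ℕ} (hp : p ∉ J) : Lf J (p + 1) = Lf J p := by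
  unfold Lf
  rw [Finset.range_add_one, Finset.inter_insert_of_notMem hp]

lemma not_mem_of_Lf_eq {J : Finset ℕ} {p : ℕ} (h : Lf J p = Lf J (p + 1)) : p ∉ J := by
  intro hp
  rw [Lf_succ_mem hp] at h
  omega

lemma mem_descSet_iff {n : ℕ} (σ : Equiv.Perm (Fin n)) (i : ℕ) :
    i ∈ descSet σ ↔ ∃ h : i + 1 < n, σ ⟨i + 1, h⟩ < σ ⟨i, Nat.lt_of_succ_lt h⟩ := by
  simp only [descSet, descSeq, Finset.mem_filter, Finset.mem_range]
  constructor
  · rintro ⟨h1, h2, h3⟩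
    exact ⟨h2, h3⟩
  · rintro ⟨h2, h3⟩
    exact ⟨by omega, h2, h3⟩

-- block monotonicity for permutations with descents in J
lemma block_mono {n : ℕ} {J : Finset ℕ} {σ : Equiv.Perm (Fin n)} (hσ : descSet σ ⊆ J) :
    ∀ p q : Fin n, (p : ℕ) < (q : ℕ) → Lf J p = Lf J q → σ p < σ q := by
  have adj : ∀ i : ℕ, ∀ h : i + 1 < n, Lf J i = Lf J (i + 1) →
      σ ⟨i, Nat.lt_of_succ_lt h⟩ < σ ⟨i + 1, h⟩ := by
    intro i h hL
    have hiJ : i ∉ J := not_mem_of_Lf_eq hL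
    have hid : i ∉ descSet σ := fun hd => hiJ (hσ hd)
    rw [mem_descSet_iff] at hid
    push_neg at hid
    have h2 := hid h
    rcases lt_or_eq_of_le h2 with h3 | h3
    · exact h3
    · exfalso
      have := σ.injective h3
      simp only [Fin.mk.injEq] at this
      omega
  have key : ∀ d : ℕ, ∀ p q : Fin n, (q : ℕ) = (p : ℕ) + d + 1 → Lf J p = Lf J q → σ p < σ q := by
    intro d
    induction d with
    | zero =>
      intro p q hq hL
      have hq1 : (p : ℕ) + 1 < n := by have := q.2; omega
      have hq' : q = ⟨(p : ℕ) + 1, hq1⟩ := by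
        apply Fin.ext; simp only [Fin.val_mk]; omega
      subst hq'
      have hL' : Lf J (p : ℕ) = Lf J ((p : ℕ) + 1) := by simpa using hL
      have := adj (p : ℕ) hq1 hL'
      have hp' : (⟨(p : ℕ), Nat.lt_of_succ_lt hq1⟩ : Fin n) = p := by
        apply Fin.ext; simp
      rwa [hp'] at this
    | succ d ih =>
      intro p q hq hL
      have hn2 := q.2
      have hmidlt : (p : ℕ) + d + 1 < n := by omega
      set mid : Fin n := ⟨(p : ℕ) + d + 1, hmidlt⟩ with hmid
      have hmv : (mid : ℕ) = (p : ℕ) + d + 1 := rfl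
      have h1 : Lf J (p : ℕ) ≤ Lf J (mid : ℕ) := Lf_mono J (by omega)
      have h2 : Lf J (mid : ℕ) ≤ Lf J (q : ℕ) := Lf_mono J (by omega)
      have e1 : Lf J (p : ℕ) = Lf J (mid : ℕ) := by omega
      have e2 : Lf J (mid : ℕ) = Lf J (q : ℕ) := by omega
      have first : σ p < σ mid := ih p mid rfl e1
      have hq1 : (mid : ℕ) + 1 < n := by omega
      have hqm : q = ⟨(mid : ℕ) + 1, hq1⟩ := by
        apply Fin.ext; simp only [Fin.val_mk]; omega
      have hL2 : Lf J (mid : ℕ) = Lf J ((mid : ℕ) + 1) := by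
        rw [e2, hqm]
      have second := adj (mid : ℕ) hq1 hL2
      have hm' : (⟨(mid : ℕ), Nat.lt_of_succ_lt hq1⟩ : Fin n) = mid := by
        apply Fin.ext; simp
      rw [hm'] at second
      rw [hqm]
      exact first.trans second
  intro p q hpq hL
  have : ∃ d, (q : ℕ) = (p : ℕ) + d + 1 := ⟨(q : ℕ) - (p : ℕ) - 1, by omega⟩
  obtain ⟨d, hd⟩ := this
  exact key d p q hd hL

section E1
variable (n : ℕ) (J : Finset ℕ)

def key1 (g : Fin n → ℕ) (v : Fin n) : ℕ := g v * (n + 1) + (v : ℕ)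

lemma key1_inj (g : Fin n → ℕ) : Injective (key1 n g) := by
  intro u v h
  unfold key1 at h
  have hu : (u : ℕ) % (n+1) = (u : ℕ) := Nat.mod_eq_of_lt (by have := u.2; omega)
  have hv : (v : ℕ) % (n+1) = (v : ℕ) := Nat.mod_eq_of_lt (by have := v.2; omega)
  have e1 : (g u * (n + 1) + (u : ℕ)) % (n + 1) = (u : ℕ) := by
    rw [Nat.add_comm, Nat.add_mul_mod_self_right]; exact hu
  have e2 : (g v * (n + 1) + (v : ℕ)) % (n + 1) = (v : ℕ) := by
    rw [Nat.add_comm, Nat.add_mul_mod_self_right]; exact hv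
  rw [h, e2] at e1
  apply Fin.ext
  omega

lemma key1_head_lt {g : Fin n → ℕ} {u v : Fin n} (h : g u < g v) :
    key1 n g u < key1 n g v := by
  unfold key1
  have h1 : (g u + 1) * (n + 1) ≤ g v * (n + 1) := Nat.mul_le_mul_right _ h
  have h2 : (g u + 1) * (n + 1) = g u * (n + 1) + (n + 1) := by ring
  have := u.2
  omega

lemma key1_lt_of_eq {g : Fin n → ℕ} {u v : Fin n} (hg : g u = g v) (h : (u : ℕ) < (v : ℕ)) :
    key1 n g u < key1 n g v := by
  unfold key1
  rw [hg]
  omega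

def Mcond (g : Fin n → ℕ) : Prop :=
  Finset.univ.val.map g = Finset.univ.val.map (fun p : Fin n => Lf J (p : ℕ))

lemma Lf_val_mono : Monotone (fun p : Fin n => Lf J (p : ℕ)) := by
  intro a b hab
  exact Lf_mono J hab

variable [NeZero n]

lemma L_rnk {g : Fin n → ℕ} (hg : Mcond n J g) (v : Fin n) :
    Lf J (rnk (key1 n g) v) = g v := by
  have := heads_eq (key1 n g) (fun p : Fin n => Lf J (p : ℕ)) g (Lf_val_mono n J)
    (fun u v h => key1_head_lt n h) hg v ⟨rnk (key1 n g) v, rnk_lt _ v⟩ rfl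
  simpa using this

noncomputable def perm1 (g : Fin n → ℕ) : Equiv.Perm (Fin n) :=
  (rnkEquiv (key1 n g) (key1_inj n g)).symm

lemma perm1_descSet {g : Fin n → ℕ} (hg : Mcond n J g) : descSet (perm1 n g) ⊆ J := by
  intro i hi
  rw [mem_descSet_iff] at hi
  obtain ⟨h, hlt⟩ := hi
  by_contra hiJ
  set R := rnkEquiv (key1 n g) (key1_inj n g) with hR
  set u := R.symm ⟨i, Nat.lt_of_succ_lt h⟩ with hu
  set u' := R.symm ⟨i + 1, h⟩ with hu'
  have hru : rnk (key1 n g) u = i := by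
    have : R u = ⟨i, Nat.lt_of_succ_lt h⟩ := R.apply_symm_apply _
    have := congrArg Fin.val this
    rwa [rnkEquiv_apply] at this
  have hru' : rnk (key1 n g) u' = i + 1 := by
    have : R u' = ⟨i + 1, h⟩ := R.apply_symm_apply _
    have := congrArg Fin.val this
    rwa [rnkEquiv_apply] at this
  have hgu : g u = Lf J i := by rw [← L_rnk n J hg u, hru]
  have hgu' : g u' = Lf J (i + 1) := by rw [← L_rnk n J hg u', hru']
  have hgeq : g u = g u' := by rw [hgu, hgu', Lf_succ_not_mem hiJ]
  have hkey : key1 n g u < key1 n g u' :=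
    (rnk_iff (key1 n g) (key1_inj n g)).2 (by omega)
  have hval : (u : ℕ) < (u' : ℕ) := by
    unfold key1 at hkey
    rw [hgeq] at hkey
    omega
  have hlt' : (u' : ℕ) < (u : ℕ) := hlt
  omega

omit [NeZero n] in
lemma word1_M (σ : Equiv.Perm (Fin n)) :
    Mcond n J (fun v => Lf J ((σ.symm v : Fin n) : ℕ)) := by
  unfold Mcond
  have hperm : Finset.univ.val.map (fun v : Fin n => σ.symm v) = Finset.univ.val := by
    rw [← Finset.image_val_of_injOn (σ.symm.injective.injOn), Finset.image_univ_equiv]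
  calc Finset.univ.val.map (fun v : Fin n => Lf J ((σ.symm v : Fin n) : ℕ))
      = (Finset.univ.val.map (fun v : Fin n => σ.symm v)).map (fun p : Fin n => Lf J (p : ℕ)) := by
        rw [Multiset.map_map]; rfl
    _ = Finset.univ.val.map (fun p : Fin n => Lf J (p : ℕ)) := by rw [hperm]

omit [NeZero n] in
lemma rnk_word1 {σ : Equiv.Perm (Fin n)} (hσ : descSet σ ⊆ J) (v : Fin n) :
    rnk (key1 n (fun v => Lf J ((σ.symm v : Fin n) : ℕ))) v = ((σ.symm v : Fin n) : ℕ) := by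
  set g := fun v : Fin n => Lf J ((σ.symm v : Fin n) : ℕ) with hgdef
  apply rnk_eq_of_orderiso (key1 n g) (σ.symm : Fin n ≃ Fin n)
  have fwd : ∀ a b : Fin n, σ.symm a < σ.symm b → key1 n g a < key1 n g b := by
    intro a b hab
    rcases eq_or_ne (g a) (g b) with he | hne
    · apply key1_lt_of_eq n he
      have := block_mono hσ (σ.symm a) (σ.symm b) hab he
      simp only [Equiv.apply_symm_apply] at this
      exact this
    · apply key1_head_lt n
      have : Lf J ((σ.symm a : Fin n) : ℕ) ≤ Lf J ((σ.symm b : Fin n) : ℕ) :=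
        Lf_mono J (le_of_lt hab)
      exact lt_of_le_of_ne this hne
  intro a b
  constructor
  · exact fwd a b
  · intro h
    rcases lt_trichotomy (σ.symm a) (σ.symm b) with h1 | h1 | h1
    · exact h1
    · exact absurd h (by rw [σ.symm.injective h1]; exact lt_irrefl _)
    · exact absurd h (by have := fwd b a h1; omega)

noncomputable def E1 : {σ : Equiv.Perm (Fin n) // descSet σ ⊆ J} ≃ {g : Fin n → ℕ // Mcond n J g} where
  toFun σ := ⟨fun v => Lf J ((σ.1.symm v : Fin n) : ℕ), word1_M n J σ.1⟩
  invFun g := ⟨perm1 n g.1, perm1_descSet n J g.2⟩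
  left_inv := by
    rintro ⟨σ, hσ⟩
    apply Subtype.ext
    apply Equiv.ext
    intro p
    show (rnkEquiv _ _).symm p = σ p
    rw [Equiv.symm_apply_eq]
    apply Fin.ext
    rw [rnkEquiv_apply, rnk_word1 n J hσ (σ p)]
    simp
  right_inv := by
    rintro ⟨g, hg⟩
    apply Subtype.ext
    funext v
    show Lf J (((perm1 n g).symm v : Fin n) : ℕ) = g v
    unfold perm1
    rw [Equiv.symm_symm, rnkEquiv_apply]
    exact L_rnk n J hg v

end E1
section E2
open Finset Function

variable (n : ℕ) (J : Finset ℕ)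

def Tt : ℕ := J.card + 1
def Bb : ℕ := J.card + 2

def L' (p : Fin (n + 1)) : ℕ := if (p : ℕ) = n then Tt J else Lf J (p : ℕ)

lemma L'_mono : Monotone (L' n J) := by
  intro p q hpq
  unfold L'
  by_cases hq : (q : ℕ) = n
  · rw [if_pos hq]
    by_cases hp : (p : ℕ) = n
    · rw [if_pos hp]
    · rw [if_neg hp]
      have := Lf_le J (p : ℕ); unfold Tt; omega
  · have hp : (p : ℕ) ≠ n := by
      have h1 : (p : ℕ) ≤ (q : ℕ) := hpq
      have := q.2; omega
    rw [if_neg hp, if_neg hq]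
    exact Lf_mono J hpq

lemma L'_eq_T_iff (p : Fin (n + 1)) : L' n J p = Tt J ↔ (p : ℕ) = n := by
  unfold L'
  split
  · simp_all
  · have := Lf_le J (p : ℕ)
    unfold Tt
    constructor
    · intro h; omega
    · intro h; simp_all

lemma L'_lt_B (p : Fin (n + 1)) : L' n J p < Bb J := by
  unfold L' Bb Tt
  split
  · omega
  · have := Lf_le J (p : ℕ); omega

-- general base-B sum bound
lemma sumB (B : ℕ) (hB : 1 ≤ B) : ∀ (m : ℕ) (f : ℕ → ℕ), (∀ i, i < m → f i < B) →
    (∑ i ∈ Finset.range m, f i * B ^ (m - 1 - i)) < B ^ m := by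
  intro m
  induction m with
  | zero => intro f _; simp
  | succ m ih =>
    intro f hf
    rw [Finset.sum_range_succ']
    have he : ∀ i ∈ Finset.range m, f (i + 1) * B ^ (m + 1 - 1 - (i + 1)) = f (i + 1) * B ^ (m - 1 - i) := by
      intro i _; congr 2; omega
    rw [Finset.sum_congr rfl he]
    have h1 : (∑ i ∈ Finset.range m, f (i + 1) * B ^ (m - 1 - i)) < B ^ m :=
      ih (fun i => f (i + 1)) (fun i hi => hf (i + 1) (by omega))
    have h2 : f 0 < B := hf 0 (by omega)
    have h3 : (m + 1 - 1 - 0) = m := by omega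
    rw [h3]
    have h4 : (f 0 + 1) * B ^ m ≤ B * B ^ m := Nat.mul_le_mul_right _ (by omega)
    have h5 : (f 0 + 1) * B ^ m = f 0 * B ^ m + B ^ m := by ring
    have h6 : B ^ (m + 1) = B * B ^ m := by ring
    omega

variable (w : Fin (n + 1) → ℕ)

def key2 (j : Fin (n + 1)) : ℕ :=
  ∑ i ∈ Finset.range (n + 1), w (j + (i : Fin (n + 1))) * Bb J ^ (n - i)

def tl (j : Fin (n + 1)) : ℕ :=
  ∑ i ∈ Finset.range n, w (j + 1 + (i : Fin (n + 1))) * Bb J ^ (n - 1 - i)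

lemma key2_decomp (j : Fin (n + 1)) : key2 n J w j = w j * Bb J ^ n + tl n J w j := by
  unfold key2 tl
  rw [Finset.sum_range_succ']
  have he : ∀ i ∈ Finset.range n,
      w (j + ((i + 1 : ℕ) : Fin (n + 1))) * Bb J ^ (n - (i + 1))
        = w (j + 1 + ((i : ℕ) : Fin (n + 1))) * Bb J ^ (n - 1 - i) := by
    intro i _
    congr 2
    · push_cast
      ring
    · omega
  rw [Finset.sum_congr rfl he]
  simp only [Nat.cast_zero, add_zero, Nat.sub_zero]
  ring

lemma key2_succ (j : Fin (n + 1)) : key2 n J w (j + 1) = Bb J * tl n J w j + w j := by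
  unfold key2 tl
  rw [Finset.sum_range_succ]
  have hlast : j + 1 + ((n : ℕ) : Fin (n + 1)) = j := by
    have h1 : (1 : Fin (n + 1)) + ((n : ℕ) : Fin (n + 1)) = 0 := by
      have h3 : ((n + 1 : ℕ) : Fin (n + 1)) = 0 := Fin.natCast_self _
      rw [← h3]; push_cast; ring
    rw [add_assoc, h1, add_zero]
  rw [hlast]
  have he : ∀ i ∈ Finset.range n,
      w (j + 1 + ((i : ℕ) : Fin (n + 1))) * Bb J ^ (n - i)
        = Bb J * (w (j + 1 + ((i : ℕ) : Fin (n + 1))) * Bb J ^ (n - 1 - i)) := by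
    intro i hi
    rw [Finset.mem_range] at hi
    have : n - i = (n - 1 - i) + 1 := by omega
    rw [this, pow_succ]
    ring
  rw [Finset.sum_congr rfl he, ← Finset.mul_sum]
  simp

variable (hw : ∀ i, w i < Bb J)

include hw in
lemma tl_lt (j : Fin (n + 1)) : tl n J w j < Bb J ^ n := by
  unfold tl
  exact sumB (Bb J) (by unfold Bb; omega) n (fun i => w (j + 1 + (i : Fin (n + 1))))
    (fun i _ => hw _)

include hw in
lemma key2_head (j : Fin (n + 1)) : key2 n J w j / Bb J ^ n = w j := by
  rw [key2_decomp]
  have hK : 0 < Bb J ^ n := pow_pos (by unfold Bb; omega) n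
  rw [Nat.add_comm, Nat.add_mul_div_right _ _ hK, Nat.div_eq_of_lt (tl_lt n J w hw j)]
  omega

include hw in
lemma key2_C1 {j j' : Fin (n + 1)} (h : w j < w j') : key2 n J w j < key2 n J w j' := by
  rw [key2_decomp, key2_decomp]
  have h1 : (w j + 1) * Bb J ^ n ≤ w j' * Bb J ^ n := Nat.mul_le_mul_right _ h
  have h2 : (w j + 1) * Bb J ^ n = w j * Bb J ^ n + Bb J ^ n := by ring
  have h3 := tl_lt n J w hw j
  omega

lemma key2_C2 {j j' : Fin (n + 1)} (h : w j = w j') :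
    key2 n J w j < key2 n J w j' ↔ key2 n J w (j + 1) < key2 n J w (j' + 1) := by
  rw [key2_decomp n J w j, key2_decomp n J w j', key2_succ, key2_succ, h]
  have hB : 0 < Bb J := by unfold Bb; omega
  constructor
  · intro hh
    have h1 : tl n J w j < tl n J w j' := by omega
    have h2 : Bb J * tl n J w j < Bb J * tl n J w j' := (mul_lt_mul_iff_right₀ hB).2 h1
    omega
  · intro hh
    have h2 : Bb J * tl n J w j < Bb J * tl n J w j' := by omega
    have h1 : tl n J w j < tl n J w j' := (mul_lt_mul_iff_right₀ hB).1 h2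
    omega

variable (hT : ∀ i, w i = Tt J ↔ i = 0)

include hw in
lemma key2_step {j j' : Fin (n + 1)} (h : key2 n J w j = key2 n J w j') :
    key2 n J w (j + 1) = key2 n J w (j' + 1) ∧ w j = w j' := by
  have hww : w j = w j' := by
    rw [← key2_head n J w hw j, ← key2_head n J w hw j', h]
  have hd1 := key2_decomp n J w j
  have hd2 := key2_decomp n J w j'
  have htl : tl n J w j = tl n J w j' := by
    rw [hww] at hd1
    omega
  constructor
  · rw [key2_succ, key2_succ, htl, hww]
  · exact hww

include hw hT in
lemma key2_inj : Function.Injective (key2 n J w) := by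
  have hiter : ∀ (k : ℕ) (j j' : Fin (n + 1)), key2 n J w j = key2 n J w j' →
      key2 n J w (j + (k : Fin (n + 1))) = key2 n J w (j' + (k : Fin (n + 1))) := by
    intro k
    induction k with
    | zero => intro j j' h; simpa using h
    | succ k ih =>
      intro j j' h
      have := (key2_step n J w hw (ih j j' h)).1
      have hc : ((k + 1 : ℕ) : Fin (n + 1)) = ((k : ℕ) : Fin (n + 1)) + 1 := by push_cast; ring
      rw [hc, ← add_assoc, ← add_assoc]
      exact this
  intro j j' h
  have hk : j + (((n + 1) - (j : ℕ) : ℕ) : Fin (n + 1)) = 0 := by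
    by_cases h0 : (j : ℕ) = 0
    · have hj : j = 0 := by apply Fin.ext; rw [Fin.val_zero]; exact h0
      subst hj
      have hc : ((n + 1 - (((0 : Fin (n + 1))) : ℕ) : ℕ) : Fin (n + 1)) = 0 := by
        rw [Fin.val_zero, Nat.sub_zero]; exact Fin.natCast_self (n + 1)
      rw [hc, add_zero]
    · have hlt : (n + 1) - (j : ℕ) < n + 1 := by have := j.2; omega
      apply Fin.ext
      have hv : Fin.val (j + (((n + 1) - (j : ℕ) : ℕ) : Fin (n + 1)))
          = ((j : ℕ) + ((((n + 1) - (j : ℕ) : ℕ) : Fin (n + 1)) : ℕ)) % (n + 1) :=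
        Fin.val_add _ _
      rw [hv, Fin.val_cast_of_lt hlt]
      have he : (j : ℕ) + ((n + 1) - (j : ℕ)) = n + 1 := by have := j.2; omega
      rw [he, Nat.mod_self, Fin.val_zero]
  have h2 := hiter ((n + 1) - (j : ℕ)) j j' h
  rw [hk] at h2
  have hw0 : w (j' + (((n + 1) - (j : ℕ) : ℕ) : Fin (n + 1))) = w 0 := by
    rw [← key2_head n J w hw, ← key2_head n J w hw, h2]
  have h0 : w 0 = Tt J := (hT 0).2 rfl
  have hz := (hT _).1 (by rw [hw0, h0])
  exact add_right_cancel (hk.trans hz.symm)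
end E2
section E2b
open Finset Function Equiv

variable (n : ℕ) (J : Finset ℕ)

def wd (g : Fin n → ℕ) (i : Fin (n + 1)) : ℕ :=
  if _ : (i : ℕ) = 0 then Tt J else g ⟨(i : ℕ) - 1, by have := i.2; omega⟩

lemma g_le_card {g : Fin n → ℕ} (hg : Mcond n J g) (v : Fin n) : g v ≤ J.card := by
  have hg' : Finset.univ.val.map g = Finset.univ.val.map (fun p : Fin n => Lf J (p : ℕ)) := hg
  have hv : g v ∈ Multiset.map g Finset.univ.val :=
    Multiset.mem_map_of_mem g (Finset.mem_univ v)
  rw [hg'] at hv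
  obtain ⟨p, _, hp⟩ := Multiset.mem_map.1 hv
  rw [← hp]
  exact Lf_le J _

lemma wd_lt {g : Fin n → ℕ} (hg : Mcond n J g) (i : Fin (n + 1)) : wd n J g i < Bb J := by
  unfold wd
  split
  · unfold Tt Bb; omega
  · have := g_le_card n J hg ⟨(i : ℕ) - 1, by have := i.2; omega⟩
    unfold Bb; omega

lemma wd_T_iff {g : Fin n → ℕ} (hg : Mcond n J g) (i : Fin (n + 1)) :
    wd n J g i = Tt J ↔ i = 0 := by
  unfold wd
  split
  case isTrue h => exact ⟨fun _ => Fin.ext (by rw [h]; rfl), fun _ => rfl⟩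
  case isFalse h =>
    constructor
    · intro he
      exfalso
      have := g_le_card n J hg ⟨(i : ℕ) - 1, by have := i.2; omega⟩
      unfold Tt at he
      omega
    · intro hi
      exact absurd (by rw [hi]; rfl) h

lemma univ_val_succ (f : Fin (n + 1) → ℕ) :
    Finset.univ.val.map f = f 0 ::ₘ Finset.univ.val.map (fun j : Fin n => f j.succ) := by
  rw [Fin.univ_succ, Finset.cons_val, Multiset.map_cons, Finset.map_val, Multiset.map_map]
  rfl

lemma univ_val_cast (f : Fin (n + 1) → ℕ) :
    Finset.univ.val.map f = f (Fin.last n) ::ₘ Finset.univ.val.map (fun j : Fin n => f j.castSucc) := by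
  rw [Fin.univ_castSuccEmb, Finset.cons_val, Multiset.map_cons, Finset.map_val, Multiset.map_map]
  rfl

lemma map_L'_univ :
    Finset.univ.val.map (L' n J) = Tt J ::ₘ Finset.univ.val.map (fun p : Fin n => Lf J (p : ℕ)) := by
  rw [univ_val_cast]
  congr 1
  · unfold L'; rw [if_pos (Fin.val_last n)]
  · apply Multiset.map_congr rfl
    intro j _
    show L' n J j.castSucc = Lf J (j : ℕ)
    unfold L'
    rw [if_neg (by rw [Fin.coe_castSucc]; have := j.2; omega), Fin.coe_castSucc]

lemma map_wd_univ (g : Fin n → ℕ) :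
    Finset.univ.val.map (wd n J g) = Tt J ::ₘ Finset.univ.val.map g := by
  rw [univ_val_succ]
  have h0 : wd n J g 0 = Tt J := by simp [wd]
  have hs : ∀ j : Fin n, wd n J g j.succ = g j := by
    intro j
    unfold wd
    rw [dif_neg (by rw [Fin.val_succ]; omega)]
    exact congrArg g (Fin.ext (by simp [Fin.val_succ]))
  rw [h0, Multiset.map_congr rfl (fun j _ => hs j)]

lemma wd_M {g : Fin n → ℕ} (hg : Mcond n J g) :
    Finset.univ.val.map (wd n J g) = Finset.univ.val.map (L' n J) := by
  rw [map_wd_univ, map_L'_univ]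
  exact congrArg (Multiset.cons (Tt J)) hg

noncomputable def R2 (g : Fin n → ℕ) (hg : Mcond n J g) : Fin (n + 1) ≃ Fin (n + 1) :=
  rnkEquiv (key2 n J (wd n J g))
    (key2_inj n J _ (wd_lt n J hg) (wd_T_iff n J hg))

noncomputable def perm2 (g : Fin n → ℕ) (hg : Mcond n J g) : Equiv.Perm (Fin (n + 1)) :=
  ((R2 n J g hg).symm.trans (Equiv.addRight (1 : Fin (n + 1)))).trans (R2 n J g hg)

lemma perm2_apply (g : Fin n → ℕ) (hg : Mcond n J g) (p : Fin (n + 1)) :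
    perm2 n J g hg p = R2 n J g hg ((R2 n J g hg).symm p + 1) := rfl

lemma perm2_R (g : Fin n → ℕ) (hg : Mcond n J g) (j : Fin (n + 1)) :
    perm2 n J g hg (R2 n J g hg j) = R2 n J g hg (j + 1) := by
  rw [perm2_apply, Equiv.symm_apply_apply]

lemma perm2_pow (g : Fin n → ℕ) (hg : Mcond n J g) (k : ℕ) : ∀ (a : Fin (n + 1)),
    (perm2 n J g hg ^ k) (R2 n J g hg a) = R2 n J g hg (a + (k : Fin (n + 1))) := by
  induction k with
  | zero => intro a; simp
  | succ k ih =>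
    intro a
    rw [pow_succ, Equiv.Perm.mul_apply, perm2_R, ih (a + 1)]
    congr 1
    push_cast
    ring

lemma perm2_cyclic (g : Fin n → ℕ) (hg : Mcond n J g) : IsCyclic' (perm2 n J g hg) := by
  intro x y
  set R := R2 n J g hg with hR
  refine ⟨(((R.symm y - R.symm x : Fin (n + 1))) : ℕ), ?_⟩
  have h1 := perm2_pow n J g hg (((R.symm y - R.symm x : Fin (n + 1))) : ℕ) (R.symm x)
  rw [Fin.cast_val_eq_self] at h1
  have h2 : R.symm x + (R.symm y - R.symm x) = R.symm y := by ring
  rw [h2] at h1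
  have h3 : R (R.symm x) = x := R.apply_symm_apply x
  have h4 : R (R.symm y) = y := R.apply_symm_apply y
  rw [h3, h4] at h1
  exact h1

lemma L'_rnk (g : Fin n → ℕ) (hg : Mcond n J g) (i : Fin (n + 1)) (r : Fin (n + 1))
    (hr : (r : ℕ) = rnk (key2 n J (wd n J g)) i) : L' n J r = wd n J g i :=
  heads_eq (key2 n J (wd n J g)) (L' n J) (wd n J g) (L'_mono n J)
    (fun _ _ h => key2_C1 n J _ (wd_lt n J hg) h) (wd_M n J hg) i r hr

lemma perm2_desc (g : Fin n → ℕ) (hg : Mcond n J g) :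
    descSet (perm2 n J g hg) ∩ Finset.range (n - 1) ⊆ J := by
  intro i hi
  rw [Finset.mem_inter, Finset.mem_range] at hi
  obtain ⟨hd, hr⟩ := hi
  by_contra hiJ
  rw [mem_descSet_iff] at hd
  obtain ⟨h, hlt⟩ := hd
  set key := key2 n J (wd n J g) with hkeydef
  have hinj : Function.Injective key :=
    key2_inj n J _ (wd_lt n J hg) (wd_T_iff n J hg)
  set R := R2 n J g hg with hRdef
  have hi1 : i < n + 1 := by omega
  set p : Fin (n + 1) := ⟨i, hi1⟩ with hp
  set q : Fin (n + 1) := ⟨i + 1, h⟩ with hq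
  set j := R.symm p with hj
  set j' := R.symm q with hj'
  have hRj : R j = p := R.apply_symm_apply p
  have hRj' : R j' = q := R.apply_symm_apply q
  have hrj : rnk key j = i := by
    have : ((R j : Fin (n + 1)) : ℕ) = rnk key j := rfl
    rw [hRj] at this
    exact this.symm
  have hrj' : rnk key j' = i + 1 := by
    have : ((R j' : Fin (n + 1)) : ℕ) = rnk key j' := rfl
    rw [hRj'] at this
    exact this.symm
  have hwj : wd n J g j = Lf J i := by
    have h1 := L'_rnk n J g hg j p (by rw [hrj])
    rw [← h1]
    unfold L'
    rw [if_neg (by show i ≠ n; omega)]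
  have hwj' : wd n J g j' = Lf J (i + 1) := by
    have h1 := L'_rnk n J g hg j' q (by rw [hrj'])
    rw [← h1]
    unfold L'
    rw [if_neg (by show i + 1 ≠ n; omega)]
  have hww : wd n J g j = wd n J g j' := by
    rw [hwj, hwj', Lf_succ_not_mem hiJ]
  have hkey : key j < key j' := (rnk_iff key hinj).2 (by omega)
  have hkey2 := (key2_C2 n J (wd n J g) hww).1 hkey
  have hrnk2 : rnk key (j + 1) < rnk key (j' + 1) := (rnk_iff key hinj).1 hkey2
  have hρp : perm2 n J g hg p = R (j + 1) := by rw [perm2_apply]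
  have hρq : perm2 n J g hg q = R (j' + 1) := by rw [perm2_apply]
  have hv1 : ((R (j + 1) : Fin (n + 1)) : ℕ) = rnk key (j + 1) := rfl
  have hv2 : ((R (j' + 1) : Fin (n + 1)) : ℕ) = rnk key (j' + 1) := rfl
  have hltv : ((perm2 n J g hg q : Fin (n + 1)) : ℕ) < ((perm2 n J g hg p : Fin (n + 1)) : ℕ) := hlt
  rw [hρp, hρq] at hltv
  omega
end E2b
section E2c
open Finset Function

variable (n : ℕ) (J : Finset ℕ)

lemma cyc_period {ρ : Equiv.Perm (Fin (n + 1))} (hρ : IsCyclic' ρ) (x : Fin (n + 1))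
    (e : ℕ) (he : 0 < e) (hee : (ρ ^ e) x = x) : n + 1 ≤ e := by
  have hfix : ∀ q : ℕ, (ρ ^ (e * q)) x = x := by
    intro q
    induction q with
    | zero => simp
    | succ q ih => rw [Nat.mul_succ, pow_add, Equiv.Perm.mul_apply, hee, ih]
  have hred : ∀ k : ℕ, (ρ ^ k) x = (ρ ^ (k % e)) x := by
    intro k
    conv_lhs => rw [← Nat.mod_add_div k e]
    rw [pow_add, Equiv.Perm.mul_apply, hfix (k / e)]
  have hsurj : Surjective (fun i : Fin e => (ρ ^ (i : ℕ)) x) := by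
    intro y
    obtain ⟨k, hk⟩ := hρ x y
    refine ⟨⟨k % e, Nat.mod_lt _ he⟩, ?_⟩
    show (ρ ^ (k % e)) x = y
    rw [← hred]
    exact hk
  have := Fintype.card_le_of_surjective _ hsurj
  simpa using this

def uu (ρ : Equiv.Perm (Fin (n + 1))) (i : Fin (n + 1)) : Fin (n + 1) :=
  (ρ ^ (i : ℕ)) (Fin.last n)

lemma uu_zero (ρ : Equiv.Perm (Fin (n + 1))) : uu n ρ 0 = Fin.last n := by
  unfold uu
  rw [Fin.val_zero, pow_zero]
  rfl

lemma uu_inj {ρ : Equiv.Perm (Fin (n + 1))} (hρ : IsCyclic' ρ) : Injective (uu n ρ) := by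
  have key : ∀ a b : Fin (n + 1), (a : ℕ) < (b : ℕ) → uu n ρ a = uu n ρ b → False := by
    intro a b hab heq
    have hd : (ρ ^ ((b : ℕ) - (a : ℕ))) (Fin.last n) = Fin.last n := by
      have h1 : (ρ ^ (b : ℕ)) (Fin.last n)
          = (ρ ^ (a : ℕ)) ((ρ ^ ((b : ℕ) - (a : ℕ))) (Fin.last n)) := by
        rw [← Equiv.Perm.mul_apply, ← pow_add]
        congr 2
        omega
      apply (ρ ^ (a : ℕ)).injective
      rw [← h1]
      exact heq.symm
    have h2 := cyc_period n hρ (Fin.last n) ((b : ℕ) - (a : ℕ)) (by omega) hd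
    have := b.2
    omega
  intro a b h
  rcases lt_trichotomy (a : ℕ) (b : ℕ) with h1 | h1 | h1
  · exact (key a b h1 h).elim
  · exact Fin.ext h1
  · exact (key b a h1 h.symm).elim

noncomputable def uuE {ρ : Equiv.Perm (Fin (n + 1))} (hρ : IsCyclic' ρ) : Fin (n + 1) ≃ Fin (n + 1) :=
  Equiv.ofBijective (uu n ρ) (Finite.injective_iff_bijective.1 (uu_inj n hρ))

lemma uuE_apply {ρ : Equiv.Perm (Fin (n + 1))} (hρ : IsCyclic' ρ) (i : Fin (n + 1)) :
    uuE n hρ i = uu n ρ i := rfl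

lemma uu_last_cycle {ρ : Equiv.Perm (Fin (n + 1))} (hρ : IsCyclic' ρ) :
    (ρ ^ (n + 1)) (Fin.last n) = Fin.last n := by
  obtain ⟨j, hj⟩ := (uuE n hρ).surjective ((ρ ^ (n + 1)) (Fin.last n))
  rw [uuE_apply] at hj
  by_cases hj0 : j = 0
  · rw [hj0, uu_zero] at hj
    exact hj.symm
  · exfalso
    have hjv : 0 < (j : ℕ) := by
      rcases Nat.eq_zero_or_pos (j : ℕ) with h | h
      · exact absurd (Fin.ext (by rw [h]; rfl)) hj0
      · exact h
    have h1 : (ρ ^ (n + 1)) (Fin.last n)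
        = (ρ ^ (j : ℕ)) ((ρ ^ ((n + 1) - (j : ℕ))) (Fin.last n)) := by
      rw [← Equiv.Perm.mul_apply, ← pow_add]
      congr 2
      have := j.2
      omega
    have h2 : (ρ ^ ((n + 1) - (j : ℕ))) (Fin.last n) = Fin.last n := by
      apply (ρ ^ (j : ℕ)).injective
      rw [← h1]
      exact hj.symm
    have h3 := cyc_period n hρ (Fin.last n) ((n + 1) - (j : ℕ)) (by have := j.2; omega) h2
    omega

lemma uu_succ {ρ : Equiv.Perm (Fin (n + 1))} (hρ : IsCyclic' ρ) (j : Fin (n + 1)) :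
    uu n ρ (j + 1) = ρ (uu n ρ j) := by
  by_cases hj : (j : ℕ) < n
  · have hv : ((j + 1 : Fin (n + 1)) : ℕ) = (j : ℕ) + 1 :=
      Fin.val_add_one_of_lt (by rw [Fin.lt_def, Fin.val_last]; exact hj)
    unfold uu
    rw [hv, pow_succ']
    rfl
  · have hjn : (j : ℕ) = n := by have := j.2; omega
    have hjl : j = Fin.last n := Fin.ext (by rw [hjn, Fin.val_last])
    have hj1 : j + 1 = 0 := by rw [hjl]; exact Fin.last_add_one n
    rw [hj1, uu_zero]
    unfold uu
    rw [hjn]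
    have : ρ ((ρ ^ n) (Fin.last n)) = (ρ ^ (n + 1)) (Fin.last n) := by
      rw [pow_succ', Equiv.Perm.mul_apply]
    rw [this, uu_last_cycle n hρ]

def wfun (ρ : Equiv.Perm (Fin (n + 1))) (i : Fin (n + 1)) : ℕ := L' n J (uu n ρ i)

lemma wfun_lt (ρ : Equiv.Perm (Fin (n + 1))) (i : Fin (n + 1)) : wfun n J ρ i < Bb J :=
  L'_lt_B n J _

lemma wfun_T_iff {ρ : Equiv.Perm (Fin (n + 1))} (hρ : IsCyclic' ρ) (i : Fin (n + 1)) :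
    wfun n J ρ i = Tt J ↔ i = 0 := by
  unfold wfun
  rw [L'_eq_T_iff]
  constructor
  · intro h
    have : uu n ρ i = Fin.last n := Fin.ext (by rw [h, Fin.val_last])
    have := uu_inj n hρ (this.trans (uu_zero n ρ).symm)
    exact this
  · intro h
    rw [h, uu_zero, Fin.val_last]

lemma block_mono2 {ρ : Equiv.Perm (Fin (n + 1))}
    (hd : descSet ρ ∩ Finset.range (n - 1) ⊆ J) :
    ∀ p q : Fin (n + 1), (p : ℕ) < (q : ℕ) → L' n J p = L' n J q → ρ p < ρ q := by
  have adj : ∀ i : ℕ, ∀ h : i + 1 < n + 1, L' n J ⟨i, Nat.lt_of_succ_lt h⟩ = L' n J ⟨i + 1, h⟩ →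
      ρ ⟨i, Nat.lt_of_succ_lt h⟩ < ρ ⟨i + 1, h⟩ := by
    intro i h hL
    have hq : i + 1 ≠ n := by
      intro hc
      have h1 : L' n J ⟨i + 1, h⟩ = Tt J := by unfold L'; rw [if_pos hc]
      have h2 : L' n J ⟨i, Nat.lt_of_succ_lt h⟩ = Tt J := by rw [hL, h1]
      rw [L'_eq_T_iff] at h2
      simp only at h2
      omega
    have hi : i + 1 < n := by omega
    have hLf : Lf J i = Lf J (i + 1) := by
      have e1 : L' n J ⟨i, Nat.lt_of_succ_lt h⟩ = Lf J i := by
        unfold L'; rw [if_neg (by simp only; omega)]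
      have e2 : L' n J ⟨i + 1, h⟩ = Lf J (i + 1) := by
        unfold L'; rw [if_neg (by simp only; omega)]
      rw [← e1, ← e2, hL]
    have hiJ : i ∉ J := not_mem_of_Lf_eq hLf
    have hids : i ∉ descSet ρ := by
      intro hds
      exact hiJ (hd (Finset.mem_inter.2 ⟨hds, Finset.mem_range.2 (by omega)⟩))
    rw [mem_descSet_iff] at hids
    push_neg at hids
    have h2 := hids h
    rcases lt_or_eq_of_le h2 with h3 | h3
    · exact h3
    · exfalso
      have := ρ.injective h3
      simp only [Fin.mk.injEq] at this
      omega
  have key : ∀ d : ℕ, ∀ p q : Fin (n + 1), (q : ℕ) = (p : ℕ) + d + 1 →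
      L' n J p = L' n J q → ρ p < ρ q := by
    intro d
    induction d with
    | zero =>
      intro p q hq hL
      have hq1 : (p : ℕ) + 1 < n + 1 := by have := q.2; omega
      have hq' : q = ⟨(p : ℕ) + 1, hq1⟩ := by
        apply Fin.ext; simp only [Fin.val_mk]; omega
      subst hq'
      have hp' : (⟨(p : ℕ), Nat.lt_of_succ_lt hq1⟩ : Fin (n + 1)) = p := by
        apply Fin.ext; simp
      have := adj (p : ℕ) hq1 (by rw [hp']; exact hL)
      rwa [hp'] at this
    | succ d ih =>
      intro p q hq hL
      have hn2 := q.2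
      have hmidlt : (p : ℕ) + d + 1 < n + 1 := by omega
      set mid : Fin (n + 1) := ⟨(p : ℕ) + d + 1, hmidlt⟩ with hmid
      have h1 : L' n J p ≤ L' n J mid := L'_mono n J (by rw [Fin.le_def]; show (p : ℕ) ≤ (p : ℕ) + d + 1; omega)
      have h2 : L' n J mid ≤ L' n J q := L'_mono n J (by rw [Fin.le_def]; show (p : ℕ) + d + 1 ≤ (q : ℕ); omega)
      have e1 : L' n J p = L' n J mid := by omega
      have e2 : L' n J mid = L' n J q := by omega
      have first : ρ p < ρ mid := ih p mid rfl e1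
      have hq1 : (mid : ℕ) + 1 < n + 1 := by simp only [hmid, Fin.val_mk]; omega
      have hqm : q = ⟨(mid : ℕ) + 1, hq1⟩ := by
        apply Fin.ext; simp only [Fin.val_mk, hmid]; omega
      have hm' : (⟨(mid : ℕ), Nat.lt_of_succ_lt hq1⟩ : Fin (n + 1)) = mid := by
        apply Fin.ext; simp
      have second := adj (mid : ℕ) hq1 (by rw [hm', ← hqm]; exact e2)
      rw [hm', ← hqm] at second
      exact first.trans second
  intro p q hpq hL
  obtain ⟨d, hd2⟩ : ∃ d, (q : ℕ) = (p : ℕ) + d + 1 := ⟨(q : ℕ) - (p : ℕ) - 1, by omega⟩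
  exact key d p q hd2 hL

lemma uu_key_lt {ρ : Equiv.Perm (Fin (n + 1))} (hρ : IsCyclic' ρ)
    (hd : descSet ρ ∩ Finset.range (n - 1) ⊆ J) :
    ∀ (m : ℕ) (j j' : Fin (n + 1)), j ≠ j' → (n + 1) - (j : ℕ) ≤ m →
      uu n ρ j < uu n ρ j' → key2 n J (wfun n J ρ) j < key2 n J (wfun n J ρ) j' := by
  intro m
  induction m with
  | zero =>
    intro j j' _ hm _
    exfalso
    have := j.2
    omega
  | succ m ih =>
    intro j j' hne hm hu
    rcases eq_or_ne (wfun n J ρ j) (wfun n J ρ j') with heq | hnew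
    · have hj0 : j ≠ 0 := by
        intro hc
        subst hc
        have h1 : wfun n J ρ 0 = Tt J := (wfun_T_iff n J hρ 0).2 rfl
        have h2 : wfun n J ρ j' = Tt J := by rw [← heq, h1]
        exact hne ((wfun_T_iff n J hρ j').1 h2).symm
      have hustep : uu n ρ (j + 1) < uu n ρ (j' + 1) := by
        rw [uu_succ n hρ, uu_succ n hρ]
        exact block_mono2 n J hd (uu n ρ j) (uu n ρ j') hu heq
      have hjlast : (j : ℕ) < n := by
        by_contra hc
        have hjv : (j : ℕ) = n := by have := j.2; omega
        have hjl : j = Fin.last n := Fin.ext (by rw [hjv, Fin.val_last])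
        have h1 : j + 1 = 0 := by rw [hjl]; exact Fin.last_add_one n
        rw [h1, uu_zero] at hustep
        exact absurd hustep (not_lt.2 (Fin.le_last _))
      have hne2 : j + 1 ≠ j' + 1 := fun hc => hne (add_right_cancel hc)
      have hv1 : ((j + 1 : Fin (n + 1)) : ℕ) = (j : ℕ) + 1 :=
        Fin.val_add_one_of_lt (by rw [Fin.lt_def, Fin.val_last]; exact hjlast)
      have hm2 : (n + 1) - ((j + 1 : Fin (n + 1)) : ℕ) ≤ m := by rw [hv1]; omega
      have hk2 := ih (j + 1) (j' + 1) hne2 hm2 hustep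
      exact (key2_C2 n J (wfun n J ρ) heq).2 hk2
    · have hlt : L' n J (uu n ρ j) < L' n J (uu n ρ j') :=
        lt_of_le_of_ne (L'_mono n J (le_of_lt hu)) hnew
      exact key2_C1 n J _ (wfun_lt n J ρ) hlt

lemma uu_rnk {ρ : Equiv.Perm (Fin (n + 1))} (hρ : IsCyclic' ρ)
    (hd : descSet ρ ∩ Finset.range (n - 1) ⊆ J) (j : Fin (n + 1)) :
    rnk (key2 n J (wfun n J ρ)) j = ((uu n ρ j : Fin (n + 1)) : ℕ) := by
  have fwd : ∀ a b : Fin (n + 1), uu n ρ a < uu n ρ b →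
      key2 n J (wfun n J ρ) a < key2 n J (wfun n J ρ) b := by
    intro a b h
    have hne : a ≠ b := by
      intro hc; subst hc; exact absurd h (lt_irrefl _)
    exact uu_key_lt n J hρ hd (n + 1) a b hne (by omega) h
  have hiff : ∀ a b : Fin (n + 1), uuE n hρ a < uuE n hρ b ↔
      key2 n J (wfun n J ρ) a < key2 n J (wfun n J ρ) b := by
    intro a b
    rw [uuE_apply, uuE_apply]
    constructor
    · exact fwd a b
    · intro h
      rcases lt_trichotomy (uu n ρ a) (uu n ρ b) with h1 | h1 | h1
      · exact h1
      · exfalso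
        have : a = b := uu_inj n hρ h1
        subst this
        exact absurd h (lt_irrefl _)
      · exact absurd h (by have := fwd b a h1; omega)
  exact rnk_eq_of_orderiso _ (uuE n hρ) hiff j

def fwd2 (ρ : Equiv.Perm (Fin (n + 1))) : Fin n → ℕ :=
  fun j => L' n J ((ρ ^ ((j : ℕ) + 1)) (Fin.last n))

lemma fwd2_eq_wfun (ρ : Equiv.Perm (Fin (n + 1))) (j : Fin n) :
    fwd2 n J ρ j = wfun n J ρ j.succ := by
  unfold fwd2 wfun uu
  rw [Fin.val_succ]

lemma erase_last_image :
    Finset.univ.image (Fin.castSucc : Fin n → Fin (n + 1)) = Finset.univ.erase (Fin.last n) := by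
  apply Finset.eq_of_subset_of_card_le
  · intro x hx
    obtain ⟨j, _, rfl⟩ := Finset.mem_image.1 hx
    exact Finset.mem_erase.2 ⟨(Fin.castSucc_lt_last j).ne, Finset.mem_univ _⟩
  · rw [Finset.card_erase_of_mem (Finset.mem_univ _),
      Finset.card_image_of_injective _ (Fin.castSucc_injective n)]
    simp

lemma map_L'_erase :
    ((Finset.univ.erase (Fin.last n)).val.map (L' n J))
      = Finset.univ.val.map (fun p : Fin n => Lf J (p : ℕ)) := by
  rw [← erase_last_image, Finset.image_val_of_injOn ((Fin.castSucc_injective n).injOn),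
    Multiset.map_map]
  apply Multiset.map_congr rfl
  intro j _
  show L' n J j.castSucc = Lf J (j : ℕ)
  unfold L'
  rw [if_neg (by rw [Fin.coe_castSucc]; have := j.2; omega), Fin.coe_castSucc]

lemma fwd2_M {ρ : Equiv.Perm (Fin (n + 1))} (hρ : IsCyclic' ρ) : Mcond n J (fwd2 n J ρ) := by
  show Finset.univ.val.map (fwd2 n J ρ) = _
  have e1 : Finset.univ.val.map (fwd2 n J ρ)
      = Finset.univ.val.map (fun j : Fin n => L' n J (uu n ρ j.succ)) :=
    Multiset.map_congr rfl (fun j _ => fwd2_eq_wfun n J ρ j)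
  have hinj2 : Injective (fun j : Fin n => uu n ρ j.succ) :=
    (uu_inj n hρ).comp (Fin.succ_injective n)
  have himg : Finset.univ.image (fun j : Fin n => uu n ρ j.succ)
      = Finset.univ.erase (Fin.last n) := by
    apply Finset.eq_of_subset_of_card_le
    · intro x hx
      obtain ⟨j, _, rfl⟩ := Finset.mem_image.1 hx
      refine Finset.mem_erase.2 ⟨?_, Finset.mem_univ _⟩
      intro hc
      have := uu_inj n hρ (hc.trans (uu_zero n ρ).symm)
      exact (Fin.succ_ne_zero j) this
    · rw [Finset.card_erase_of_mem (Finset.mem_univ _),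
        Finset.card_image_of_injective _ hinj2]
      simp
  have e2 : Finset.univ.val.map (fun j : Fin n => L' n J (uu n ρ j.succ))
      = (Finset.univ.val.map (fun j : Fin n => uu n ρ j.succ)).map (L' n J) := by
    rw [Multiset.map_map]
    rfl
  have e3 : Finset.univ.val.map (fun j : Fin n => uu n ρ j.succ)
      = (Finset.univ.erase (Fin.last n)).val := by
    rw [← himg, Finset.image_val_of_injOn hinj2.injOn]
  rw [e1, e2, e3, map_L'_erase]

end E2c
section E2d
open Finset Function

variable (n : ℕ) (J : Finset ℕ)

lemma R2_zero (g : Fin n → ℕ) (hg : Mcond n J g) : R2 n J g hg 0 = Fin.last n := by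
  apply Fin.ext
  have hv : ((R2 n J g hg 0 : Fin (n + 1)) : ℕ) = rnk (key2 n J (wd n J g)) 0 := rfl
  rw [hv, Fin.val_last]
  have hfil : Finset.univ.filter (fun u => key2 n J (wd n J g) u < key2 n J (wd n J g) 0)
      = Finset.univ.erase 0 := by
    ext a
    simp only [Finset.mem_filter, Finset.mem_univ, true_and, Finset.mem_erase, and_true]
    constructor
    · intro h
      intro hc
      subst hc
      exact absurd h (lt_irrefl _)
    · intro h
      apply key2_C1 n J _ (wd_lt n J hg)
      have h0 : wd n J g 0 = Tt J := (wd_T_iff n J hg 0).2 rfl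
      have ha : wd n J g a ≠ Tt J := fun hc => h ((wd_T_iff n J hg a).1 hc)
      have hle : wd n J g a ≤ J.card + 1 := by
        unfold wd
        split
        · unfold Tt; omega
        · have := g_le_card n J hg ⟨(a : ℕ) - 1, by have := a.2; omega⟩; omega
      rw [h0]
      unfold Tt at *
      omega
  rw [rnk, hfil, Finset.card_erase_of_mem (Finset.mem_univ _)]
  simp

lemma E2_right (g : Fin n → ℕ) (hg : Mcond n J g) : fwd2 n J (perm2 n J g hg) = g := by
  funext j
  unfold fwd2
  have h1 : (perm2 n J g hg ^ ((j : ℕ) + 1)) (Fin.last n)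
      = R2 n J g hg (0 + ((((j : ℕ) + 1 : ℕ)) : Fin (n + 1))) := by
    rw [← R2_zero n J g hg, perm2_pow]
  rw [h1, zero_add]
  have hlt : (j : ℕ) + 1 < n + 1 := by have := j.2; omega
  have hc : (((((j : ℕ) + 1 : ℕ)) : Fin (n + 1)) : ℕ) = (j : ℕ) + 1 := Fin.val_cast_of_lt hlt
  have h2 := L'_rnk n J g hg ((((j : ℕ) + 1 : ℕ)) : Fin (n + 1))
    (R2 n J g hg ((((j : ℕ) + 1 : ℕ)) : Fin (n + 1))) rfl
  rw [h2]
  unfold wd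
  rw [dif_neg (by rw [hc]; omega)]
  exact congrArg g (Fin.ext (by simp only [Fin.val_mk]; rw [hc]; omega))

lemma E2_left {ρ : Equiv.Perm (Fin (n + 1))} (hρ : IsCyclic' ρ)
    (hd : descSet ρ ∩ Finset.range (n - 1) ⊆ J) (hg : Mcond n J (fwd2 n J ρ)) :
    perm2 n J (fwd2 n J ρ) hg = ρ := by
  have hwd : wd n J (fwd2 n J ρ) = wfun n J ρ := by
    funext i
    unfold wd
    split
    case isTrue h =>
      have hi : i = 0 := Fin.ext (by rw [h]; rfl)
      subst hi
      rw [(wfun_T_iff n J hρ 0).2 rfl]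
    case isFalse h =>
      rw [fwd2_eq_wfun]
      congr 1
      apply Fin.ext
      rw [Fin.val_succ]
      simp only [Fin.val_mk]
      omega
  apply Equiv.ext
  intro p
  rw [perm2_apply]
  set R := R2 n J (fwd2 n J ρ) hg with hR
  have hRu : ∀ j : Fin (n + 1), R j = uuE n hρ j := by
    intro j
    apply Fin.ext
    have hv : ((R j : Fin (n + 1)) : ℕ) = rnk (key2 n J (wd n J (fwd2 n J ρ))) j := rfl
    rw [hv, hwd, uu_rnk n J hρ hd j]
    rfl
  have hRsymm : R.symm p = (uuE n hρ).symm p := by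
    apply (uuE n hρ).injective
    rw [← hRu (R.symm p), R.apply_symm_apply, Equiv.apply_symm_apply]
  rw [hRu, hRsymm]
  rw [uuE_apply, uu_succ n hρ]
  have : uu n ρ ((uuE n hρ).symm p) = uuE n hρ ((uuE n hρ).symm p) := rfl
  rw [this, Equiv.apply_symm_apply]

noncomputable def E2 :
    {ρ : Equiv.Perm (Fin (n + 1)) // IsCyclic' ρ ∧ descSet ρ ∩ Finset.range (n - 1) ⊆ J}
      ≃ {g : Fin n → ℕ // Mcond n J g} where
  toFun ρ := ⟨fwd2 n J ρ.1, fwd2_M n J ρ.2.1⟩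
  invFun g := ⟨perm2 n J g.1 g.2, perm2_cyclic n J g.1 g.2, perm2_desc n J g.1 g.2⟩
  left_inv := by
    rintro ⟨ρ, hρ, hd⟩
    exact Subtype.ext (E2_left n J hρ hd _)
  right_inv := by
    rintro ⟨g, hg⟩
    exact Subtype.ext (E2_right n J g hg)

end E2d
section Final
open Finset Function

lemma subset_count (n : ℕ) [NeZero n] (J : Finset ℕ) :
    Nat.card {ρ : Equiv.Perm (Fin (n + 1)) // IsCyclic' ρ ∧ descSet ρ ∩ Finset.range (n - 1) ⊆ J}
      = Nat.card {σ : Equiv.Perm (Fin n) // descSet σ ⊆ J} := by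
  rw [Nat.card_congr (E2 n J), ← Nat.card_congr (E1 n J)]

lemma moebius_aux (R : Finset ℕ) (f h : Finset ℕ → ℕ)
    (heq : ∀ K ⊆ R, ∑ I ∈ K.powerset, f I = ∑ I ∈ K.powerset, h I) :
    ∀ K, K ⊆ R → f K = h K := by
  intro K
  induction K using Finset.strongInductionOn with
  | _ K ih =>
    intro hK
    have h1 := heq K hK
    have h2 : ∀ I ∈ K.powerset.erase K, f I = h I := by
      intro I hI
      rw [Finset.mem_erase, Finset.mem_powerset] at hI
      exact ih I (Finset.ssubset_iff_subset_ne.2 ⟨hI.2, hI.1⟩) (hI.2.trans hK)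
    have h3 : ∑ I ∈ K.powerset.erase K, f I = ∑ I ∈ K.powerset.erase K, h I :=
      Finset.sum_congr rfl h2
    rw [← Finset.sum_erase_add _ f (Finset.mem_powerset_self K),
      ← Finset.sum_erase_add _ h (Finset.mem_powerset_self K), h3] at h1
    exact Nat.add_left_cancel h1

lemma sum_counts_gen {α : Type*} [Fintype α] (P : α → Prop) (Q : α → Finset ℕ) (K : Finset ℕ) :
    Nat.card {a // P a ∧ Q a ⊆ K} = ∑ I ∈ K.powerset, Nat.card {a // P a ∧ Q a = I} := by
  classical
  set f : {a // P a ∧ Q a ⊆ K} → {I // I ∈ K.powerset} :=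
    fun x => ⟨Q x.1, Finset.mem_powerset.2 x.2.2⟩ with hf
  have e2 : ∀ I : {I // I ∈ K.powerset},
      {x : {a // P a ∧ Q a ⊆ K} // f x = I} ≃ {a // P a ∧ Q a = I.1} := by
    intro I
    refine
      { toFun := fun x => ⟨x.1.1, x.1.2.1, ?_⟩
        invFun := fun a => ⟨⟨a.1, a.2.1, by rw [a.2.2]; exact Finset.mem_powerset.1 I.2⟩,
          Subtype.ext a.2.2⟩
        left_inv := fun x => by apply Subtype.ext; apply Subtype.ext; rfl
        right_inv := fun a => by apply Subtype.ext; rfl }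
    exact congrArg Subtype.val x.2
  have e : {a // P a ∧ Q a ⊆ K} ≃ (I : {I // I ∈ K.powerset}) × {a // P a ∧ Q a = I.1} :=
    (Equiv.sigmaFiberEquiv f).symm.trans (Equiv.sigmaCongrRight e2)
  rw [Nat.card_congr e, Nat.card_eq_fintype_card, Fintype.card_sigma,
    ← Finset.sum_coe_sort K.powerset (fun I => Nat.card {a // P a ∧ Q a = I})]
  apply Finset.sum_congr rfl
  intro i _
  exact (Nat.card_eq_fintype_card).symm

lemma sum_counts_cyc (n : ℕ) (K : Finset ℕ) :
    Nat.card {ρ : Equiv.Perm (Fin (n + 1)) //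
        IsCyclic' ρ ∧ descSet ρ ∩ Finset.range (n - 1) ⊆ K}
      = ∑ I ∈ K.powerset, Nat.card {ρ : Equiv.Perm (Fin (n + 1)) //
          IsCyclic' ρ ∧ descSet ρ ∩ Finset.range (n - 1) = I} :=
  sum_counts_gen IsCyclic' (fun ρ => descSet ρ ∩ Finset.range (n - 1)) K

lemma sum_counts_perm (n : ℕ) (K : Finset ℕ) :
    Nat.card {σ : Equiv.Perm (Fin n) // descSet σ ⊆ K}
      = ∑ I ∈ K.powerset, Nat.card {σ : Equiv.Perm (Fin n) // descSet σ = I} := by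
  have h1 := sum_counts_gen (fun _ : Equiv.Perm (Fin n) => True) (fun σ => descSet σ) K
  have e1 : {σ : Equiv.Perm (Fin n) // descSet σ ⊆ K}
      ≃ {σ : Equiv.Perm (Fin n) // True ∧ descSet σ ⊆ K} :=
    { toFun := fun x => ⟨x.1, trivial, x.2⟩
      invFun := fun x => ⟨x.1, x.2.2⟩
      left_inv := fun x => rfl
      right_inv := fun x => rfl }
  rw [Nat.card_congr e1, h1]
  apply Finset.sum_congr rfl
  intro I _
  apply Nat.card_congr
  exact { toFun := fun x => ⟨x.1, x.2.2⟩
          invFun := fun x => ⟨x.1, trivial, x.2⟩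
          left_inv := fun x => rfl
          right_inv := fun x => rfl }

end Final

theorem stmt1 (n : ℕ) (hn : 1 ≤ n) (I : Finset ℕ) (hI : I ⊆ Finset.range (n - 1)) :
    Nat.card {π : Equiv.Perm (Fin (n + 1)) //
        IsCyclic' π ∧ descSet π ∩ Finset.range (n - 1) = I}
      = Nat.card {σ : Equiv.Perm (Fin n) // descSet σ = I} := by
  haveI : NeZero n := ⟨by omega⟩
  have key : ∀ K, K ⊆ Finset.range (n - 1) →
      (∑ I' ∈ K.powerset, Nat.card {ρ : Equiv.Perm (Fin (n + 1)) //
          IsCyclic' ρ ∧ descSet ρ ∩ Finset.range (n - 1) = I'})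
        = ∑ I' ∈ K.powerset, Nat.card {σ : Equiv.Perm (Fin n) // descSet σ = I'} := by
    intro K _
    rw [← sum_counts_cyc n K, ← sum_counts_perm n K]
    exact subset_count n K
  exact moebius_aux (Finset.range (n - 1)) _ _ key I hI
end

section
/- For every n ≥ 1 and every subset I ⊆ {1,...,n−1}, the number of cyclic permutations π of {1,...,n+1} with D(π) ∩ {1,...,n−1} ⊆ I equals the number of permutations σ of {1,...,n} with D(σ) ⊆ I. -/
namespace GRbij

open Finset Function Equiv

noncomputable instance lexLO (m : ℕ) : LinearOrder (Lex (Fin m → ℕ)) :=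
  @Pi.Lex.linearOrder _ _ _ (inferInstance : WellFoundedLT (Fin m)) _

/-! ### Generic sorting lemmas -/

lemma sorted_unique {m : ℕ} {f g : Fin m → ℕ} (hf : Monotone f) (hg : Monotone g)
    (h : Multiset.map f Finset.univ.val = Multiset.map g Finset.univ.val) : f = g := by
  apply List.ofFn_injective
  refine List.Perm.eq_of_sortedLE hf.sortedLE_ofFn hg.sortedLE_ofFn ?_
  rw [← Multiset.coe_eq_coe, ← Fin.univ_val_map, ← Fin.univ_val_map]
  exact h

lemma eq_sort_of_strictMono {m : ℕ} {α : Type*} [LinearOrder α] {f : Fin m → α}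
    {τ : Equiv.Perm (Fin m)} (h : StrictMono (f ∘ τ)) : τ = Tuple.sort f :=
  Tuple.eq_sort_iff.2 ⟨h.monotone, fun i j hij hfe => absurd hfe (h hij).ne⟩

lemma strictMono_comp_sort {m : ℕ} {α : Type*} [LinearOrder α] {f : Fin m → α}
    (hf : Injective f) : StrictMono (f ∘ Tuple.sort f) := by
  intro i j hij
  refine lt_of_le_of_ne (Tuple.monotone_sort f hij.le) ?_
  intro he
  exact hij.ne ((Tuple.sort f).injective (hf he))

lemma lex_le_apply_zero {m : ℕ} {w w' : Fin (m+1) → ℕ} (h : toLex w ≤ toLex w') :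
    w 0 ≤ w' 0 := by
  rcases eq_or_lt_of_le h with he | hlt
  · exact le_of_eq (congrFun (toLex_inj.mp he) 0)
  · obtain ⟨i, hj, hi⟩ : ∃ i, (∀ j, j < i → w j = w' j) ∧ w i < w' i := hlt
    rcases eq_or_ne i 0 with rfl | h0
    · exact hi.le
    · exact (hj 0 (Fin.pos_of_ne_zero h0)).le

/-! ### Chain lemma -/

lemma chain_lt {m : ℕ} {g : Fin m → Fin m} {β : Fin m → ℕ}
    (hmono : Monotone β)
    (hstep : ∀ (i : ℕ) (h : i + 1 < m),
      β ⟨i, Nat.lt_of_succ_lt h⟩ = β ⟨i+1, h⟩ → g ⟨i, Nat.lt_of_succ_lt h⟩ < g ⟨i+1, h⟩)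
    {p q : Fin m} (hpq : p < q) (hβ : β p = β q) : g p < g q := by
  have hstep' : ∀ (r : Fin m) (h1 : (r : ℕ) + 1 < m),
      β r = β ⟨(r : ℕ) + 1, h1⟩ → g r < g ⟨(r : ℕ) + 1, h1⟩ := by
    intro r h1 hb
    have := hstep (r : ℕ) h1 (by simpa using hb)
    simpa using this
  obtain ⟨d, hd⟩ : ∃ d, (q : ℕ) = (p : ℕ) + d + 1 := ⟨(q : ℕ) - (p : ℕ) - 1, by omega⟩
  clear hpq
  induction d generalizing q with
  | zero =>
    have h1 : (p : ℕ) + 1 < m := hd ▸ q.isLt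
    have hq : q = ⟨(p : ℕ) + 1, h1⟩ := Fin.ext (by simp; omega)
    rw [hq] at hβ ⊢
    exact hstep' p h1 hβ
  | succ d ih =>
    have hrm : (p : ℕ) + d + 1 < m := by have := q.isLt; omega
    set r : Fin m := ⟨(p : ℕ) + d + 1, hrm⟩ with hr
    have hpr : p ≤ r := by rw [Fin.le_def]; simp [hr]; omega
    have hrq : r ≤ q := by rw [Fin.le_def]; simp [hr]; omega
    have hβr : β p = β r := le_antisymm (hmono hpr) (hβ ▸ hmono hrq)
    refine lt_trans (ih (q := r) hβr rfl) ?_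
    have h1 : (r : ℕ) + 1 < m := by have := q.isLt; simp only [hr]; omega
    have hq : q = ⟨(r : ℕ) + 1, h1⟩ := Fin.ext (by simp [hr]; omega)
    rw [hq]
    exact hstep' r h1 (by rw [← hβr, hβ, hq])

/-! ### Block functions -/

def bf (I : Finset ℕ) (i : ℕ) : ℕ := (I.filter (fun s => s < i)).card

lemma bf_mono (I : Finset ℕ) : Monotone (bf I) := fun i j hij =>
  Finset.card_le_card (fun x hx => Finset.mem_filter.mpr
    ⟨(Finset.mem_filter.mp hx).1, lt_of_lt_of_le (Finset.mem_filter.mp hx).2 hij⟩)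

lemma bf_lt_n {n : ℕ} {I : Finset ℕ} (hI : I ⊆ Finset.range (n - 1)) (hn : 1 ≤ n) (i : ℕ) :
    bf I i < n := by
  have h1 : bf I i ≤ I.card := Finset.card_le_card (Finset.filter_subset _ _)
  have h2 : I.card ≤ (Finset.range (n-1)).card := Finset.card_le_card hI
  rw [Finset.card_range] at h2
  omega

lemma bf_succ_eq {I : Finset ℕ} {i : ℕ} (h : i ∉ I) : bf I (i+1) = bf I i := by
  unfold bf
  congr 1
  apply Finset.filter_congr
  intro s hs
  constructor
  · intro hlt
    rcases Nat.lt_succ_iff_lt_or_eq.mp hlt with h' | rfl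
    · exact h'
    · exact absurd hs h
  · intro h'; omega

lemma bf_lt_succ {I : Finset ℕ} {i : ℕ} (h : i ∈ I) : bf I i < bf I (i+1) := by
  apply Finset.card_lt_card
  constructor
  · exact fun x hx => Finset.mem_filter.mpr
      ⟨(Finset.mem_filter.mp hx).1, by have := (Finset.mem_filter.mp hx).2; omega⟩
  · intro hsub
    have : i ∈ I.filter (fun s => s < i + 1) := Finset.mem_filter.mpr ⟨h, by omega⟩
    have := hsub this
    simp only [Finset.mem_filter] at this
    omega

lemma not_mem_of_bf_eq {I : Finset ℕ} {i : ℕ} (h : bf I i = bf I (i+1)) : i ∉ I :=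
  fun hm => absurd h (bf_lt_succ hm).ne

def bl (n : ℕ) (I : Finset ℕ) (p : Fin (n+1)) : ℕ := if (p : ℕ) = n then n else bf I p

lemma bl_last (n : ℕ) (I : Finset ℕ) : bl n I (Fin.last n) = n := if_pos rfl

lemma bl_castSucc (n : ℕ) (I : Finset ℕ) (v : Fin n) : bl n I v.castSucc = bf I v := by
  unfold bl
  rw [if_neg (by simp only [Fin.coe_castSucc]; exact v.isLt.ne)]
  simp

lemma bl_le {n : ℕ} {I : Finset ℕ} (hI : I ⊆ Finset.range (n - 1)) (hn : 1 ≤ n)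
    (p : Fin (n+1)) : bl n I p ≤ n := by
  unfold bl; split_ifs
  · exact le_refl n
  · exact (bf_lt_n hI hn _).le

lemma bl_eq_n_iff {n : ℕ} {I : Finset ℕ} (hI : I ⊆ Finset.range (n - 1)) (hn : 1 ≤ n)
    (p : Fin (n+1)) : bl n I p = n ↔ p = Fin.last n := by
  unfold bl; split_ifs with h
  · simp [Fin.ext_iff, h]
  · simp only [Fin.ext_iff, Fin.val_last]
    exact ⟨fun hh => absurd hh (bf_lt_n hI hn _).ne, fun hh => absurd hh h⟩

lemma bl_mono {n : ℕ} {I : Finset ℕ} (hI : I ⊆ Finset.range (n - 1)) (hn : 1 ≤ n) :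
    Monotone (bl n I) := by
  intro p q hpq
  have hle := Fin.le_def.mp hpq
  have hq2 : (q : ℕ) ≤ n := Nat.lt_succ_iff.mp q.isLt
  unfold bl
  split_ifs with hp hq hq
  · exact le_refl n
  · omega
  · exact (bf_lt_n hI hn _).le
  · exact bf_mono I hle

/-! ### Orbit lemmas for cyclic permutations -/

section Orbit

variable {n : ℕ} {π : Equiv.Perm (Fin (n+1))} (hc : IsCyclic' π)
include hc

lemma pow_fix_eq_one (d : ℕ) (z : Fin (n+1)) (h : (π^d) z = z) : π^d = 1 := by
  apply Equiv.ext
  intro y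
  rw [Equiv.Perm.one_apply]
  obtain ⟨k, hk⟩ := hc z y
  have hcomm : π^d * π^k = π^k * π^d := by rw [← pow_add, Nat.add_comm d k, pow_add]
  calc (π^d) y = (π^d) ((π^k) z) := by rw [hk]
    _ = ((π^d) * (π^k)) z := rfl
    _ = ((π^k) * (π^d)) z := by rw [hcomm]
    _ = (π^k) z := by rw [Equiv.Perm.mul_apply, h]
    _ = y := hk
  
lemma pow_ne_one (d : ℕ) (h1 : 1 ≤ d) (h2 : d ≤ n) : π ^ d ≠ 1 := by
  intro h
  have hsurj : Function.Surjective (fun k : Fin d => (π^(k:ℕ)) (Fin.last n)) := by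
    intro y
    obtain ⟨k, hk⟩ := hc (Fin.last n) y
    refine ⟨⟨k % d, Nat.mod_lt _ h1⟩, ?_⟩
    simp only []
    rw [← hk]
    conv_rhs => rw [show k = d * (k / d) + k % d from (Nat.div_add_mod k d).symm]
    rw [pow_add, pow_mul, h, one_pow, one_mul]
  have := Fintype.card_le_of_surjective _ hsurj
  simp only [Fintype.card_fin] at this
  omega

lemma orbit_inj {z : Fin (n+1)} {s t : ℕ} (hs : s ≤ n) (ht : t ≤ n)
    (h : (π^s) z = (π^t) z) : s = t := by
  have key : ∀ a b : ℕ, a < b → b ≤ n → (π^a) z = (π^b) z → False := by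
    intro a b hab hbn he
    have : (π^(b-a)) ((π^a) z) = (π^a) z := by
      rw [← Equiv.Perm.mul_apply, ← pow_add]
      rw [show b - a + a = b by omega]
      exact he.symm
    have h1 := pow_fix_eq_one hc (b-a) _ this
    exact pow_ne_one hc (b-a) (by omega) (by omega) h1
  rcases lt_trichotomy s t with hlt | heq | hgt
  · exact absurd (key s t hlt ht h) (fun he => he)
  · exact heq
  · exact absurd (key t s hgt hs h.symm) (fun he => he)

lemma pow_card_eq_one : π ^ (n+1) = 1 := by
  have hinj : Function.Injective (fun t : Fin (n+1) => (π^(t:ℕ)) (Fin.last n)) := by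
    intro a b hab
    exact Fin.ext (orbit_inj hc (Nat.lt_succ_iff.mp a.isLt) (Nat.lt_succ_iff.mp b.isLt) hab)
  have hsurj := (Finite.injective_iff_bijective.mp hinj).2
  obtain ⟨t, ht⟩ := hsurj ((π^(n+1)) (Fin.last n))
  simp only [] at ht
  rcases Nat.eq_zero_or_pos (t : ℕ) with h0 | hpos
  · apply pow_fix_eq_one hc (n+1) (Fin.last n)
    rw [← ht, h0, pow_zero]
    rfl
  · exfalso
    have hw : (π^(n+1-(t:ℕ))) ((π^(t:ℕ)) (Fin.last n)) = (π^(t:ℕ)) (Fin.last n) := by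
      rw [← Equiv.Perm.mul_apply, ← pow_add]
      rw [show n + 1 - (t:ℕ) + (t:ℕ) = n + 1 by have := t.isLt; omega]
      rw [ht]
    have h1 := pow_fix_eq_one hc _ _ hw
    exact pow_ne_one hc _ (by have := t.isLt; omega) (by omega) h1

lemma pow_mod_card (k : ℕ) : π ^ k = π ^ (k % (n+1)) := by
  conv_lhs => rw [show k = (n+1) * (k / (n+1)) + k % (n+1) from (Nat.div_add_mod k (n+1)).symm]
  rw [pow_add, pow_mul, pow_card_eq_one hc, one_pow, one_mul]

end Orbit

/-! ### Key words (rotations) -/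

section Keyw

variable {n : ℕ}

def keyw (n : ℕ) (c : Fin (n+1) → ℕ) : Fin (n+1) → Lex (Fin (n+1) → ℕ) :=
  fun t => toLex (fun s => c (t + s))

lemma keyw_lt_iff {c : Fin (n+1) → ℕ} {t t' : Fin (n+1)} :
    keyw n c t < keyw n c t' ↔
      ∃ i, (∀ j, j < i → c (t + j) = c (t' + j)) ∧ c (t + i) < c (t' + i) :=
  Iff.rfl

variable {c : Fin (n+1) → ℕ} (hKn : ∀ t, c t = n ↔ t = Fin.last n) (hKle : ∀ t, c t ≤ n)

include hKn in
lemma keyw_injective : Function.Injective (keyw n c) := by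
  intro t t' h
  have h' : ∀ s, c (t + s) = c (t' + s) := fun s => congrFun (toLex_inj.mp h) s
  have h1 : t + (Fin.last n - t) = Fin.last n := by
    rw [add_comm t (Fin.last n - t), sub_add_cancel]
  have h2 : c (t' + (Fin.last n - t)) = n := by
    rw [← h' (Fin.last n - t), h1, (hKn _).mpr rfl]
  have h3 : t' + (Fin.last n - t) = Fin.last n := (hKn _).mp h2
  have h4 : t' + (Fin.last n - t) = t + (Fin.last n - t) := by rw [h1, h3]
  exact (add_right_cancel h4).symm

include hKn hKle in
lemma keyw_lt_last {t : Fin (n+1)} (ht : t ≠ Fin.last n) :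
    keyw n c t < keyw n c (Fin.last n) := by
  rw [keyw_lt_iff]
  refine ⟨0, fun j hj => absurd hj (by simp), ?_⟩
  rw [add_zero, add_zero]
  refine lt_of_le_of_ne (le_of_le_of_eq (hKle t) ?_) ?_
  · exact ((hKn _).mpr rfl).symm
  · rw [(hKn _).mpr rfl]
    exact fun h => ht ((hKn t).mp h)

lemma keyw_tail {t t' : Fin (n+1)} (h0 : c t = c t') (h : keyw n c t < keyw n c t') :
    keyw n c (t + 1) < keyw n c (t' + 1) := by
  rw [keyw_lt_iff] at h ⊢
  obtain ⟨i, hj, hi⟩ := h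
  have hi0 : i ≠ 0 := by
    rintro rfl
    rw [add_zero, add_zero] at hi
    exact absurd h0 hi.ne
  have hisub : (i - 1).val = i.val - 1 := by
    rw [Fin.coe_sub_one, if_neg hi0]
  have hadd : 1 + (i - 1) = i := by rw [add_comm 1 (i - 1), sub_add_cancel]
  refine ⟨i - 1, fun j hj' => ?_, ?_⟩
  · have hjlt : j.val + 1 ≤ n := by
      have h1 : j.val < i.val - 1 := by rw [← hisub]; exact hj'
      have := i.isLt; omega
    have hj1 : (j + 1).val = j.val + 1 := by
      rw [Fin.val_add_one_of_lt]
      rw [Fin.lt_iff_val_lt_val, Fin.val_last]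
      omega
    have hjlt' : j + 1 < i := by
      rw [Fin.lt_iff_val_lt_val, hj1]
      have h1 : j.val < i.val - 1 := by rw [← hisub]; exact hj'
      omega
    have := hj (j + 1) hjlt'
    calc c (t + 1 + j) = c (t + (j + 1)) := by rw [add_assoc, add_comm 1 j]
      _ = c (t' + (j + 1)) := this
      _ = c (t' + 1 + j) := by rw [add_assoc, add_comm 1 j]
  · have h1 : t + 1 + (i - 1) = t + i := by rw [add_assoc, hadd]
    have h2 : t' + 1 + (i - 1) = t' + i := by rw [add_assoc, hadd]
    rw [h1, h2]
    exact hi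

include hKn hKle in
lemma sort_keyw_last : Tuple.sort (keyw n c) (Fin.last n) = Fin.last n := by
  by_contra h
  have h1 : keyw n c (Tuple.sort (keyw n c) (Fin.last n)) < keyw n c (Fin.last n) :=
    keyw_lt_last hKn hKle h
  have h2 : keyw n c (Fin.last n) ≤ keyw n c (Tuple.sort (keyw n c) (Fin.last n)) := by
    have h3 := Tuple.monotone_sort (keyw n c)
      (Fin.le_last ((Tuple.sort (keyw n c)).symm (Fin.last n)))
    simpa using h3
  exact absurd (lt_of_le_of_lt h2 h1) (lt_irrefl _)

lemma symm_sort_lt_of_keyw_lt {a b : Fin (n+1)} (h : keyw n c a < keyw n c b) :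
    (Tuple.sort (keyw n c)).symm a < (Tuple.sort (keyw n c)).symm b := by
  rcases lt_or_ge ((Tuple.sort (keyw n c)).symm a) ((Tuple.sort (keyw n c)).symm b) with h' | h'
  · exact h'
  · exfalso
    have h2 := Tuple.monotone_sort (keyw n c) h'
    simp only [Function.comp_apply, Equiv.apply_symm_apply] at h2
    exact absurd h2 (not_le_of_gt h)

include hKn hKle in
lemma comp_sort_eq_bl {I : Finset ℕ} (hI : I ⊆ Finset.range (n - 1)) (hn : 1 ≤ n)
    (hcont : Multiset.map c Finset.univ.val = Multiset.map (bl n I) Finset.univ.val) :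
    c ∘ (Tuple.sort (keyw n c)) = bl n I := by
  apply sorted_unique ?_ (bl_mono hI hn)
  · rw [← Multiset.map_map, Multiset.map_univ_val_equiv (Tuple.sort (keyw n c))]
    exact hcont
  · intro x y hxy
    have h1 := Tuple.monotone_sort (keyw n c) hxy
    have h2 := lex_le_apply_zero h1
    simpa using h2

end Keyw

/-! ### Construction F : from a permutation of Fin n to a cyclic permutation of Fin (n+1) -/

section ConsF

variable {n : ℕ} {I : Finset ℕ}

def cw (n : ℕ) (I : Finset ℕ) (σ : Equiv.Perm (Fin n)) : Fin (n+1) → ℕ :=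
  fun t => if h : (t : ℕ) < n then bf I (σ.symm ⟨t, h⟩) else n

lemma cw_castSucc (σ : Equiv.Perm (Fin n)) (v : Fin n) :
    cw n I σ v.castSucc = bf I (σ.symm v) := by
  unfold cw
  rw [dif_pos (by simpa using v.isLt)]
  congr 1

lemma cw_last (σ : Equiv.Perm (Fin n)) : cw n I σ (Fin.last n) = n := by
  unfold cw
  rw [dif_neg (by simp)]

lemma cw_eq_n_iff (hI : I ⊆ Finset.range (n - 1)) (hn : 1 ≤ n) (σ : Equiv.Perm (Fin n))
    (t : Fin (n+1)) : cw n I σ t = n ↔ t = Fin.last n := by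
  unfold cw
  split_ifs with h
  · simp only [Fin.ext_iff, Fin.val_last]
    exact ⟨fun hh => absurd hh (bf_lt_n hI hn _).ne, fun hh => by omega⟩
  · have : (t : ℕ) = n := by have := t.isLt; omega
    simp [Fin.ext_iff, this]

lemma cw_le (hI : I ⊆ Finset.range (n - 1)) (hn : 1 ≤ n) (σ : Equiv.Perm (Fin n))
    (t : Fin (n+1)) : cw n I σ t ≤ n := by
  unfold cw
  split_ifs with h
  · exact (bf_lt_n hI hn _).le
  · exact le_refl n

lemma univ_val_succ (n : ℕ) : (Finset.univ : Finset (Fin (n+1))).val =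
    Fin.last n ::ₘ Multiset.map Fin.castSucc (Finset.univ : Finset (Fin n)).val := by
  rw [Fin.univ_castSuccEmb]
  rw [Finset.cons_val, Finset.map_val]
  rfl

lemma cw_content (σ : Equiv.Perm (Fin n)) :
    Multiset.map (cw n I σ) Finset.univ.val = Multiset.map (bl n I) Finset.univ.val := by
  rw [univ_val_succ, Multiset.map_cons, Multiset.map_cons, Multiset.map_map, Multiset.map_map]
  rw [cw_last, bl_last]
  congr 1
  have h1 : (cw n I σ) ∘ Fin.castSucc = (fun v : Fin n => bf I v) ∘ σ.symm := by
    funext v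
    exact cw_castSucc σ v
  have h2 : (bl n I) ∘ Fin.castSucc = (fun v : Fin n => bf I v) := by
    funext v
    exact bl_castSucc n I v
  rw [h1, h2, ← Multiset.map_map, Multiset.map_univ_val_equiv σ.symm]

noncomputable def piF (n : ℕ) (I : Finset ℕ) (σ : Equiv.Perm (Fin n)) : Equiv.Perm (Fin (n+1)) :=
  (Tuple.sort (keyw n (cw n I σ))).trans
    ((Equiv.addRight (1 : Fin (n+1))).trans (Tuple.sort (keyw n (cw n I σ))).symm)

lemma piF_apply (σ : Equiv.Perm (Fin n)) (x : Fin (n+1)) :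
    piF n I σ x = (Tuple.sort (keyw n (cw n I σ))).symm
      (Tuple.sort (keyw n (cw n I σ)) x + 1) := rfl

open Fin.NatCast in
lemma conj_pow (e : Equiv.Perm (Fin (n+1))) (k : ℕ) (x : Fin (n+1)) :
    ((e.trans ((Equiv.addRight (1 : Fin (n+1))).trans e.symm)) ^ k) x
      = e.symm (e x + (k : Fin (n+1))) := by
  induction k with
  | zero => simp
  | succ k ih =>
    rw [pow_succ', Equiv.Perm.mul_apply, ih]
    show e.symm (e (e.symm (e x + (k : Fin (n+1)))) + 1) = _
    rw [Equiv.apply_symm_apply]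
    congr 1
    rw [Nat.cast_add, Nat.cast_one, add_assoc]

open Fin.NatCast in
lemma piF_pow (σ : Equiv.Perm (Fin n)) (k : ℕ) (x : Fin (n+1)) :
    ((piF n I σ) ^ k) x = (Tuple.sort (keyw n (cw n I σ))).symm
      (Tuple.sort (keyw n (cw n I σ)) x + (k : Fin (n+1))) :=
  conj_pow _ k x

lemma piF_cyclic (σ : Equiv.Perm (Fin n)) : IsCyclic' (piF n I σ) := by
  intro x y
  set e := Tuple.sort (keyw n (cw n I σ))
  refine ⟨(e y - e x).val, ?_⟩
  rw [piF_pow, Fin.cast_val_eq_self]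
  rw [add_comm (e x) (e y - e x), sub_add_cancel]
  exact e.symm_apply_apply y

lemma comp_sort_cw (hI : I ⊆ Finset.range (n - 1)) (hn : 1 ≤ n) (σ : Equiv.Perm (Fin n)) :
    (cw n I σ) ∘ (Tuple.sort (keyw n (cw n I σ))) = bl n I :=
  comp_sort_eq_bl (cw_eq_n_iff hI hn σ) (cw_le hI hn σ) hI hn (cw_content σ)

lemma mem_descSet_perm {m : ℕ} (π : Equiv.Perm (Fin m)) (i : ℕ) :
    i ∈ descSet π ↔ i ∈ Finset.range (m - 1) ∧
      ∃ h : i + 1 < m, (π ⟨i + 1, h⟩ : ℕ) < (π ⟨i, Nat.lt_of_succ_lt h⟩ : ℕ) := by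
  unfold descSet descSeq
  rw [Finset.mem_filter]

lemma piF_desc (hI : I ⊆ Finset.range (n - 1)) (hn : 1 ≤ n) (σ : Equiv.Perm (Fin n)) :
    descSet (piF n I σ) ∩ Finset.range (n - 1) ⊆ I := by
  intro i hi
  rw [Finset.mem_inter, mem_descSet_perm, Finset.mem_range, Finset.mem_range] at hi
  obtain ⟨⟨_, h1, hdesc⟩, hin1⟩ := hi
  by_contra hiI
  set e := Tuple.sort (keyw n (cw n I σ)) with he
  set p : Fin (n+1) := ⟨i, by omega⟩ with hp
  set p1 : Fin (n+1) := ⟨i+1, h1⟩ with hp1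
  have hbl : bl n I p = bl n I p1 := by
    unfold bl
    rw [if_neg (by simp [hp]; omega), if_neg (by simp [hp1]; omega)]
    exact (bf_succ_eq hiI).symm
  have hcp : cw n I σ (e p) = cw n I σ (e p1) := by
    have := congrFun (comp_sort_cw hI hn σ) p
    have h2 := congrFun (comp_sort_cw hI hn σ) p1
    simp only [Function.comp_apply] at this h2
    rw [this, h2, hbl]
  have hkey : keyw n (cw n I σ) (e p) < keyw n (cw n I σ) (e p1) := by
    apply strictMono_comp_sort (keyw_injective (cw_eq_n_iff hI hn σ))
    rw [Fin.lt_iff_val_lt_val]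
    simp [hp, hp1]
  have htail := keyw_tail hcp hkey
  have hlt : piF n I σ p < piF n I σ p1 := by
    rw [piF_apply, piF_apply]
    exact symm_sort_lt_of_keyw_lt htail
  rw [Fin.lt_iff_val_lt_val] at hlt
  omega

end ConsF

/-! ### Construction G : from a cyclic permutation of Fin (n+1) to a permutation of Fin n -/

section ConsG

variable {n : ℕ} {I : Finset ℕ} {π : Equiv.Perm (Fin (n+1))}

def uG (n : ℕ) (I : Finset ℕ) (π : Equiv.Perm (Fin (n+1))) : Fin n → ℕ :=
  fun v => bl n I ((π ^ ((v : ℕ) + 1)) (Fin.last n))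

def keyG (n : ℕ) (I : Finset ℕ) (π : Equiv.Perm (Fin (n+1))) : Fin n → ℕ ×ₗ ℕ :=
  fun v => toLex (uG n I π v, (v : ℕ))

def σG (n : ℕ) (I : Finset ℕ) (π : Equiv.Perm (Fin (n+1))) : Equiv.Perm (Fin n) :=
  Tuple.sort (keyG n I π)

lemma keyG_injective : Function.Injective (keyG n I π) := by
  intro a b hab
  have := congrArg (fun x => (ofLex x).2) hab
  simpa [keyG, Fin.ext_iff] using this

lemma prodlex_fst_le {a b : ℕ ×ₗ ℕ} (h : a ≤ b) : (ofLex a).1 ≤ (ofLex b).1 := by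
  rcases eq_or_lt_of_le h with rfl | hlt
  · exact le_refl _
  · rcases (Prod.Lex.lt_iff).mp hlt with h1 | ⟨h1, _⟩
    · exact h1.le
    · exact h1.le

lemma prodlex_snd_lt {a b : ℕ ×ₗ ℕ} (h : a < b) (hfst : (ofLex a).1 = (ofLex b).1) :
    (ofLex a).2 < (ofLex b).2 := by
  rcases (Prod.Lex.lt_iff).mp h with h1 | ⟨_, h2⟩
  · exact absurd hfst h1.ne
  · exact h2

variable (hc : IsCyclic' π)

include hc in
lemma stepPi (hI : I ⊆ Finset.range (n - 1)) (hn : 1 ≤ n)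
    (hd : descSet π ∩ Finset.range (n - 1) ⊆ I)
    {p q : Fin (n+1)} (hpq : p < q) (hbl : bl n I p = bl n I q) : π p < π q := by
  refine chain_lt (bl_mono hI hn) ?_ hpq hbl
  intro i h1 hb
  rcases eq_or_lt_of_le (Nat.lt_succ_iff.mp h1) with he | hlt
  · exfalso
    have hbi : bl n I ⟨i+1, h1⟩ = n := by unfold bl; rw [if_pos (by simp [he])]
    have hbi2 : bl n I ⟨i, Nat.lt_of_succ_lt h1⟩ = bf I i := by
      unfold bl; rw [if_neg (by simp; omega)]
    rw [hbi, hbi2] at hb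
    exact absurd hb (bf_lt_n hI hn i).ne
  · -- i + 1 < n
    have hbi : bl n I ⟨i+1, h1⟩ = bf I (i+1) := by
      unfold bl; rw [if_neg (by simp; omega)]
    have hbi2 : bl n I ⟨i, Nat.lt_of_succ_lt h1⟩ = bf I i := by
      unfold bl; rw [if_neg (by simp; omega)]
    rw [hbi, hbi2] at hb
    have hiI : i ∉ I := not_mem_of_bf_eq hb
    have hnd : i ∉ descSet π := by
      intro hmem
      exact hiI (hd (Finset.mem_inter.mpr ⟨hmem, Finset.mem_range.mpr (by omega)⟩))
    rw [mem_descSet_perm] at hnd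
    push_neg at hnd
    have hge := hnd (Finset.mem_range.mpr (by simp; omega)) (by omega)
    have hne : π ⟨i, Nat.lt_of_succ_lt h1⟩ ≠ π ⟨i+1, by omega⟩ :=
      fun hh => by have := π.injective hh; simp [Fin.ext_iff] at this
    rw [Fin.lt_iff_val_lt_val]
    have : (π ⟨i, Nat.lt_of_succ_lt h1⟩ : ℕ) ≠ (π ⟨i+1, by omega⟩ : ℕ) :=
      fun hh => hne (Fin.ext hh)
    omega

include hc in
lemma uG_last_eq : (π ^ (n + 1)) (Fin.last n) = Fin.last n := by
  rw [pow_card_eq_one hc]; rfl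

def Ψf (n : ℕ) (π : Equiv.Perm (Fin (n+1))) : Fin (n+1) → Fin (n+1) :=
  fun t => (π ^ ((t : ℕ) + 1)) (Fin.last n)

include hc in
lemma Ψf_injective : Function.Injective (Ψf n π) := by
  intro a b hab
  unfold Ψf at hab
  rw [pow_succ', pow_succ', Equiv.Perm.mul_apply, Equiv.Perm.mul_apply] at hab
  have h2 := π.injective hab
  exact Fin.ext (orbit_inj hc (Nat.lt_succ_iff.mp a.isLt) (Nat.lt_succ_iff.mp b.isLt) h2)

include hc in
lemma uG_content (hI : I ⊆ Finset.range (n - 1)) (hn : 1 ≤ n) :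
    Multiset.map (uG n I π) Finset.univ.val
      = Multiset.map (fun v : Fin n => bf I v) Finset.univ.val := by
  have hbij : Function.Bijective (Ψf n π) :=
    Finite.injective_iff_bijective.mp (Ψf_injective hc)
  set Ψe : Fin (n+1) ≃ Fin (n+1) := Equiv.ofBijective _ hbij with hΨe
  have hcoe : ∀ t, Ψe t = Ψf n π t := fun t => rfl
  have h1 : Multiset.map (bl n I) Finset.univ.val
      = Multiset.map (bl n I ∘ Ψf n π) Finset.univ.val := by
    conv_lhs => rw [← Multiset.map_univ_val_equiv Ψe]
    rw [Multiset.map_map]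
    rfl
  rw [univ_val_succ, Multiset.map_cons, Multiset.map_cons, Multiset.map_map, Multiset.map_map,
    bl_last] at h1
  have h2 : (bl n I ∘ Ψf n π) (Fin.last n) = n := by
    have : Ψf n π (Fin.last n) = Fin.last n := by
      unfold Ψf
      simp only [Fin.val_last]
      exact uG_last_eq hc
    simp only [Function.comp_apply, this, bl_last]
  rw [h2] at h1
  have h3 : (bl n I) ∘ Fin.castSucc = (fun v : Fin n => bf I v) := by
    funext v; exact bl_castSucc n I v
  have h4 : (bl n I ∘ Ψf n π) ∘ Fin.castSucc = uG n I π := by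
    funext v
    simp only [Function.comp_apply]
    congr 1
  rw [h3, h4] at h1
  exact ((Multiset.cons_inj_right (n : ℕ)).mp h1).symm

include hc in
lemma uG_comp_sort (hI : I ⊆ Finset.range (n - 1)) (hn : 1 ≤ n) :
    (uG n I π) ∘ (σG n I π) = (fun v : Fin n => bf I v) := by
  apply sorted_unique ?_ (fun a b hab => bf_mono I hab)
  · rw [← Multiset.map_map, Multiset.map_univ_val_equiv (σG n I π)]
    exact uG_content hc hI hn
  · intro x y hxy
    have h1 := Tuple.monotone_sort (keyG n I π) hxy
    exact prodlex_fst_le h1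

include hc in
lemma σG_desc (hI : I ⊆ Finset.range (n - 1)) (hn : 1 ≤ n)
    (hd : descSet π ∩ Finset.range (n - 1) ⊆ I) : descSet (σG n I π) ⊆ I := by
  intro i hi
  rw [mem_descSet_perm, Finset.mem_range] at hi
  obtain ⟨hin1, h1, hdesc⟩ := hi
  by_contra hiI
  have hbf : bf I i = bf I (i+1) := (bf_succ_eq hiI).symm
  set p : Fin n := ⟨i, Nat.lt_of_succ_lt h1⟩ with hp
  set p1 : Fin n := ⟨i+1, h1⟩ with hp1
  have hu : uG n I π (σG n I π p) = uG n I π (σG n I π p1) := by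
    have e1 := congrFun (uG_comp_sort hc hI hn) p
    have e2 := congrFun (uG_comp_sort hc hI hn) p1
    simp only [Function.comp_apply] at e1 e2
    rw [e1, e2]
    exact hbf
  have hkey : keyG n I π (σG n I π p) < keyG n I π (σG n I π p1) := by
    apply strictMono_comp_sort keyG_injective
    rw [Fin.lt_iff_val_lt_val]; simp [hp, hp1]
  have := prodlex_snd_lt hkey (by simpa [keyG] using hu)
  simp only [keyG, ofLex_toLex] at this
  omega

end ConsG

/-! ### Roundtrips -/

section Round

variable {n : ℕ} {I : Finset ℕ}

lemma stepSigma {σ : Equiv.Perm (Fin n)} (hσ : descSet σ ⊆ I)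
    {p q : Fin n} (hpq : p < q) (hb : bf I (p : ℕ) = bf I (q : ℕ)) : σ p < σ q := by
  refine chain_lt (fun a b hab => bf_mono I hab) ?_ hpq hb
  intro i h1 hbi
  simp only [] at hbi
  have hiI : i ∉ I := not_mem_of_bf_eq hbi
  have hnd : i ∉ descSet σ := fun hmem => hiI (hσ hmem)
  rw [mem_descSet_perm] at hnd
  push_neg at hnd
  have hge := hnd (Finset.mem_range.mpr (by omega)) h1
  have hne : σ ⟨i, Nat.lt_of_succ_lt h1⟩ ≠ σ ⟨i+1, h1⟩ :=
    fun hh => by have := σ.injective hh; simp [Fin.ext_iff] at this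
  have : (σ ⟨i, Nat.lt_of_succ_lt h1⟩ : ℕ) ≠ (σ ⟨i+1, h1⟩ : ℕ) :=
    fun hh => hne (Fin.ext hh)
  rw [Fin.lt_iff_val_lt_val]
  omega

open Fin.NatCast in
lemma last_add_succ (hn : 1 ≤ n) (v : Fin n) :
    Fin.last n + (((v : ℕ) + 1 : ℕ) : Fin (n+1)) = Fin.castSucc v := by
  apply Fin.ext
  rw [Fin.val_add, Fin.val_last, Fin.val_natCast, Fin.coe_castSucc]
  have h1 : ((v : ℕ) + 1) % (n+1) = (v : ℕ) + 1 := Nat.mod_eq_of_lt (by have := v.isLt; omega)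
  rw [h1, show n + ((v : ℕ) + 1) = (n+1) + (v : ℕ) by omega, Nat.add_mod_left]
  exact Nat.mod_eq_of_lt (by have := v.isLt; omega)

lemma uG_of_piF (hI : I ⊆ Finset.range (n - 1)) (hn : 1 ≤ n) (σ : Equiv.Perm (Fin n))
    (v : Fin n) : uG n I (piF n I σ) v = bf I (σ.symm v) := by
  unfold uG
  rw [piF_pow]
  have hlast := sort_keyw_last (cw_eq_n_iff hI hn σ) (cw_le hI hn σ)
  rw [hlast, last_add_succ hn v]
  have := congrFun (comp_sort_cw hI hn σ)
    ((Tuple.sort (keyw n (cw n I σ))).symm (Fin.castSucc v))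
  simp only [Function.comp_apply, Equiv.apply_symm_apply] at this
  rw [this.symm]
  exact cw_castSucc σ v

lemma roundtrip1 (hI : I ⊆ Finset.range (n - 1)) (hn : 1 ≤ n) (σ : Equiv.Perm (Fin n))
    (hσ : descSet σ ⊆ I) : σG n I (piF n I σ) = σ := by
  symm
  apply eq_sort_of_strictMono (f := keyG n I (piF n I σ))
  intro x y hxy
  simp only [Function.comp_apply, keyG, uG_of_piF hI hn σ, Equiv.symm_apply_apply]
  rcases eq_or_lt_of_le (bf_mono I (Fin.le_def.mp hxy.le)) with he | hlt
  · apply (Prod.Lex.lt_iff).mpr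
    right
    refine ⟨he, ?_⟩
    have := stepSigma hσ hxy he
    rwa [Fin.lt_iff_val_lt_val] at this
  · exact (Prod.Lex.lt_iff).mpr (Or.inl hlt)

variable {π : Equiv.Perm (Fin (n+1))} (hc : IsCyclic' π)

include hc in
lemma pow_congr_mod (a b : ℕ) (h : a % (n+1) = b % (n+1)) : π ^ a = π ^ b := by
  rw [pow_mod_card hc a, h, ← pow_mod_card hc b]

include hc in
lemma Wmono (hI : I ⊆ Finset.range (n - 1)) (hn : 1 ≤ n)
    (hd : descSet π ∩ Finset.range (n - 1) ⊆ I) :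
    StrictMono (fun x : Fin (n+1) =>
      toLex (fun s : Fin (n+1) => bl n I ((π ^ (s : ℕ)) x))) := by
  intro x y hxy
  obtain ⟨k, hk⟩ := hc x (Fin.last n)
  set s0 : Fin (n+1) := ⟨k % (n+1), Nat.mod_lt _ (by omega)⟩ with hs0
  have hps0 : (π ^ (s0 : ℕ)) x = Fin.last n := by
    rw [hs0]
    rw [show ((⟨k % (n+1), Nat.mod_lt _ (by omega)⟩ : Fin (n+1)) : ℕ) = k % (n+1) from rfl]
    rw [← pow_mod_card hc k]
    exact hk
  have hdiff : bl n I ((π ^ (s0 : ℕ)) x) ≠ bl n I ((π ^ (s0 : ℕ)) y) := by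
    rw [hps0, bl_last]
    intro hcon
    have := (bl_eq_n_iff hI hn _).mp hcon.symm
    rw [← hps0] at this
    exact absurd ((π ^ (s0 : ℕ)).injective this) hxy.ne'
  set T := Finset.univ.filter
    (fun s : Fin (n+1) => bl n I ((π ^ (s : ℕ)) x) ≠ bl n I ((π ^ (s : ℕ)) y)) with hT
  have hTne : T.Nonempty := ⟨s0, Finset.mem_filter.mpr ⟨Finset.mem_univ _, hdiff⟩⟩
  set t0 := T.min' hTne with ht0
  have ht0T : t0 ∈ T := T.min'_mem hTne
  have hbefore : ∀ s : Fin (n+1), s < t0 → bl n I ((π ^ (s : ℕ)) x) = bl n I ((π ^ (s : ℕ)) y) := by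
    intro s hs
    by_contra hcon
    exact absurd (T.min'_le s (Finset.mem_filter.mpr ⟨Finset.mem_univ _, hcon⟩))
      (not_le_of_gt hs)
  have aux : ∀ m : ℕ, m ≤ (t0 : ℕ) → (π ^ m) x < (π ^ m) y := by
    intro m
    induction m with
    | zero => intro _; simpa using hxy
    | succ m ih =>
      intro hm
      have hmlt : m < (t0 : ℕ) := by omega
      have hb : bl n I ((π ^ m) x) = bl n I ((π ^ m) y) := by
        have := hbefore ⟨m, by have := t0.isLt; omega⟩ (by rwa [Fin.lt_iff_val_lt_val])
        simpa using this
      have hstep := stepPi hc hI hn hd (ih (by omega)) hb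
      rw [pow_succ', Equiv.Perm.mul_apply, Equiv.Perm.mul_apply]
      exact hstep
  refine ⟨t0, fun j hj => hbefore j hj, ?_⟩
  have hlt := aux (t0 : ℕ) (le_refl _)
  have hmemT := Finset.mem_filter.mp ht0T
  exact lt_of_le_of_ne (bl_mono hI hn hlt.le) hmemT.2

include hc in
lemma cw_σG (hI : I ⊆ Finset.range (n - 1)) (hn : 1 ≤ n) (t : Fin (n+1)) :
    cw n I (σG n I π) t = bl n I ((π ^ ((t : ℕ) + 1)) (Fin.last n)) := by
  unfold cw
  split_ifs with h
  · have := congrFun (uG_comp_sort hc hI hn) ((σG n I π).symm ⟨(t : ℕ), h⟩)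
    simp only [Function.comp_apply, Equiv.apply_symm_apply] at this
    rw [← this]
    rfl
  · have ht : (t : ℕ) = n := by have := t.isLt; omega
    rw [ht, uG_last_eq hc, bl_last]

include hc in
lemma key_σG_symm (hI : I ⊆ Finset.range (n - 1)) (hn : 1 ≤ n)
    (Ψe : Equiv.Perm (Fin (n+1))) (hΨe : ∀ t, Ψe t = Ψf n π t) (x : Fin (n+1)) :
    keyw n (cw n I (σG n I π)) (Ψe.symm x)
      = toLex (fun s : Fin (n+1) => bl n I ((π ^ (s : ℕ)) x)) := by
  unfold keyw
  congr 1
  funext s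
  rw [cw_σG hc hI hn]
  congr 1
  set t := Ψe.symm x with ht
  have hx : (π ^ ((t : ℕ) + 1)) (Fin.last n) = x := by
    have h2 : Ψf n π t = x := by
      rw [← hΨe t, ht]
      exact Equiv.apply_symm_apply Ψe x
    exact h2
  have hmod : (((t + s : Fin (n+1)) : ℕ) + 1) % (n+1) = ((s : ℕ) + ((t : ℕ) + 1)) % (n+1) := by
    rw [Fin.val_add, Nat.mod_add_mod]
    congr 1
    omega
  rw [pow_congr_mod hc _ _ hmod, pow_add, Equiv.Perm.mul_apply, hx]

include hc in
lemma roundtrip2 (hI : I ⊆ Finset.range (n - 1)) (hn : 1 ≤ n)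
    (hd : descSet π ∩ Finset.range (n - 1) ⊆ I) : piF n I (σG n I π) = π := by
  have hbij : Function.Bijective (Ψf n π) :=
    Finite.injective_iff_bijective.mp (Ψf_injective hc)
  set Ψe : Equiv.Perm (Fin (n+1)) := Equiv.ofBijective _ hbij with hΨdef
  have hΨe : ∀ t, Ψe t = Ψf n π t := fun t => rfl
  have hsm : StrictMono ((keyw n (cw n I (σG n I π))) ∘ (Ψe.symm : Equiv.Perm (Fin (n+1)))) := by
    intro x y hxy
    simp only [Function.comp_apply]
    rw [key_σG_symm hc hI hn Ψe hΨe x, key_σG_symm hc hI hn Ψe hΨe y]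
    exact Wmono hc hI hn hd hxy
  have hES : (Ψe.symm : Equiv.Perm (Fin (n+1))) = Tuple.sort (keyw n (cw n I (σG n I π))) :=
    eq_sort_of_strictMono hsm
  apply Equiv.ext
  intro x
  have hgoal : piF n I (σG n I π) x = Ψe ((Ψe.symm x) + 1) := by
    rw [piF_apply, ← hES]
    rfl
  rw [hgoal, hΨe]
  have hx : x = (π ^ (((Ψe.symm x : Fin (n+1)) : ℕ) + 1)) (Fin.last n) := by
    have h2 : Ψf n π (Ψe.symm x) = x := by
      rw [← hΨe (Ψe.symm x)]
      exact Equiv.apply_symm_apply Ψe x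
    exact h2.symm
  conv_rhs => rw [hx]
  unfold Ψf
  have hone : ((1 : Fin (n+1)) : ℕ) = 1 := by
    rw [Fin.val_one']
    exact Nat.mod_eq_of_lt (by omega)
  have hmod : ((((Ψe.symm x + 1 : Fin (n+1)) : ℕ)) + 1) % (n+1)
      = ((((Ψe.symm x : Fin (n+1)) : ℕ) + 1) + 1) % (n+1) := by
    rw [Fin.val_add, hone, Nat.mod_add_mod]
  rw [pow_congr_mod hc _ _ hmod, pow_succ', Equiv.Perm.mul_apply]

end Round

end GRbij

theorem stmt2 (n : ℕ) (hn : 1 ≤ n) (I : Finset ℕ) (hI : I ⊆ Finset.range (n - 1)) :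
    Nat.card {π : Equiv.Perm (Fin (n + 1)) //
        IsCyclic' π ∧ descSet π ∩ Finset.range (n - 1) ⊆ I}
      = Nat.card {σ : Equiv.Perm (Fin n) // descSet σ ⊆ I} := by
  apply Nat.card_congr
  exact {
    toFun := fun p => ⟨GRbij.σG n I p.1, GRbij.σG_desc p.2.1 hI hn p.2.2⟩
    invFun := fun s => ⟨GRbij.piF n I s.1, GRbij.piF_cyclic s.1, GRbij.piF_desc hI hn s.1⟩
    left_inv := fun p => Subtype.ext (GRbij.roundtrip2 p.2.1 hI hn p.2.2)
    right_inv := fun s => Subtype.ext (GRbij.roundtrip1 hI hn s.1 s.2) }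
end

section
/- If a uniformly random permutation π of {1,...,n+1} is chosen, then for any fixed I ⊆ {1,...,n−1}, the events {D(π) ∩ {1,...,n−1} = I} and {π is a single (n+1)-cycle} are independent. Equivalently, (n+1)·|{π cyclic in S_{n+1} : D(π)∩[n−1]=I}| = |{π ∈ S_{n+1} : D(π)∩[n−1]=I}|. -/
open Finset Equiv
open scoped Fin.CommRing

namespace S4

-- card of filter is invariant under precomposition with an equiv
lemma card_filter_equiv {N : ℕ} (e : Fin N ≃ Fin N) (p : Fin N → Prop) [DecidablePred p] :
    (univ.filter fun b => p (e b)).card = (univ.filter p).card := by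
  apply Finset.card_bij (fun b _ => e b)
  · intro a ha; simp only [mem_filter, mem_univ, true_and] at ha ⊢; exact ha
  · intro a _ b _ h; exact e.injective h
  · intro b hb; refine ⟨e.symm b, ?_, by simp⟩
    simp only [mem_filter, mem_univ, true_and] at hb ⊢; simpa using hb

lemma monotone_le_iff {N : ℕ} {f : Fin N → ℕ} (hf : Monotone f) (j : Fin N) (c : ℕ) :
    f j ≤ c ↔ (j : ℕ) < (univ.filter fun i => f i ≤ c).card := by
  constructor
  · intro h
    have hsub : Finset.Iic j ⊆ univ.filter fun i => f i ≤ c := by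
      intro i hi; simp only [mem_Iic] at hi
      simp only [mem_filter, mem_univ, true_and]
      exact le_trans (hf hi) h
    calc (j : ℕ) < (Finset.Iic j).card := by rw [Fin.card_Iic]; omega
    _ ≤ _ := Finset.card_le_card hsub
  · intro h
    by_contra hc
    have hsub : (univ.filter fun i => f i ≤ c) ⊆ Finset.Iio j := by
      intro i hi; simp only [mem_filter, mem_univ, true_and] at hi
      simp only [mem_Iio]
      by_contra hij
      exact hc (le_trans (hf (not_lt.mp hij)) hi)
    have := Finset.card_le_card hsub
    rw [Fin.card_Iio] at this; omega

lemma monotone_fibers_eq {N : ℕ} {f g : Fin N → ℕ} (hf : Monotone f) (hg : Monotone g)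
    (h : ∀ c, (univ.filter fun i => f i = c).card = (univ.filter fun i => g i = c).card) :
    f = g := by
  have key : ∀ c, (univ.filter fun i => f i ≤ c).card = (univ.filter fun i => g i ≤ c).card := by
    intro c
    have e1 : ∀ (F : Fin N → ℕ), (univ.filter fun i => F i ≤ c).card
        = ∑ c' ∈ Finset.range (c+1), (univ.filter fun i => F i = c').card := by
      intro F
      rw [Finset.card_eq_sum_card_fiberwise (f := F) (t := Finset.range (c+1))]
      · apply Finset.sum_congr rfl; intro c' _
        congr 1; ext i; simp only [mem_filter, mem_univ, true_and, Finset.mem_range]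
        rw [Finset.mem_range] at *
        constructor
        · rintro ⟨_, rfl⟩; rfl
        · rintro rfl; refine ⟨by omega, rfl⟩
      · intro x hx; simp only [Finset.mem_coe, mem_filter, mem_univ, true_and] at hx
        simp [Finset.mem_range]; omega
    rw [e1 f, e1 g]
    exact Finset.sum_congr rfl fun c' _ => h c'
  funext j
  have h1 := monotone_le_iff hf j
  have h2 := monotone_le_iff hg j
  have hle : f j ≤ g j := by rw [h1 (g j), key (g j)]; exact (h2 (g j)).mp le_rfl
  have hge : g j ≤ f j := by rw [h2 (f j), ← key (f j)]; exact (h1 (f j)).mp le_rfl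
  omega

section rank
variable {N : ℕ} (f : Fin N → ℕ)

def rnk (b : Fin N) : ℕ := (univ.filter fun b' => f b' < f b).card

lemma rnk_lt_card (b : Fin N) : rnk f b < N := by
  have : (univ.filter fun b' => f b' < f b) ⊆ univ.erase b := by
    intro x hx
    simp only [mem_filter, mem_univ, true_and] at hx
    simp only [Finset.mem_erase, mem_univ, and_true]
    rintro rfl; omega
  have := Finset.card_le_card this
  rw [Finset.card_erase_of_mem (mem_univ b), Finset.card_univ, Fintype.card_fin] at this
  have hN : 0 < N := b.pos
  unfold rnk
  omega

lemma rnk_lt_rnk {b b' : Fin N} (h : f b < f b') : rnk f b < rnk f b' := by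
  apply Finset.card_lt_card
  constructor
  · intro x hx; simp only [mem_filter, mem_univ, true_and] at hx ⊢; omega
  · intro hsub
    have : b ∈ univ.filter fun x => f x < f b' := by
      simp only [mem_filter, mem_univ, true_and]; exact h
    have hb := hsub this
    simp only [mem_filter, mem_univ, true_and] at hb; omega

lemma rnk_lt_iff (hf : Function.Injective f) {b b' : Fin N} :
    rnk f b < rnk f b' ↔ f b < f b' := by
  constructor
  · intro h
    rcases lt_trichotomy (f b) (f b') with h' | h' | h'
    · exact h'
    · exact absurd (hf h') (by rintro rfl; omega)
    · exact absurd (rnk_lt_rnk f h') (by omega)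
  · exact rnk_lt_rnk f

def rnkF (b : Fin N) : Fin N := ⟨rnk f b, rnk_lt_card f b⟩

lemma rnkF_inj (hf : Function.Injective f) : Function.Injective (rnkF f) := by
  intro a b h
  simp only [rnkF, Fin.mk.injEq] at h
  by_contra hne
  rcases lt_trichotomy (f a) (f b) with h' | h' | h'
  · have := rnk_lt_rnk f h'; omega
  · exact hne (hf h')
  · have := rnk_lt_rnk f h'; omega

noncomputable def rnkE (hf : Function.Injective f) : Fin N ≃ Fin N :=
  Equiv.ofBijective (rnkF f) ((Finite.injective_iff_bijective).mp (rnkF_inj f hf))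

lemma rnkE_apply (hf : Function.Injective f) (b : Fin N) : rnkE f hf b = ⟨rnk f b, rnk_lt_card f b⟩ := rfl

lemma rnkE_lt_iff (hf : Function.Injective f) {b b' : Fin N} :
    rnkE f hf b < rnkE f hf b' ↔ f b < f b' := by
  rw [rnkE_apply, rnkE_apply, Fin.lt_def]
  exact rnk_lt_iff f hf

lemma rnk_eq_of_max {b : Fin N} (hb : ∀ b', b' ≠ b → f b' < f b) :
    rnk f b = N - 1 := by
  have : (univ.filter fun b' => f b' < f b) = univ.erase b := by
    ext x
    simp only [mem_filter, mem_univ, true_and, Finset.mem_erase, and_true]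
    constructor
    · intro h; rintro rfl; omega
    · exact hb x
  rw [rnk, this, Finset.card_erase_of_mem (mem_univ b), Finset.card_univ, Fintype.card_fin]

end rank
variable (n : ℕ) (S : Finset ℕ)

def TT : Finset ℕ := insert (n-1) S

def blkN (p : ℕ) : ℕ := ((TT n S).filter (· < p)).card

def blk (p : Fin (n+1)) : ℕ := blkN n S p.val

lemma blkN_mono {p q : ℕ} (h : p ≤ q) : blkN n S p ≤ blkN n S q := by
  apply Finset.card_le_card
  intro a ha
  simp only [Finset.mem_filter] at ha ⊢
  exact ⟨ha.1, by omega⟩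

lemma blkN_succ (p : ℕ) : blkN n S (p+1) = blkN n S p + (if p ∈ TT n S then 1 else 0) := by
  unfold blkN
  have : (TT n S).filter (· < p+1) = ((TT n S).filter (· < p)) ∪ ((TT n S).filter (· = p)) := by
    ext a
    simp only [Finset.mem_filter, Finset.mem_union]
    constructor
    · rintro ⟨h1, h2⟩
      rcases Nat.lt_or_ge a p with h | h
      · exact Or.inl ⟨h1, h⟩
      · exact Or.inr ⟨h1, by omega⟩
    · rintro (⟨h1, h2⟩ | ⟨h1, h2⟩) <;> exact ⟨h1, by omega⟩
  rw [this, Finset.card_union_of_disjoint]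
  · congr 1
    rw [Finset.filter_eq']
    split_ifs <;> simp
  · rw [Finset.disjoint_filter]
    intro x _ h; omega

lemma blk_mono {p q : Fin (n+1)} (h : p ≤ q) : blk n S p ≤ blk n S q := blkN_mono n S h

lemma blk_le (p : Fin (n+1)) : blk n S p ≤ p.val := by
  have : (TT n S).filter (· < p.val) ⊆ Finset.range p.val := by
    intro a ha; simp only [Finset.mem_filter] at ha; simp only [Finset.mem_range]; omega
  have := Finset.card_le_card this
  simpa [blk, blkN] using this

lemma blk_lt_last {p : Fin (n+1)} (h : p ≠ Fin.last n) : blk n S p < blk n S (Fin.last n) := by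
  have hp : p.val < n := by
    rcases Fin.lt_or_eq_of_le (Fin.le_last p) with h' | h'
    · exact h'
    · exact absurd h' h
  apply Finset.card_lt_card
  constructor
  · intro a ha
    simp only [Finset.mem_filter, Fin.val_last] at ha ⊢
    exact ⟨ha.1, by omega⟩
  · intro hsub
    have hn : n - 1 ∈ (TT n S).filter (· < (Fin.last n).val) := by
      simp only [Finset.mem_filter, Fin.val_last]
      exact ⟨Finset.mem_insert_self _ _, by omega⟩
    have := hsub hn
    simp only [Finset.mem_filter] at this
    omega

-- adjacent positions in the same block
lemma blk_eq_succ_iff {i : ℕ} (hi : i + 1 ≤ n) :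
    blkN n S i = blkN n S (i+1) ↔ i ∉ TT n S := by
  rw [blkN_succ]; split_ifs with h <;> simp [h]

/-- prefix descent condition -/
def pDsub (π : Equiv.Perm (Fin (n+1))) : Prop := descSet π ∩ Finset.range (n-1) ⊆ S

lemma mem_pD_iff (π : Equiv.Perm (Fin (n+1))) (i : ℕ) :
    i ∈ descSet π ∩ Finset.range (n-1) ↔
      ∃ h : i < n - 1, π ⟨i+1, by omega⟩ < π ⟨i, by omega⟩ := by
  simp only [descSet, descSeq, Finset.mem_inter, Finset.mem_filter, Finset.mem_range]
  constructor
  · rintro ⟨⟨h1, h2, h3⟩, h4⟩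
    exact ⟨h4, by rwa [Fin.lt_def]⟩
  · rintro ⟨h, h2⟩
    refine ⟨⟨by omega, by omega, ?_⟩, h⟩
    rwa [Fin.lt_def] at h2

lemma pDsub_iff_blocks (π : Equiv.Perm (Fin (n+1))) :
    pDsub n S π ↔ ∀ p q : Fin (n+1), p < q → blk n S p = blk n S q → π p < π q := by
  constructor
  · intro h p q hpq hblk
    -- chain: first the adjacent case
    have adj : ∀ i : ℕ, ∀ hi : i + 1 ≤ n, blkN n S i = blkN n S (i+1) →
        π ⟨i, by omega⟩ < π ⟨i+1, by omega⟩ := by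
      intro i hi hbe
      have hiT : i ∉ TT n S := (blk_eq_succ_iff n S hi).mp hbe
      have hiS : i ∉ S := fun hc => hiT (Finset.mem_insert_of_mem hc)
      have hin : i ≠ n - 1 := fun hc => hiT (by rw [hc]; exact Finset.mem_insert_self _ _)
      have hlt : i < n - 1 := by omega
      have : ¬ (π ⟨i+1, by omega⟩ < π ⟨i, by omega⟩) := by
        intro hd
        exact hiS (h ((mem_pD_iff n π i).mpr ⟨hlt, hd⟩))
      rcases lt_trichotomy (π ⟨i, by omega⟩) (π ⟨i+1, by omega⟩) with h' | h' | h'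
      · exact h'
      · exfalso
        have := π.injective h'
        simp only [Fin.mk.injEq] at this; omega
      · exact absurd h' this
    -- now induct on the distance, at the level of ℕ
    have chain : ∀ d i : ℕ, ∀ hi1 : i + d + 1 ≤ n, blkN n S i = blkN n S (i + d + 1) →
        π ⟨i, by omega⟩ < π ⟨i + d + 1, by omega⟩ := by
      intro d
      induction d with
      | zero =>
        intro i hi1 hbe
        exact adj i (by omega) (by simpa using hbe)
      | succ d ih =>
        intro i hi1 hbe
        have hm1 : blkN n S i ≤ blkN n S (i + d + 1) := blkN_mono n S (by omega)
        have hm2 : blkN n S (i + d + 1) ≤ blkN n S (i + (d + 1) + 1) := blkN_mono n S (by omega)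
        have e1 : (⟨i + (d+1) + 1, by omega⟩ : Fin (n+1)) = ⟨i + d + 1 + 1, by omega⟩ := by
          simp only [Fin.mk.injEq]; omega
        rw [e1]
        have hbe' : blkN n S i = blkN n S (i + d + 1 + 1) := by
          rw [show i + d + 1 + 1 = i + (d+1) + 1 by omega]; exact hbe
        have hm2' : blkN n S (i + d + 1) ≤ blkN n S (i + d + 1 + 1) := blkN_mono n S (by omega)
        have step1 : π ⟨i, by omega⟩ < π ⟨i + d + 1, by omega⟩ :=
          ih i (by omega) (by omega)
        have step2 : π ⟨i + d + 1, by omega⟩ < π ⟨i + d + 1 + 1, by omega⟩ :=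
          adj (i + d + 1) (by omega) (by omega)
        exact step1.trans step2
    rw [Fin.lt_def] at hpq
    have hd : q.val = p.val + (q.val - p.val - 1) + 1 := by omega
    have := chain (q.val - p.val - 1) p.val (by have := q.isLt; omega)
      (by unfold blk at hblk; rw [← hd]; exact hblk)
    have e1 : (⟨(p:ℕ), by omega⟩ : Fin (n+1)) = p := Fin.eta _ _
    have e2 : (⟨(p:ℕ) + ((q:ℕ) - (p:ℕ) - 1) + 1, by omega⟩ : Fin (n+1)) = q := Fin.ext (by simp; omega)
    rwa [e1, e2] at this
  · intro h i hi
    rw [mem_pD_iff] at hi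
    obtain ⟨hlt, hd⟩ := hi
    by_contra hiS
    have hpq : (⟨i, by omega⟩ : Fin (n+1)) < ⟨i+1, by omega⟩ := by rw [Fin.lt_def]; simp
    have hblk : blk n S ⟨i, by omega⟩ = blk n S ⟨i+1, by omega⟩ := by
      unfold blk
      rw [blk_eq_succ_iff n S (by omega)]
      simp only [TT, Finset.mem_insert]
      push_neg
      exact ⟨by omega, hiS⟩
    exact absurd (h _ _ hpq hblk) (not_lt.mpr (le_of_lt hd))

/-! ### content condition -/

def Con (g : Fin (n+1) → ℕ) : Prop :=
  ∀ c : ℕ, (univ.filter fun x => g x = c).card = (univ.filter fun p => blk n S p = c).card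

variable {n S}

lemma Con.exists_blk {g : Fin (n+1) → ℕ} (hg : Con n S g) (x : Fin (n+1)) :
    ∃ p : Fin (n+1), blk n S p = g x := by
  by_contra hc
  push_neg at hc
  have h1 : (univ.filter fun p => blk n S p = g x) = ∅ := by
    ext p; simp only [mem_filter, mem_univ, true_and, Finset.notMem_empty, iff_false]
    exact hc p
  have h2 := hg (g x)
  rw [h1, Finset.card_empty] at h2
  have : x ∈ (univ.filter fun y => g y = g x) := by simp
  have := Finset.card_pos.mpr ⟨x, this⟩
  omega

lemma Con.g_le {g : Fin (n+1) → ℕ} (hg : Con n S g) (x : Fin (n+1)) : g x ≤ n := by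
  obtain ⟨p, hp⟩ := hg.exists_blk x
  have := blk_le n S p
  have := p.isLt
  omega

lemma Con.g_le_top {g : Fin (n+1) → ℕ} (hg : Con n S g) (x : Fin (n+1)) :
    g x ≤ blk n S (Fin.last n) := by
  obtain ⟨p, hp⟩ := hg.exists_blk x
  rw [← hp]
  exact blk_mono n S (Fin.le_last p)

lemma blk_fiber_top : (univ.filter fun p => blk n S p = blk n S (Fin.last n)) = {Fin.last n} := by
  ext p
  simp only [mem_filter, mem_univ, true_and, Finset.mem_singleton]
  constructor
  · intro h
    by_contra hc
    exact absurd h (ne_of_lt (blk_lt_last n S hc))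
  · rintro rfl; rfl

lemma Con.top_unique {g : Fin (n+1) → ℕ} (hg : Con n S g) :
    (univ.filter fun x => g x = blk n S (Fin.last n)).card = 1 := by
  rw [hg, blk_fiber_top]; rfl

/-- the special bead -/
noncomputable def sp {g : Fin (n+1) → ℕ} (hg : Con n S g) : Fin (n+1) :=
  (Finset.card_eq_one.mp hg.top_unique).choose

lemma sp_spec {g : Fin (n+1) → ℕ} (hg : Con n S g) :
    g (sp hg) = blk n S (Fin.last n) ∧ ∀ b, g b = blk n S (Fin.last n) → b = sp hg := by
  have h := (Finset.card_eq_one.mp hg.top_unique).choose_spec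
  constructor
  · have : sp hg ∈ univ.filter fun x => g x = blk n S (Fin.last n) := by
      rw [h]; exact Finset.mem_singleton_self _
    simpa using this
  · intro b hb
    have : b ∈ univ.filter fun x => g x = blk n S (Fin.last n) := by simpa using hb
    rw [h] at this
    exact Finset.mem_singleton.mp this

lemma Con.g_lt_top {g : Fin (n+1) → ℕ} (hg : Con n S g) {b : Fin (n+1)} (hb : b ≠ sp hg) :
    g b < blk n S (Fin.last n) := by
  rcases lt_or_eq_of_le (hg.g_le_top b) with h | h
  · exact h
  · exact absurd ((sp_spec hg).2 b h) hb

/-! ### base-B encoding of the color word read around the cycle -/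

/-- `digs g m b` = the number with digits `g b, g (b+1), ..., g (b+m-1)` in base `n+2`. -/
def digs (g : Fin (n+1) → ℕ) : ℕ → Fin (n+1) → ℕ
  | 0, _ => 0
  | (m+1), b => digs g m b * (n+2) + g (b + (m : Fin (n+1)))

def enc (g : Fin (n+1) → ℕ) (b : Fin (n+1)) : ℕ := digs g (n+1) b

lemma digs_lt {g : Fin (n+1) → ℕ} (hg : ∀ x, g x < n + 2) (m : ℕ) (b : Fin (n+1)) :
    digs g m b < (n+2)^m := by
  induction m with
  | zero => simp [digs]
  | succ m ih =>
    have h1 := hg (b + (m : Fin (n+1)))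
    have h2 : digs g m b ≤ (n+2)^m - 1 := by omega
    calc digs g m b * (n+2) + g (b + (m : Fin (n+1)))
        < digs g m b * (n+2) + (n+2) := Nat.add_lt_add_left h1 _
      _ = (digs g m b + 1) * (n+2) := by ring
      _ ≤ (n+2)^m * (n+2) := Nat.mul_le_mul_right _ (by omega)
      _ = (n+2)^(m+1) := (pow_succ _ _).symm

lemma digs_succ_eq {g : Fin (n+1) → ℕ} (m : ℕ) (b : Fin (n+1)) :
    digs g (m+1) b = g b * (n+2)^m + digs g m (b+1) := by
  induction m generalizing b with
  | zero => simp [digs]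
  | succ m ih =>
    show digs g (m+1) b * (n+2) + g (b + ((m+1 : ℕ) : Fin (n+1))) = _
    rw [ih b]
    have : b + ((m+1 : ℕ) : Fin (n+1)) = (b + 1) + ((m : ℕ) : Fin (n+1)) := by
      push_cast
      ring
    rw [this]
    show (g b * (n+2)^m + digs g m (b+1)) * (n+2) + g ((b+1) + (m : Fin (n+1)))
        = g b * (n+2)^(m+1) + digs g (m+1) (b+1)
    show _ = g b * (n+2)^(m+1) + (digs g m (b+1) * (n+2) + g ((b+1) + (m : Fin (n+1))))
    ring

lemma enc_eq {g : Fin (n+1) → ℕ} (b : Fin (n+1)) :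
    enc g b = g b * (n+2)^n + digs g n (b+1) := digs_succ_eq n b

lemma add_one_add_n (b : Fin (n+1)) : b + 1 + ((n : ℕ) : Fin (n+1)) = b := by
  have : (1 : Fin (n+1)) + ((n : ℕ) : Fin (n+1)) = 0 := by
    have : ((n+1 : ℕ) : Fin (n+1)) = 0 := by
      simp [Fin.natCast_self]
    rw [← this]; push_cast; ring
  rw [add_assoc, this, add_zero]

lemma enc_succ {g : Fin (n+1) → ℕ} (b : Fin (n+1)) :
    enc g (b+1) = digs g n (b+1) * (n+2) + g b := by
  show digs g (n+1) (b+1) = _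
  show digs g n (b+1) * (n+2) + g (b + 1 + ((n : ℕ) : Fin (n+1))) = _
  rw [add_one_add_n]

variable {g : Fin (n+1) → ℕ} (hg : Con n S g)

include hg

lemma gb_lt (x : Fin (n+1)) : g x < n + 2 := by have := hg.g_le x; omega

lemma encL1 {b b' : Fin (n+1)} (h : g b < g b') : enc g b < enc g b' := by
  rw [enc_eq, enc_eq]
  have h1 : digs g n (b+1) < (n+2)^n := digs_lt (gb_lt hg) n (b+1)
  calc g b * (n+2)^n + digs g n (b+1) < g b * (n+2)^n + (n+2)^n := by omega
    _ = (g b + 1) * (n+2)^n := by ring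
    _ ≤ g b' * (n+2)^n := Nat.mul_le_mul_right _ (by omega)
    _ ≤ g b' * (n+2)^n + digs g n (b'+1) := Nat.le_add_right _ _

lemma encL1' {b b' : Fin (n+1)} (h : enc g b ≤ enc g b') : g b ≤ g b' := by
  by_contra hc
  exact absurd (encL1 hg (show g b' < g b by omega)) (by omega)

lemma enc_eq_of_eq {b b' : Fin (n+1)} (h : enc g b = enc g b') :
    g b = g b' ∧ enc g (b+1) = enc g (b'+1) := by
  have h1 : g b = g b' := le_antisymm (encL1' hg h.le) (encL1' hg h.ge)
  refine ⟨h1, ?_⟩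
  rw [enc_eq, enc_eq] at h
  rw [enc_succ, enc_succ, h1]
  rw [h1] at h
  have : digs g n (b+1) = digs g n (b'+1) := by omega
  rw [this]

lemma enc_digit {b b' : Fin (n+1)} (h : g b = g b') :
    enc g b < enc g b' ↔ enc g (b+1) < enc g (b'+1) := by
  rw [enc_eq b, enc_eq b', enc_succ, enc_succ, h]
  constructor
  · intro hlt
    have h2 : digs g n (b+1) < digs g n (b'+1) := by omega
    have := Nat.mul_lt_mul_right (show 0 < n+2 by omega) |>.mpr h2
    omega
  · intro hlt
    have h2 : digs g n (b+1) < digs g n (b'+1) := by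
      by_contra hc
      have := Nat.mul_le_mul_right (n+2) (not_lt.mp hc)
      omega
    have := Nat.mul_lt_mul_right (show 0 < n+2 by omega) |>.mpr h2
    omega

lemma enc_iter {b b' : Fin (n+1)} (h : enc g b = enc g b') (k : ℕ) :
    enc g (b + (k : Fin (n+1))) = enc g (b' + (k : Fin (n+1))) := by
  induction k with
  | zero => simpa using h
  | succ k ih =>
    have := (enc_eq_of_eq hg ih).2
    have e1 : ∀ c : Fin (n+1), c + ((k+1 : ℕ) : Fin (n+1)) = c + (k : Fin (n+1)) + 1 := by
      intro c; push_cast; ring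
    rw [e1, e1]; exact this

lemma enc_inj : Function.Injective (enc g) := by
  intro b b' h
  have hgk : ∀ k : ℕ, g (b + (k : Fin (n+1))) = g (b' + (k : Fin (n+1))) := by
    intro k
    exact (enc_eq_of_eq hg (enc_iter hg h k)).1
  have hk := hgk ((sp hg - b).val)
  rw [Fin.cast_val_eq_self] at hk
  have e1 : b + (sp hg - b) = sp hg := by ring
  rw [e1] at hk
  have e2 : b' + (sp hg - b) = sp hg := (sp_spec hg).2 _ (by rw [← hk]; congr 1; exact (sp_spec hg).1)
  have e3 : b + (sp hg - b) = sp hg := e1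
  have : b = b' := by
    have := e2.trans e3.symm
    exact add_right_cancel this.symm
  exact this

/-! ### the rank equiv and the induced cyclic permutation -/

noncomputable def valE : Fin (n+1) ≃ Fin (n+1) := rnkE (enc g) (enc_inj hg)

lemma valE_lt_iff {b b' : Fin (n+1)} : valE hg b < valE hg b' ↔ enc g b < enc g b' :=
  rnkE_lt_iff (enc g) (enc_inj hg)

lemma valE_sp : valE hg (sp hg) = Fin.last n := by
  have h : ∀ b', b' ≠ sp hg → enc g b' < enc g (sp hg) := by
    intro b' hb'
    exact encL1 hg (by
      have h1 := hg.g_lt_top hb'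
      have h2 := (sp_spec hg).1
      omega)
  have := rnk_eq_of_max (enc g) h
  rw [valE, rnkE_apply]
  apply Fin.ext
  simp [this, Fin.val_last]

lemma g_valE_mono : Monotone (fun j => g ((valE hg).symm j)) := by
  intro j j' hjj
  dsimp only
  rcases eq_or_lt_of_le hjj with rfl | hlt
  · exact le_rfl
  by_contra hc
  have h1 : enc g ((valE hg).symm j') < enc g ((valE hg).symm j) :=
    encL1 hg (by omega)
  rw [← valE_lt_iff hg] at h1
  simp only [Equiv.apply_symm_apply] at h1
  exact absurd hlt (by omega)

omit hg in
lemma blk_valE_mono : Monotone (fun j : Fin (n+1) => blk n S j) := fun _ _ h => blk_mono n S h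

/-- key matching : the `j`-th smallest color equals the block color of position `j` -/
lemma matching : ∀ j : Fin (n+1), blk n S j = g ((valE hg).symm j) := by
  have := monotone_fibers_eq (blk_valE_mono (n := n) (S := S)) (g_valE_mono hg) (by
    intro c
    rw [card_filter_equiv ((valE hg).symm) (fun b => g b = c)]
    exact (hg c).symm)
  intro j
  exact congrFun this j

/-- the cyclic permutation associated to a coloring -/
noncomputable def pg : Equiv.Perm (Fin (n+1)) :=
  (valE hg).symm.trans ((Equiv.addRight (1 : Fin (n+1))).trans (valE hg))

lemma pg_apply (x : Fin (n+1)) : pg hg x = valE hg ((valE hg).symm x + 1) := rfl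

lemma pg_val (b : Fin (n+1)) : pg hg (valE hg b) = valE hg (b + 1) := by
  rw [pg_apply, Equiv.symm_apply_apply]

lemma pg_pow (k : ℕ) (b : Fin (n+1)) :
    ((pg hg) ^ k) (valE hg b) = valE hg (b + (k : Fin (n+1))) := by
  induction k with
  | zero => simp
  | succ k ih =>
    rw [pow_succ', Equiv.Perm.mul_apply, ih, pg_val]
    congr 1
    push_cast
    ring

lemma pg_cyclic : IsCyclic' (pg hg) := by
  intro x y
  refine ⟨(((valE hg).symm y) - ((valE hg).symm x)).val, ?_⟩
  have := pg_pow hg ((((valE hg).symm y) - ((valE hg).symm x)).val) ((valE hg).symm x)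
  rw [Equiv.apply_symm_apply] at this
  rw [this, Fin.cast_val_eq_self]
  have : (valE hg).symm x + ((valE hg).symm y - (valE hg).symm x) = (valE hg).symm y := by ring
  rw [this, Equiv.apply_symm_apply]

lemma pg_pDsub : pDsub n S (pg hg) := by
  rw [pDsub_iff_blocks]
  intro p q hpq hblk
  rw [matching hg p, matching hg q] at hblk
  have h1 : enc g ((valE hg).symm p) < enc g ((valE hg).symm q) := by
    rw [← valE_lt_iff hg]
    simpa using hpq
  have h2 := (enc_digit hg hblk).mp h1
  rw [pg_apply, pg_apply]
  rw [valE_lt_iff hg]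
  exact h2

/-! ### inverse construction -/

omit hg

lemma card_filter_lt {N : ℕ} (x : Fin N) : (univ.filter (· < x)).card = x.val := by
  have : (univ.filter (· < x)) = Finset.Iio x := by
    ext y; simp [Finset.mem_Iio]
  rw [this, Fin.card_Iio]

section inverse
variable (π : Equiv.Perm (Fin (n+1)))

lemma pow_comm_apply (m : ℕ) (x : Fin (n+1)) : π ((π ^ m) x) = (π ^ m) (π x) := by
  rw [← Equiv.Perm.mul_apply, ← Equiv.Perm.mul_apply, ← pow_succ, ← pow_succ']

lemma orbit_fix_mul (p q : ℕ) (hp : (π ^ p) (Fin.last n) = Fin.last n) :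
    (π ^ (p * q)) (Fin.last n) = Fin.last n := by
  induction q with
  | zero => simp
  | succ q ih =>
    rw [Nat.mul_succ, pow_add, Equiv.Perm.mul_apply, hp, ih]

lemma orbit_mod (p : ℕ) (hp : (π ^ p) (Fin.last n) = Fin.last n) (m : ℕ) :
    (π ^ m) (Fin.last n) = (π ^ (m % p)) (Fin.last n) := by
  conv_lhs => rw [← Nat.mod_add_div m p]
  rw [pow_add, Equiv.Perm.mul_apply, orbit_fix_mul π p _ hp]

variable (hcyc : IsCyclic' π)
include hcyc

lemma psi_inj : Function.Injective (fun k : Fin (n+1) => (π ^ k.val) (Fin.last n)) := by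
  have key : ∀ i j : Fin (n+1), i < j → (π ^ i.val) (Fin.last n) = (π ^ j.val) (Fin.last n) → False := by
    intro i j hij h
    set p := j.val - i.val with hpdef
    have hp0 : 0 < p := by rw [Fin.lt_def] at hij; omega
    have hpn : p ≤ n := by have := j.isLt; omega
    have hfix : (π ^ p) (Fin.last n) = Fin.last n := by
      have h2 : (π ^ (i.val + p)) (Fin.last n) = (π ^ i.val) (Fin.last n) := by
        rw [show i.val + p = j.val by rw [Fin.lt_def] at hij; omega]
        exact h.symm
      rw [pow_add, Equiv.Perm.mul_apply] at h2
      exact (Equiv.injective _) h2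
    have hsurj : Function.Surjective (fun k : Fin p => (π ^ k.val) (Fin.last n)) := by
      intro y
      obtain ⟨m, hm⟩ := hcyc (Fin.last n) y
      refine ⟨⟨m % p, Nat.mod_lt _ hp0⟩, ?_⟩
      show (π ^ (m % p)) (Fin.last n) = y
      rw [← orbit_mod π p hfix m]; exact hm
    have := Fintype.card_le_of_surjective _ hsurj
    simp only [Fintype.card_fin] at this
    omega
  intro i j h
  rcases lt_trichotomy i j with h' | h' | h'
  · exact absurd (key i j h' h) (by simp)
  · exact h'
  · exact absurd (key j i h' h.symm) (by simp)

lemma pow_card_fix : (π ^ (n+1)) (Fin.last n) = Fin.last n := by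
  have hbij : Function.Bijective (fun k : Fin (n+1) => (π ^ k.val) (Fin.last n)) :=
    (Finite.injective_iff_bijective).mp (psi_inj π hcyc)
  obtain ⟨k, hk⟩ := hbij.2 ((π ^ (n+1)) (Fin.last n))
  rcases Nat.eq_zero_or_pos k.val with h0 | hpos
  · have h1 : (π ^ k.val) (Fin.last n) = (π ^ (n+1)) (Fin.last n) := hk
    have h2 := h1.symm
    rw [h0] at h2
    simpa using h2
  · exfalso
    have h1 : (π ^ k.val) (Fin.last n) = (π ^ (n+1)) (Fin.last n) := hk
    have h2 : (π ^ (k.val - 1 + 1)) (Fin.last n) = (π ^ (n + 1)) (Fin.last n) := by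
      rw [show k.val - 1 + 1 = k.val by omega]; exact h1
    rw [pow_succ, pow_succ, Equiv.Perm.mul_apply, Equiv.Perm.mul_apply] at h2
    have h3 : (π ^ (k.val - 1)) (π (Fin.last n)) = (π ^ n) (π (Fin.last n)) := h2
    rw [← pow_comm_apply, ← pow_comm_apply] at h3
    have h5 : (π ^ (k.val - 1)) (Fin.last n) = (π ^ n) (Fin.last n) := π.injective h3
    have h6 := psi_inj π hcyc (a₁ := ⟨k.val - 1, by omega⟩) (a₂ := ⟨n, by omega⟩) h5
    rw [Fin.mk.injEq] at h6
    have := k.isLt; omega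

variable (s : Fin (n+1))

omit hcyc in
/-- reading the values of the cycle of `π` starting at the special bead `s` -/
def ub : Fin (n+1) → Fin (n+1) := fun b => (π ^ ((b - s).val)) (Fin.last n)

omit hcyc in
/-- the coloring associated to the pair `(s, π)` -/
def gOf : Fin (n+1) → ℕ := fun b => blk n S (ub π s b)

omit hcyc in
lemma ub_s : ub π s s = Fin.last n := by simp [ub]

lemma ub_inj : Function.Injective (ub π s) := by
  intro b b' h
  have := psi_inj π hcyc (a₁ := ⟨(b - s).val, (b-s).isLt⟩) (a₂ := ⟨(b' - s).val, (b'-s).isLt⟩)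
    (by simpa [ub] using h)
  rw [Fin.mk.injEq] at this
  have h2 : b - s = b' - s := Fin.ext this
  have := congrArg (· + s) h2
  simpa [sub_add_cancel] using this

lemma ub_bij : Function.Bijective (ub π s) :=
  (Finite.injective_iff_bijective).mp (ub_inj π hcyc s)

lemma ub_add_one (b : Fin (n+1)) : ub π s (b + 1) = π (ub π s b) := by
  unfold ub
  have e1 : b + 1 - s = (b - s) + 1 := by ring
  rw [e1]
  rcases eq_or_ne (b - s) (Fin.last n) with h | h
  · rw [h]
    have : (Fin.last n + 1 : Fin (n+1)) = 0 := by
      rw [Fin.ext_iff, Fin.val_add_one]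
      simp
    rw [this]
    simp only [Fin.val_zero, pow_zero, Equiv.Perm.one_apply, Fin.val_last]
    rw [show ∀ m : ℕ, π ((π ^ m) (Fin.last n)) = (π ^ (m+1)) (Fin.last n) from
      fun m => by rw [pow_succ', Equiv.Perm.mul_apply]]
    exact (pow_card_fix π hcyc).symm
  · have hv : ((b - s) + 1).val = (b - s).val + 1 := by
      rw [Fin.val_add_one]
      split_ifs with hc
      · exact absurd hc h
      · rfl
    rw [hv, pow_succ', Equiv.Perm.mul_apply]

lemma conU : Con n S (gOf (S := S) π s) := by
  intro c
  unfold gOf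
  exact card_filter_equiv (Equiv.ofBijective _ (ub_bij π hcyc s)) (fun p => blk n S p = c)

end inverse

section main
variable (π : Equiv.Perm (Fin (n+1))) (hcyc : IsCyclic' π) (s : Fin (n+1)) (hsub : pDsub n S π)

include hcyc in
lemma gOf_top_iff (b : Fin (n+1)) :
    gOf (S := S) π s b = blk n S (Fin.last n) ↔ b = s := by
  constructor
  · intro h
    have h1 : ub π s b = Fin.last n := by
      by_contra hc
      exact absurd h (ne_of_lt (blk_lt_last n S hc))
    rw [← ub_s π s] at h1
    exact ub_inj π hcyc s h1
  · rintro rfl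
    rw [gOf, ub_s]

include hcyc hsub in
lemma ME (M : ℕ) : ∀ b b' : Fin (n+1), (s - b).val + (s - b').val ≤ M → b ≠ b' →
    (enc (gOf (S := S) π s) b < enc (gOf (S := S) π s) b' ↔ ub π s b < ub π s b') := by
  induction M using Nat.strong_induction_on with
  | _ M ih =>
    intro b b' hM hne
    have hcon := conU (S := S) π hcyc s
    have hubne : ub π s b ≠ ub π s b' := fun h => hne (ub_inj π hcyc s h)
    rcases eq_or_ne (gOf (S := S) π s b) (gOf (S := S) π s b') with hcol | hcol
    · -- same color
      have hbs : b ≠ s := by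
        intro h
        have h1 : gOf (S := S) π s b' = blk n S (Fin.last n) := by
          rw [← hcol, h, (gOf_top_iff π hcyc s s).mpr rfl]
        have h2 := (gOf_top_iff π hcyc s b').mp h1
        exact hne (by rw [h, h2])
      have hbs' : b' ≠ s := by
        intro h
        have h1 : gOf (S := S) π s b = blk n S (Fin.last n) := by
          rw [hcol, h, (gOf_top_iff π hcyc s s).mpr rfl]
        have h2 := (gOf_top_iff π hcyc s b).mp h1
        exact hne (by rw [h, h2])
      have h1 : s - b ≠ 0 := sub_ne_zero.mpr (Ne.symm hbs)
      have h1' : s - b' ≠ 0 := sub_ne_zero.mpr (Ne.symm hbs')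
      have hv1 : (s - (b+1)).val = (s - b).val - 1 := by
        have e : s - (b+1) = (s - b) - 1 := by ring
        rw [e, Fin.coe_sub_one]
        split_ifs with hc
        · exact absurd hc h1
        · rfl
      have hv1' : (s - (b'+1)).val = (s - b').val - 1 := by
        have e : s - (b'+1) = (s - b') - 1 := by ring
        rw [e, Fin.coe_sub_one]
        split_ifs with hc
        · exact absurd hc h1'
        · rfl
      have hp1 : (s - b).val ≠ 0 := fun h => h1 (Fin.ext h)
      have hp1' : (s - b').val ≠ 0 := fun h => h1' (Fin.ext h)
      have hne1 : b + 1 ≠ b' + 1 := fun h => hne (add_right_cancel h)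
      have hrec := ih ((s - (b+1)).val + (s - (b'+1)).val) (by omega) (b+1) (b'+1)
        le_rfl hne1
      have e1 : enc (gOf (S := S) π s) b < enc (gOf (S := S) π s) b' ↔
          enc (gOf (S := S) π s) (b+1) < enc (gOf (S := S) π s) (b'+1) :=
        enc_digit hcon hcol
      have e2 : ub π s (b+1) < ub π s (b'+1) ↔ π (ub π s b) < π (ub π s b') := by
        rw [ub_add_one π hcyc s, ub_add_one π hcyc s]
      have e3 : π (ub π s b) < π (ub π s b') ↔ ub π s b < ub π s b' := by
        have hmono := (pDsub_iff_blocks n S π).mp hsub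
        constructor
        · intro h
          rcases lt_trichotomy (ub π s b) (ub π s b') with h' | h' | h'
          · exact h'
          · exact absurd h' hubne
          · exact absurd (hmono _ _ h' hcol.symm) (by omega)
        · intro h
          exact hmono _ _ h hcol
      rw [e1, hrec, e2, e3]
    · -- different colors
      constructor
      · intro h
        have h2 : gOf (S := S) π s b < gOf (S := S) π s b' := by
          have := encL1' hcon h.le
          omega
        rcases lt_trichotomy (ub π s b) (ub π s b') with h' | h' | h'
        · exact h'
        · exact absurd h' hubne
        · exact absurd (blk_mono n S h'.le) (by unfold gOf at h2; omega)
      · intro h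
        apply encL1 hcon
        have hle := blk_mono n S h.le
        unfold gOf at hcol ⊢
        omega

include hcyc hsub in
lemma val_eq_ub (b : Fin (n+1)) : valE (conU (S := S) π hcyc s) b = ub π s b := by
  apply Fin.ext
  show rnk (enc (gOf (S := S) π s)) b = (ub π s b).val
  have hset : (univ.filter fun b' => enc (gOf (S := S) π s) b' < enc (gOf (S := S) π s) b)
      = univ.filter fun b' => ub π s b' < ub π s b := by
    ext b'
    simp only [mem_filter, mem_univ, true_and]
    rcases eq_or_ne b' b with rfl | hne
    · omega
    · exact ME π hcyc s hsub ((s - b').val + (s - b).val) b' b le_rfl hne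
  rw [rnk, hset]
  have h2 := card_filter_equiv (Equiv.ofBijective _ (ub_bij π hcyc s)) (fun y => y < ub π s b)
  rw [card_filter_lt] at h2
  exact h2

end main

noncomputable def equivB :
    {g : Fin (n+1) → ℕ // Con n S g} ≃
      Fin (n+1) × {π : Equiv.Perm (Fin (n+1)) // IsCyclic' π ∧ pDsub n S π} where
  toFun gg := ⟨sp gg.2, ⟨pg gg.2, pg_cyclic gg.2, pg_pDsub gg.2⟩⟩
  invFun x := ⟨gOf (S := S) x.2.1 x.1, conU (S := S) x.2.1 x.2.2.1 x.1⟩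
  left_inv := by
    rintro ⟨g, hg⟩
    apply Subtype.ext
    funext b
    show gOf (S := S) (pg hg) (sp hg) b = g b
    unfold gOf ub
    have h0 : Fin.last n = valE hg (sp hg) := (valE_sp hg).symm
    rw [h0, pg_pow hg, Fin.cast_val_eq_self]
    have e1 : sp hg + (b - sp hg) = b := by ring
    rw [e1]
    have h2 := matching hg (valE hg b)
    rwa [Equiv.symm_apply_apply] at h2
  right_inv := by
    rintro ⟨s, ⟨π, hcyc, hsub⟩⟩
    have hcon := conU (S := S) π hcyc s
    refine Prod.ext ?_ ?_
    · show sp hcon = s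
      exact ((sp_spec hcon).2 s ((gOf_top_iff π hcyc s s).mpr rfl)).symm
    · apply Subtype.ext
      show pg hcon = π
      apply Equiv.ext
      intro x
      have hvx : valE hcon ((valE hcon).symm x) = x := Equiv.apply_symm_apply _ _
      have hub : ub π s ((valE hcon).symm x) = x := by
        rw [← val_eq_ub π hcyc s hsub ((valE hcon).symm x), hvx]
      rw [pg_apply]
      rw [val_eq_ub π hcyc s hsub ((valE hcon).symm x + 1), ub_add_one π hcyc s, hub]

/-! ### Bijection A : permutations with prescribed ascents ≃ colorings -/

section bijA

variable (g : Fin (n+1) → ℕ)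

def fA : Fin (n+1) → ℕ := fun x => g x * (n+2) + x.val

lemma fA_lt_of_g_lt {x y : Fin (n+1)} (h : g x < g y) : fA g x < fA g y := by
  unfold fA
  have hx : x.val < n + 2 := by have := x.isLt; omega
  calc g x * (n+2) + x.val < g x * (n+2) + (n+2) := by omega
    _ = (g x + 1) * (n+2) := by ring
    _ ≤ g y * (n+2) := Nat.mul_le_mul_right _ (by omega)
    _ ≤ g y * (n+2) + y.val := Nat.le_add_right _ _

lemma fA_lt_iff_of_eq {x y : Fin (n+1)} (h : g x = g y) : fA g x < fA g y ↔ x < y := by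
  unfold fA
  rw [h, Nat.add_lt_add_iff_left, Fin.lt_def]

lemma fA_inj : Function.Injective (fA g) := by
  intro x y h
  rcases lt_trichotomy (g x) (g y) with h' | h' | h'
  · exact absurd h (ne_of_lt (fA_lt_of_g_lt g h'))
  · have := (fA_lt_iff_of_eq g h')
    apply Fin.ext
    unfold fA at h
    rw [h'] at h
    omega
  · exact absurd h.symm (ne_of_lt (fA_lt_of_g_lt g h'))

noncomputable def kE : Fin (n+1) ≃ Fin (n+1) := rnkE (fA g) (fA_inj g)

lemma kE_lt_iff {x y : Fin (n+1)} : kE g x < kE g y ↔ fA g x < fA g y :=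
  rnkE_lt_iff (fA g) (fA_inj g)

lemma matching2 (hg : Con n S g) : ∀ j : Fin (n+1), blk n S j = g ((kE g).symm j) := by
  have hmono : Monotone (fun j => g ((kE g).symm j)) := by
    intro j j' hjj
    dsimp only
    rcases eq_or_lt_of_le hjj with rfl | hlt
    · exact le_rfl
    by_contra hc
    have h1 : fA g ((kE g).symm j') < fA g ((kE g).symm j) := fA_lt_of_g_lt g (by omega)
    rw [← kE_lt_iff g] at h1
    simp only [Equiv.apply_symm_apply] at h1
    exact absurd hlt (by omega)
  have := monotone_fibers_eq (blk_valE_mono (n := n) (S := S)) hmono (by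
    intro c
    rw [card_filter_equiv ((kE g).symm) (fun b => g b = c)]
    exact (hg c).symm)
  intro j
  exact congrFun this j

end bijA

noncomputable def equivA :
    {π : Equiv.Perm (Fin (n+1)) // pDsub n S π} ≃ {g : Fin (n+1) → ℕ // Con n S g} where
  toFun pp := ⟨fun x => blk n S (pp.1.symm x), by
    intro c
    exact card_filter_equiv (pp.1.symm) (fun p => blk n S p = c)⟩
  invFun gg := ⟨(kE gg.1).symm, by
    rw [pDsub_iff_blocks]
    intro p q hpq hblk
    rw [matching2 gg.1 gg.2 p, matching2 gg.1 gg.2 q] at hblk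
    have h1 : kE gg.1 ((kE gg.1).symm p) < kE gg.1 ((kE gg.1).symm q) := by
      simpa using hpq
    rw [kE_lt_iff, fA_lt_iff_of_eq gg.1 hblk] at h1
    exact h1⟩
  left_inv := by
    rintro ⟨π, hπ⟩
    apply Subtype.ext
    show (kE (fun x => blk n S (π.symm x))).symm = π
    set g' : Fin (n+1) → ℕ := fun x => blk n S (π.symm x) with hg'
    have hstrict : ∀ j j' : Fin (n+1), j < j' → fA g' (π j) < fA g' (π j') := by
      intro j j' hjj
      have hg'j : g' (π j) = blk n S j := by rw [hg']; simp
      have hg'j' : g' (π j') = blk n S j' := by rw [hg']; simp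
      have hble : blk n S j ≤ blk n S j' := blk_mono n S hjj.le
      rcases eq_or_lt_of_le hble with heq | hlt
      · rw [fA_lt_iff_of_eq g' (by rw [hg'j, hg'j', heq])]
        exact (pDsub_iff_blocks n S π).mp hπ j j' hjj heq
      · exact fA_lt_of_g_lt g' (by omega)
    have hk : ∀ j : Fin (n+1), kE g' (π j) = j := by
      intro j
      apply Fin.ext
      show rnk (fA g') (π j) = j.val
      have hset : (univ.filter fun y => fA g' y < fA g' (π j))
          = univ.filter fun y => π.symm y < j := by
        ext y
        simp only [mem_filter, mem_univ, true_and]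
        constructor
        · intro h
          rcases lt_trichotomy (π.symm y) j with h' | h' | h'
          · exact h'
          · exfalso; rw [← h'] at h; simp at h
          · exfalso
            have := hstrict j (π.symm y) h'
            simp only [Equiv.apply_symm_apply] at this
            omega
        · intro h
          have := hstrict (π.symm y) j h
          simpa using this
      rw [rnk, hset]
      have h3 := card_filter_equiv (π.symm : Fin (n+1) ≃ Fin (n+1)) (fun y => y < j)
      rw [card_filter_lt] at h3
      exact h3
    apply Equiv.ext
    intro x
    conv_lhs => rw [← hk x]
    exact Equiv.symm_apply_apply _ _
  right_inv := by
    rintro ⟨g, hg⟩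
    apply Subtype.ext
    funext x
    show blk n S (((kE g).symm).symm x) = g x
    rw [Equiv.symm_symm]
    have := matching2 g hg (kE g x)
    rwa [Equiv.symm_apply_apply] at this

/-! ### counting -/

variable (n S)

lemma subset_count :
    Nat.card {π : Equiv.Perm (Fin (n+1)) // pDsub n S π}
      = (n+1) * Nat.card {π : Equiv.Perm (Fin (n+1)) // IsCyclic' π ∧ pDsub n S π} := by
  rw [Nat.card_congr ((equivA (n := n) (S := S)).trans (equivB (n := n) (S := S)))]
  rw [Nat.card_prod]
  congr 1
  simp [Nat.card_eq_fintype_card]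

open scoped Classical in
lemma nat_card_filter (p : Equiv.Perm (Fin (n+1)) → Prop) :
    Nat.card {π : Equiv.Perm (Fin (n+1)) // p π} = (univ.filter p).card := by
  rw [Nat.card_eq_fintype_card]
  convert Fintype.card_subtype p

open scoped Classical in
lemma part (p : Equiv.Perm (Fin (n+1)) → Prop) :
    Nat.card {π : Equiv.Perm (Fin (n+1)) // p π ∧ pDsub n S π}
      = ∑ K ∈ S.powerset,
          Nat.card {π : Equiv.Perm (Fin (n+1)) // p π ∧ descSet π ∩ Finset.range (n-1) = K} := by
  simp only [nat_card_filter]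
  rw [Finset.card_eq_sum_card_fiberwise
    (f := fun π => descSet π ∩ Finset.range (n-1)) (t := S.powerset) (by
      intro π hπ
      simp only [Finset.mem_coe, mem_filter, mem_univ, true_and] at hπ
      rw [Finset.mem_coe, Finset.mem_powerset]
      exact hπ.2)]
  apply Finset.sum_congr rfl
  intro K hK
  rw [Finset.mem_powerset] at hK
  congr 1
  ext π
  simp only [Finset.mem_filter, mem_univ, true_and]
  constructor
  · rintro ⟨⟨h1, _⟩, h3⟩; exact ⟨h1, h3⟩
  · rintro ⟨h1, h3⟩
    exact ⟨⟨h1, by rw [pDsub, h3]; exact hK⟩, h3⟩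

end S4

theorem stmt4 (n : ℕ) (I : Finset ℕ) (hI : I ⊆ Finset.range (n - 1)) :
    (n + 1) * Nat.card {π : Equiv.Perm (Fin (n + 1)) //
        IsCyclic' π ∧ descSet π ∩ Finset.range (n - 1) = I}
      = Nat.card {π : Equiv.Perm (Fin (n + 1)) //
          descSet π ∩ Finset.range (n - 1) = I} := by
  classical
  revert hI
  induction I using Finset.strongInduction with
  | _ I ih =>
    intro hI
    have h0 := S4.subset_count n I
    have h1 := S4.part n I (fun _ => True)
    have h2 := S4.part n I IsCyclic'
    have e0 : Nat.card {π : Equiv.Perm (Fin (n+1)) // (fun _ => True) π ∧ S4.pDsub n I π}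
        = Nat.card {π : Equiv.Perm (Fin (n+1)) // S4.pDsub n I π} :=
      Nat.card_congr (Equiv.subtypeEquivRight (by intro x; simp))
    have e1 : ∀ K, Nat.card {π : Equiv.Perm (Fin (n+1)) //
          (fun _ => True) π ∧ descSet π ∩ Finset.range (n-1) = K}
        = Nat.card {π : Equiv.Perm (Fin (n+1)) // descSet π ∩ Finset.range (n-1) = K} := fun K =>
      Nat.card_congr (Equiv.subtypeEquivRight (by intro x; simp))
    rw [e0] at h1
    have h1' : Nat.card {π : Equiv.Perm (Fin (n+1)) // S4.pDsub n I π}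
        = ∑ K ∈ I.powerset,
            Nat.card {π : Equiv.Perm (Fin (n+1)) // descSet π ∩ Finset.range (n-1) = K} := by
      rw [h1]
      exact Finset.sum_congr rfl fun K _ => e1 K
    have big : ∑ K ∈ I.powerset,
          Nat.card {π : Equiv.Perm (Fin (n+1)) // descSet π ∩ Finset.range (n-1) = K}
        = ∑ K ∈ I.powerset,
            (n+1) * Nat.card {π : Equiv.Perm (Fin (n+1)) //
              IsCyclic' π ∧ descSet π ∩ Finset.range (n-1) = K} := by
      rw [← h1', ← Finset.mul_sum, ← h2, h0]
    have hIp : I ∈ I.powerset := Finset.mem_powerset_self I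
    rw [← Finset.add_sum_erase _ _ hIp, ← Finset.add_sum_erase _ _ hIp] at big
    have hrest : ∑ K ∈ I.powerset.erase I,
          Nat.card {π : Equiv.Perm (Fin (n+1)) // descSet π ∩ Finset.range (n-1) = K}
        = ∑ K ∈ I.powerset.erase I,
            (n+1) * Nat.card {π : Equiv.Perm (Fin (n+1)) //
              IsCyclic' π ∧ descSet π ∩ Finset.range (n-1) = K} := by
      apply Finset.sum_congr rfl
      intro K hK
      rw [Finset.mem_erase, Finset.mem_powerset] at hK
      exact (ih K (lt_of_le_of_ne hK.2 hK.1) (hK.2.trans hI)).symm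
    rw [hrest] at big
    omega
end
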